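/- arXiv:2303.00828 — 7 statements merged into one kernel-verified Lean document; each statement's English description precedes it below -/
import Mathlib

section
/- Let p be a prime, n ≥ 3, A ⊆ F_p^n a sum-free set, and u ∈ F_p^n \ {0} such that {x·u : x ∈ I_p} ⊆ A, where I_p = {m_p, ..., 2m_p − 1} with m_p = (p+1)/3 (for p ≡ 2 mod 3). Then there exist two distinct subspaces W₁, W₂ < F_p^n of codimension 1, each containing u, such that |Wᵢ ∩ A| ≥ |A|/p for i ∈ {1, 2}. -/
open Pointwise Finset Module Submodule LinearMap

private lemma cd_bound (p m : ℕ) [Fact p.Prime] (h3m : p + 1 = 3 * m)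
    (B I : Finset (ZMod p)) (hI : I.card = m)
    (hdisj : ∀ b ∈ B, ∀ i ∈ I, b + i ∉ B) : B.card ≤ m := by
  rcases B.eq_empty_or_nonempty with h | hB
  · simp [h]
  have hm : 1 ≤ m := by
    have := (Fact.out : p.Prime).two_le; omega
  have hIne : I.Nonempty := by
    rw [← Finset.card_pos, hI]; omega
  have hdis : Disjoint (B + I) B := by
    rw [Finset.disjoint_left]
    rintro x hx hxB
    rw [Finset.mem_add] at hx
    obtain ⟨b, hb, i, hi, rfl⟩ := hx
    exact hdisj b hb i hi hxB
  have hcard : (B + I).card + B.card ≤ p := by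
    calc (B + I).card + B.card = ((B + I) ∪ B).card := (Finset.card_union_of_disjoint hdis).symm
    _ ≤ (Finset.univ : Finset (ZMod p)).card := Finset.card_le_card (Finset.subset_univ _)
    _ = p := by simp [ZMod.card]
  have hcd := ZMod.cauchy_davenport (Fact.out : p.Prime) hB hIne
  rw [hI] at hcd
  rcases min_le_iff.mp hcd with h | h
  · have := hB.card_pos; omega
  · omega

private lemma mod_card (p : ℕ) [Fact p.Prime] {M : Type*} [AddCommGroup M]
    [Module (ZMod p) M] [Finite M] :
    Nat.card M = p ^ finrank (ZMod p) M := by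
  haveI : Fintype M := Fintype.ofFinite _
  rw [Nat.card_eq_fintype_card, card_eq_pow_finrank (K := ZMod p), ZMod.card]

private instance dualFinite {p n : ℕ} [Fact p.Prime] :
    Finite (Module.Dual (ZMod p) (Fin n → ZMod p)) :=
  Finite.of_injective _ DFunLike.coe_injective

private lemma ann_card {p n : ℕ} [Fact p.Prime] (W : Submodule (ZMod p) (Fin n → ZMod p)) :
    Nat.card ↥(W.dualAnnihilator) = p ^ (n - finrank (ZMod p) W) := by
  have h1 : finrank (ZMod p) ↥(W.dualAnnihilator)
      = finrank (ZMod p) ((Fin n → ZMod p) ⧸ W) :=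
    (LinearEquiv.finrank_eq (Subspace.quotEquivAnnihilator W)).symm
  have h2 : finrank (ZMod p) ((Fin n → ZMod p) ⧸ W) + finrank (ZMod p) W = n := by
    rw [Submodule.finrank_quotient_add_finrank, Module.finrank_fin_fun]
  rw [mod_card p, h1]
  congr 1
  omega

private lemma final_arith (p m t q P' : ℤ) (hp : 2 ≤ p) (hm : 1 ≤ m) (ht0 : 0 ≤ t)
    (hq0 : 0 ≤ q) (hq : q ≤ p - 1) (hP'1 : 1 ≤ P')
    (hpsq : p * p ≤ p * P')
    (htot : t ≤ m * (p * P' - 1))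
    (hmain : p * (m * (p * P' - 1) + t * (P' - 1))
      ≤ q * (p * (P' * m)) + (p * P' - 1 - q) * (m + t - 1)) : False := by
  nlinarith [mul_nonneg (by linarith : (0:ℤ) ≤ p - 1 - q)
    (by linarith : (0:ℤ) ≤ m * (p * P' - 1) - t)]

private lemma quot_card_aux (p n : ℕ) [Fact p.Prime] (W : Submodule (ZMod p) (Fin n → ZMod p)) :
    Nat.card ((Fin n → ZMod p) ⧸ W) = p ^ (n - finrank (ZMod p) W) := by
  have h2 : finrank (ZMod p) ((Fin n → ZMod p) ⧸ W) + finrank (ZMod p) W = n := by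
    rw [Submodule.finrank_quotient_add_finrank, Module.finrank_fin_fun]
  rw [mod_card p]
  congr 1
  omega

set_option maxHeartbeats 2000000 in
set_option synthInstance.maxHeartbeats 400000 in
theorem stmt_1 (p : ℕ) [Fact p.Prime] (hp : p % 3 = 2) (n : ℕ) (hn : 3 ≤ n)
    (A : Set (Fin n → ZMod p))
    (hsf : ∀ a ∈ A, ∀ b ∈ A, a + b ∉ A)
    (u : Fin n → ZMod p) (hu : u ≠ 0)
    (hI : ∀ k : ℕ, (p + 1) / 3 ≤ k → k ≤ 2 * ((p + 1) / 3) - 1 → (k : ZMod p) • u ∈ A) :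
    ∃ W₁ W₂ : Submodule (ZMod p) (Fin n → ZMod p), W₁ ≠ W₂ ∧
      Module.finrank (ZMod p) W₁ = n - 1 ∧ Module.finrank (ZMod p) W₂ = n - 1 ∧
      u ∈ W₁ ∧ u ∈ W₂ ∧
      p * (A ∩ (W₁ : Set (Fin n → ZMod p))).ncard ≥ A.ncard ∧
      p * (A ∩ (W₂ : Set (Fin n → ZMod p))).ncard ≥ A.ncard := by
  classical
  by_contra hcon
  let V := Fin n → ZMod p
  have hp2 : 2 ≤ p := (Fact.out : p.Prime).two_le
  obtain ⟨m, h3m⟩ : ∃ m, p + 1 = 3 * m := ⟨(p + 1) / 3, by omega⟩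
  have hm13 : (p + 1) / 3 = m := by omega
  have hm1 : 1 ≤ m := by omega
  have h2m : 2 * m - 1 < p := by omega
  have hI' : ∀ k : ℕ, m ≤ k → k ≤ 2 * m - 1 → (k : ZMod p) • u ∈ A := by
    intro k h1 h2; exact hI k (by omega) (by omega)
  -- the interval I as a finset of ZMod p
  set Ip : Finset (ZMod p) := (Finset.Icc m (2 * m - 1)).image (Nat.cast) with hIp
  have hIcard : Ip.card = m := by
    rw [hIp, Finset.card_image_of_injOn, Nat.card_Icc]
    · omega
    · intro i hi j hj hij
      simp only [Finset.coe_Icc, Set.mem_Icc] at hi hj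
      have hi' : i < p := by omega
      have hj' : j < p := by omega
      have := congrArg ZMod.val hij
      rwa [ZMod.val_cast_of_lt hi', ZMod.val_cast_of_lt hj'] at this
  have hIm : ∀ i ∈ Ip, i • u ∈ A := by
    intro i hi
    rw [hIp, Finset.mem_image] at hi
    obtain ⟨k, hk, rfl⟩ := hi
    rw [Finset.mem_Icc] at hk
    exact hI' k hk.1 hk.2
  -- coset bound
  have hcoset : ∀ a : V, (univ.filter (fun c : ZMod p => a + c • u ∈ A)).card ≤ m := by
    intro a
    refine cd_bound p m h3m _ Ip hIcard ?_
    intro b hb i hi hbi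
    rw [Finset.mem_filter] at hb hbi
    have h1 : a + b • u ∈ A := hb.2
    have h2 : i • u ∈ A := hIm i hi
    have := hsf _ h1 _ h2
    apply this
    have he : a + (b + i) • u = a + b • u + i • u := by rw [add_smul]; abel
    have h4 := hbi.2
    rwa [he] at h4
  set L : Submodule (ZMod p) V := Submodule.span (ZMod p) {u} with hL
  set π := L.mkQ with hπ
  have hsmul_inj : Function.Injective (fun c : ZMod p => c • u) := smul_left_injective _ hu
  -- F : A as a finset
  set F := A.toFinite.toFinset with hF
  have hmemF : ∀ x, x ∈ F ↔ x ∈ A := fun x => Set.Finite.mem_toFinset _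
  have hAF : (↑F : Set V) = A := Set.Finite.coe_toFinset _
  -- fiber bound
  have hfiber : ∀ q : V ⧸ L, (F.filter (fun x => π x = q)).card ≤ m := by
    intro q
    rcases (F.filter (fun x => π x = q)).eq_empty_or_nonempty with h | ⟨a, ha⟩
    · simp [h]
    rw [Finset.mem_filter] at ha
    have hsub : F.filter (fun x => π x = q) ⊆
        (univ.filter (fun c : ZMod p => a + c • u ∈ A)).image (fun c => a + c • u) := by
      intro x hx
      rw [Finset.mem_filter] at hx
      have : π x = π a := by rw [hx.2, ha.2]
      rw [hπ, Submodule.mkQ_apply, Submodule.mkQ_apply, Submodule.Quotient.eq] at this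
      rw [hL, Submodule.mem_span_singleton] at this
      obtain ⟨c, hc⟩ := this
      rw [Finset.mem_image]
      refine ⟨c, ?_, by rw [hc]; abel⟩
      rw [Finset.mem_filter]
      have : a + c • u = x := by rw [hc]; abel
      rw [this]
      exact ⟨Finset.mem_univ _, (hmemF x).1 hx.1⟩
    calc (F.filter (fun x => π x = q)).card
        ≤ ((univ.filter (fun c : ZMod p => a + c • u ∈ A)).image (fun c => a + c • u)).card :=
          Finset.card_le_card hsub
      _ ≤ (univ.filter (fun c : ZMod p => a + c • u ∈ A)).card := Finset.card_image_le
      _ ≤ m := hcoset a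
  -- the line count
  set B0 : Finset (ZMod p) := univ.filter (fun c : ZMod p => c • u ∈ A) with hB0
  have hB0card : B0.card = m := by
    refine le_antisymm ?_ ?_
    · have h0 := hcoset 0
      have : (univ.filter (fun c : ZMod p => (0 : V) + c • u ∈ A)) = B0 := by
        apply Finset.filter_congr
        intro c _
        rw [zero_add]
      rwa [this] at h0
    · rw [← hIcard]
      apply Finset.card_le_card
      intro i hi
      rw [hB0, Finset.mem_filter]
      exact ⟨Finset.mem_univ _, hIm i hi⟩
  set FL := F.filter (fun x => x ∈ L) with hFL
  set Fc := F.filter (fun x => x ∉ L) with hFc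
  set t := Fc.card with ht
  have hst : FL.card + t = F.card := Finset.card_filter_add_card_filter_not _
  have hsm : FL.card = m := by
    have himg : FL = B0.image (fun c => c • u) := by
      ext x
      rw [hFL, Finset.mem_filter, Finset.mem_image]
      constructor
      · rintro ⟨hxF, hxL⟩
        rw [hL, Submodule.mem_span_singleton] at hxL
        obtain ⟨c, hc⟩ := hxL
        refine ⟨c, ?_, hc⟩
        rw [hB0, Finset.mem_filter, hc]
        exact ⟨Finset.mem_univ _, (hmemF x).1 hxF⟩
      · rintro ⟨c, hc, rfl⟩
        rw [hB0, Finset.mem_filter] at hc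
        refine ⟨(hmemF _).2 hc.2, ?_⟩
        rw [hL]
        exact Submodule.smul_mem _ c (Submodule.mem_span_singleton_self u)
    rw [himg, Finset.card_image_of_injective _ hsmul_inj, hB0card]
  -- total bound via fibers
  haveI : Fintype (V ⧸ L) := Fintype.ofFinite _
  have hqcard : Nat.card (V ⧸ L) = p ^ (n - 1) := by
    have := quot_card_aux p n L
    rwa [finrank_span_singleton hu] at this
  have htotal : F.card ≤ p ^ (n - 1) * m := by
    calc F.card = ∑ q ∈ F.image π, (F.filter (fun x => π x = q)).card :=
          Finset.card_eq_sum_card_image π F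
      _ ≤ (F.image π).card * m := by
          apply Finset.sum_le_card_nsmul
          intro q _
          exact hfiber q
      _ ≤ p ^ (n - 1) * m := by
          apply Nat.mul_le_mul_right
          calc (F.image π).card ≤ (univ : Finset (V ⧸ L)).card :=
                Finset.card_le_card (Finset.subset_univ _)
            _ = Fintype.card (V ⧸ L) := Finset.card_univ
            _ = Nat.card (V ⧸ L) := (Nat.card_eq_fintype_card).symm
            _ = p ^ (n - 1) := hqcard
  -- dual space setup
  haveI : Fintype (Module.Dual (ZMod p) V) := Fintype.ofFinite _
  have hann_filter : ∀ (W : Submodule (ZMod p) V),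
      ((univ : Finset (Module.Dual (ZMod p) V)).filter (fun φ => φ ∈ W.dualAnnihilator)).card
        = p ^ (n - finrank (ZMod p) W) := by
    intro W
    have h1 : (↑((univ : Finset (Module.Dual (ZMod p) V)).filter (fun φ => φ ∈ W.dualAnnihilator))
        : Set (Module.Dual (ZMod p) V)) = ↑W.dualAnnihilator := by
      ext φ; simp
    have h2 := Set.ncard_coe_finset
      ((univ : Finset (Module.Dual (ZMod p) V)).filter (fun φ => φ ∈ W.dualAnnihilator))
    rw [h1] at h2
    rw [← h2, ← Nat.card_coe_set_eq]
    exact ann_card W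
  have hannL : ∀ φ : Module.Dual (ZMod p) V, φ ∈ L.dualAnnihilator ↔ φ u = 0 := by
    intro φ
    rw [Submodule.mem_dualAnnihilator]
    constructor
    · intro h; exact h u (Submodule.mem_span_singleton_self u)
    · intro h w hw
      rw [hL, Submodule.mem_span_singleton] at hw
      obtain ⟨c, rfl⟩ := hw
      rw [map_smul, smul_eq_mul, h, mul_zero]
  set G := (univ : Finset (Module.Dual (ZMod p) V)).filter (fun φ => φ u = 0 ∧ φ ≠ 0) with hG
  have hGcard : G.card = p ^ (n - 1) - 1 := by
    have h0mem : (0 : Module.Dual (ZMod p) V)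
        ∈ univ.filter (fun φ : Module.Dual (ZMod p) V => φ ∈ L.dualAnnihilator) := by
      simp [Submodule.zero_mem]
    have he : G = (univ.filter
        (fun φ : Module.Dual (ZMod p) V => φ ∈ L.dualAnnihilator)).erase 0 := by
      ext φ
      rw [hG, Finset.mem_erase, Finset.mem_filter, Finset.mem_filter, hannL φ]
      tauto
    rw [he, Finset.card_erase_of_mem h0mem, hann_filter L]
    have : finrank (ZMod p) L = 1 := by rw [hL]; exact finrank_span_singleton hu
    rw [this]
  have hcntL : ∀ x, x ∈ L → (G.filter (fun φ => φ x = 0)).card = p ^ (n - 1) - 1 := by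
    intro x hx
    have : G.filter (fun φ => φ x = 0) = G := by
      apply Finset.filter_true_of_mem
      intro φ hφ
      rw [hG, Finset.mem_filter] at hφ
      rw [hL, Submodule.mem_span_singleton] at hx
      obtain ⟨c, rfl⟩ := hx
      rw [map_smul, smul_eq_mul, hφ.2.1, mul_zero]
    rw [this, hGcard]
  have hcnt2 : ∀ x, x ∉ L → (G.filter (fun φ => φ x = 0)).card = p ^ (n - 2) - 1 := by
    intro x hx
    set J := Submodule.span (ZMod p) ({u, x} : Set V) with hJ
    have hJmem : ∀ φ : Module.Dual (ZMod p) V,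
        φ ∈ J.dualAnnihilator ↔ (φ u = 0 ∧ φ x = 0) := by
      intro φ
      rw [Submodule.mem_dualAnnihilator]
      constructor
      · intro h
        exact ⟨h u (Submodule.subset_span (by simp)), h x (Submodule.subset_span (by simp))⟩
      · rintro ⟨h1, h2⟩ w hw
        have hle : J ≤ LinearMap.ker φ := by
          rw [hJ, Submodule.span_le]
          intro y hy
          rcases Set.mem_insert_iff.1 hy with rfl | hy2
          · exact LinearMap.mem_ker.2 h1
          · rw [Set.mem_singleton_iff] at hy2; subst hy2; exact LinearMap.mem_ker.2 h2
        exact LinearMap.mem_ker.1 (hle hw)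
    have hfrJ : finrank (ZMod p) J = 2 := by
      have hind : LinearIndependent (ZMod p) ![u, x] := by
        rw [LinearIndependent.pair_iff' hu]
        intro a ha
        apply hx
        rw [hL, Submodule.mem_span_singleton]
        exact ⟨a, ha⟩
      have hrange : Set.range ![u, x] = {u, x} :=
        Matrix.range_cons_cons_empty u x ![]
      have h2 := finrank_span_eq_card hind
      rw [hrange] at h2
      rw [hJ, h2, Fintype.card_fin]
    have h0mem : (0 : Module.Dual (ZMod p) V)
        ∈ univ.filter (fun φ : Module.Dual (ZMod p) V => φ ∈ J.dualAnnihilator) := by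
      simp [Submodule.zero_mem]
    have he : G.filter (fun φ => φ x = 0) = (univ.filter
        (fun φ : Module.Dual (ZMod p) V => φ ∈ J.dualAnnihilator)).erase 0 := by
      ext φ
      rw [Finset.mem_filter, hG, Finset.mem_erase, Finset.mem_filter, Finset.mem_filter, hJmem φ]
      tauto
    rw [he, Finset.card_erase_of_mem h0mem, hann_filter J, hfrJ]
  -- the double counting sum
  set S := ∑ φ ∈ G, (F.filter (fun x => φ x = 0)).card with hS
  have hswap : S = ∑ x ∈ F, (G.filter (fun φ => φ x = 0)).card := by
    rw [hS]
    simp_rw [Finset.card_filter]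
    rw [Finset.sum_comm]
  have hSval : S = m * (p ^ (n - 1) - 1) + t * (p ^ (n - 2) - 1) := by
    rw [hswap, ← Finset.sum_filter_add_sum_filter_not F (fun x => x ∈ L)]
    have e1 : ∑ x ∈ F.filter (fun x => x ∈ L), (G.filter (fun φ => φ x = 0)).card
        = m * (p ^ (n - 1) - 1) := by
      rw [Finset.sum_congr rfl (fun x hx => hcntL x ((Finset.mem_filter.1 hx).2)),
        Finset.sum_const, smul_eq_mul]
      try rw [← hFL]
      try rw [hsm]
    have e2 : ∑ x ∈ F.filter (fun x => x ∉ L), (G.filter (fun φ => φ x = 0)).card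
        = t * (p ^ (n - 2) - 1) := by
      rw [Finset.sum_congr rfl (fun x hx => hcnt2 x ((Finset.mem_filter.1 hx).2)),
        Finset.sum_const, smul_eq_mul]
      try rw [← hFc]
    rw [e1, e2]
  -- kernel rank
  have hker_rk : ∀ φ : Module.Dual (ZMod p) V, φ ≠ 0 →
      finrank (ZMod p) (LinearMap.ker φ) = n - 1 := by
    intro φ hφ0
    have hrange : LinearMap.range φ = ⊤ := by
      obtain ⟨x, hx⟩ : ∃ x, φ x ≠ 0 := by
        by_contra h
        push_neg at h
        exact hφ0 (LinearMap.ext (fun y => by rw [h y, LinearMap.zero_apply]))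
      rw [LinearMap.range_eq_top]
      intro c
      exact ⟨(c * (φ x)⁻¹) • x, by
        rw [map_smul, smul_eq_mul, mul_assoc, inv_mul_cancel₀ hx, mul_one]⟩
    have h1 := LinearMap.finrank_range_add_finrank_ker φ
    rw [hrange, finrank_top, finrank_self, Module.finrank_fin_fun] at h1
    omega
  -- hyperplane bound
  have hhyp : ∀ φ : Module.Dual (ZMod p) V, φ u = 0 → φ ≠ 0 →
      (F.filter (fun x => φ x = 0)).card ≤ p ^ (n - 2) * m := by
    intro φ hφu hφ0
    have hLK : L ≤ LinearMap.ker φ := by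
      rw [hL, Submodule.span_le, Set.singleton_subset_iff]
      exact LinearMap.mem_ker.2 hφu
    set M' := (LinearMap.ker φ).map π with hM'
    have hM'rk : finrank (ZMod p) M' = n - 2 := by
      have h1 := LinearMap.finrank_range_add_finrank_ker (π.domRestrict (LinearMap.ker φ))
      rw [LinearMap.range_domRestrict, LinearMap.ker_domRestrict] at h1
      have h2 : LinearMap.ker π = L := Submodule.ker_mkQ L
      rw [h2] at h1
      have h3 : finrank (ZMod p) ↥(Submodule.comap (LinearMap.ker φ).subtype L) = 1 := by
        have he : finrank (ZMod p) ↥(Submodule.comap (LinearMap.ker φ).subtype L)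
            = finrank (ZMod p) ↥L :=
          LinearEquiv.finrank_eq (Submodule.comapSubtypeEquivOfLe hLK)
        rw [he, hL, finrank_span_singleton hu]
      rw [h3, hker_rk φ hφ0] at h1
      rw [← hM'] at h1
      omega
    have hM'card : Nat.card ↥M' = p ^ (n - 2) := by
      rw [mod_card p, hM'rk]
    calc (F.filter (fun x => φ x = 0)).card
        = ∑ q ∈ (F.filter (fun x => φ x = 0)).image π,
            ((F.filter (fun x => φ x = 0)).filter (fun x => π x = q)).card :=
          Finset.card_eq_sum_card_image π _
      _ ≤ ((F.filter (fun x => φ x = 0)).image π).card * m := by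
          apply Finset.sum_le_card_nsmul
          intro q _
          calc ((F.filter (fun x => φ x = 0)).filter (fun x => π x = q)).card
              ≤ (F.filter (fun x => π x = q)).card := by
                apply Finset.card_le_card
                intro x hx
                rw [Finset.mem_filter] at hx ⊢
                exact ⟨(Finset.mem_filter.1 hx.1).1, hx.2⟩
            _ ≤ m := hfiber q
      _ ≤ p ^ (n - 2) * m := by
          apply Nat.mul_le_mul_right
          have hsub : (↑((F.filter (fun x => φ x = 0)).image π) : Set (V ⧸ L)) ⊆ ↑M' := by
            intro q hq
            rw [Finset.mem_coe, Finset.mem_image] at hq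
            obtain ⟨x, hx, rfl⟩ := hq
            exact Submodule.mem_map.2 ⟨x, LinearMap.mem_ker.2 (Finset.mem_filter.1 hx).2, rfl⟩
          calc ((F.filter (fun x => φ x = 0)).image π).card
              = (↑((F.filter (fun x => φ x = 0)).image π) : Set (V ⧸ L)).ncard :=
                (Set.ncard_coe_finset _).symm
            _ ≤ (↑M' : Set (V ⧸ L)).ncard := Set.ncard_le_ncard hsub (Set.toFinite _)
            _ = Nat.card ↥M' := Nat.card_coe_set_eq _
            _ = p ^ (n - 2) := hM'card
  -- the set of "good" functionals
  set Q := G.filter (fun φ => F.card ≤ p * (F.filter (fun x => φ x = 0)).card) with hQ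
  have hGmem : ∀ φ ∈ G, φ u = 0 ∧ φ ≠ 0 := by
    intro φ hφ
    rw [hG, Finset.mem_filter] at hφ
    exact hφ.2
  have hint : ∀ φ : Module.Dual (ZMod p) V,
      A ∩ ↑(LinearMap.ker φ) = ↑(F.filter (fun x => φ x = 0)) := by
    intro φ
    ext x
    simp only [Set.mem_inter_iff, SetLike.mem_coe, LinearMap.mem_ker, Finset.coe_filter,
      Set.mem_setOf_eq]
    try rw [← hmemF x]
    try tauto
  have hAn : A.ncard = F.card := by rw [← hAF, Set.ncard_coe_finset]
  have key : ∀ φ₁ ∈ Q, ∀ φ₂ ∈ Q, LinearMap.ker φ₁ = LinearMap.ker φ₂ := by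
    intro φ₁ h1 φ₂ h2
    by_contra hne
    apply hcon
    rw [hQ, Finset.mem_filter] at h1 h2
    obtain ⟨hG1, hc1⟩ := h1
    obtain ⟨hu1, hn1⟩ := hGmem _ hG1
    obtain ⟨hG2, hc2⟩ := h2
    obtain ⟨hu2, hn2⟩ := hGmem _ hG2
    refine ⟨LinearMap.ker φ₁, LinearMap.ker φ₂, hne, hker_rk φ₁ hn1, hker_rk φ₂ hn2,
      LinearMap.mem_ker.2 hu1, LinearMap.mem_ker.2 hu2, ?_, ?_⟩
    · rw [hAn, hint φ₁, Set.ncard_coe_finset]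
      exact hc1
    · rw [hAn, hint φ₂, Set.ncard_coe_finset]
      exact hc2
  have hQcard : Q.card ≤ p - 1 := by
    rcases Q.eq_empty_or_nonempty with h | ⟨φ₀, hφ₀⟩
    · rw [h, Finset.card_empty]; omega
    have hG0 : φ₀ ∈ G := (Finset.mem_filter.1 hφ₀).1
    obtain ⟨hu0, hn0⟩ := hGmem _ hG0
    have hsub : Q ⊆ (univ.filter
        (fun φ : Module.Dual (ZMod p) V => φ ∈ (LinearMap.ker φ₀).dualAnnihilator)).erase 0 := by
      intro φ hφ
      have hGφ : φ ∈ G := (Finset.mem_filter.1 hφ).1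
      obtain ⟨huφ, hnφ⟩ := hGmem _ hGφ
      rw [Finset.mem_erase, Finset.mem_filter]
      refine ⟨hnφ, Finset.mem_univ _, ?_⟩
      rw [Submodule.mem_dualAnnihilator]
      intro w hw
      have hk : LinearMap.ker φ = LinearMap.ker φ₀ := key φ hφ φ₀ hφ₀
      rw [← hk] at hw
      exact LinearMap.mem_ker.1 hw
    have h0mem : (0 : Module.Dual (ZMod p) V) ∈ univ.filter
        (fun φ : Module.Dual (ZMod p) V => φ ∈ (LinearMap.ker φ₀).dualAnnihilator) := by
      simp [Submodule.zero_mem]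
    calc Q.card ≤ _ := Finset.card_le_card hsub
      _ = _ - 1 := Finset.card_erase_of_mem h0mem
      _ = p - 1 := by
        rw [hann_filter (LinearMap.ker φ₀), hker_rk φ₀ hn0]
        have : n - (n - 1) = 1 := by omega
        rw [this, pow_one]
  -- assemble the inequality
  have hGQ : Q.card + (G.filter
      (fun φ => ¬ (F.card ≤ p * (F.filter (fun x => φ x = 0)).card))).card = G.card := by
    rw [hQ]
    exact Finset.card_filter_add_card_filter_not _
  have hFcard : F.card = m + t := by omega
  have hmain : p * S ≤ Q.card * (p * (p ^ (n - 2) * m)) + (G.card - Q.card) * (m + t - 1) := by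
    rw [hS, Finset.mul_sum, ← Finset.sum_filter_add_sum_filter_not G
      (fun φ => F.card ≤ p * (F.filter (fun x => φ x = 0)).card), ← hQ]
    apply Nat.add_le_add
    · apply Finset.sum_le_card_nsmul
      intro φ hφ
      have hGφ : φ ∈ G := (Finset.mem_filter.1 hφ).1
      obtain ⟨huφ, hnφ⟩ := hGmem _ hGφ
      exact Nat.mul_le_mul_left p (hhyp φ huφ hnφ)
    · have hcc : (G.filter
          (fun φ => ¬ (F.card ≤ p * (F.filter (fun x => φ x = 0)).card))).card
          = G.card - Q.card := by omega
      rw [← hcc]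
      apply Finset.sum_le_card_nsmul
      intro φ hφ
      have := (Finset.mem_filter.1 hφ).2
      rw [hFcard] at this
      omega
  -- final contradiction
  have hQG : Q.card ≤ G.card := by omega
  have htot2 : m + t ≤ p ^ (n - 1) * m := by rw [← hFcard]; exact htotal
  have hPP' : p ^ (n - 1) = p * p ^ (n - 2) := by
    have : n - 1 = (n - 2) + 1 := by omega
    rw [this, pow_succ, mul_comm]
  have hpsq : p * p ≤ p ^ (n - 1) := by
    calc p * p = p ^ 2 := by ring
      _ ≤ p ^ (n - 1) := Nat.pow_le_pow_right (by omega) (by omega)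
  have hP'1 : 1 ≤ p ^ (n - 2) := Nat.one_le_pow _ _ (by omega)
  have hP1 : 1 ≤ p ^ (n - 1) := Nat.one_le_pow _ _ (by omega)
  rw [hSval] at hmain
  rw [hGcard] at hmain hQG
  -- cast to integers
  have hq' : (Q.card : ℤ) ≤ (p : ℤ) - 1 := by
    have := hQcard; omega
  have ht' : (t : ℤ) ≤ (m : ℤ) * ((p : ℤ) ^ (n - 1) - 1) := by
    have h2 : (m : ℤ) + (t : ℤ) ≤ (p : ℤ) ^ (n - 1) * (m : ℤ) := by exact_mod_cast htot2
    linarith only [h2]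
  have hmain' : (p : ℤ) * ((m : ℤ) * ((p : ℤ) ^ (n - 1) - 1) + (t : ℤ) * ((p : ℤ) ^ (n - 2) - 1))
      ≤ (Q.card : ℤ) * ((p : ℤ) * ((p : ℤ) ^ (n - 2) * (m : ℤ)))
        + ((p : ℤ) ^ (n - 1) - 1 - (Q.card : ℤ)) * ((m : ℤ) + (t : ℤ) - 1) := by
    have h := hmain
    zify [hP1, hP'1, hQG, (by omega : 1 ≤ m + t)] at h
    convert h using 2 <;> push_cast <;> ring
  have hPP'' : ((p : ℤ)) ^ (n - 1) = (p : ℤ) * (p : ℤ) ^ (n - 2) := by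
    exact_mod_cast hPP'
  have hpsq' : (p : ℤ) * (p : ℤ) ≤ (p : ℤ) ^ (n - 1) := by exact_mod_cast hpsq
  have hp2' : (2 : ℤ) ≤ (p : ℤ) := by exact_mod_cast hp2
  have hm1' : (1 : ℤ) ≤ (m : ℤ) := by exact_mod_cast hm1
  have ht0 : (0 : ℤ) ≤ (t : ℤ) := Int.ofNat_nonneg t
  have hq0 : (0 : ℤ) ≤ (Q.card : ℤ) := Int.ofNat_nonneg _
  rw [hPP''] at hmain' ht'
  have hpsq'' : (p : ℤ) * (p : ℤ) ≤ (p : ℤ) * (p : ℤ) ^ (n - 2) := by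
    rw [← hPP'']; exact hpsq'
  have hP'1z : (1 : ℤ) ≤ (p : ℤ) ^ (n - 2) := by exact_mod_cast hP'1
  exact final_arith (p : ℤ) (m : ℤ) (t : ℤ) (Q.card : ℤ) ((p : ℤ) ^ (n - 2))
    hp2' hm1' ht0 hq0 hq' hP'1z hpsq'' ht' hmain'
end

section
/- If A ⊆ F_5^2 is sum-free with |A| ≥ 6, then A is normal, i.e., there is a 1-dimensional subspace V < F_5^2 and w ∈ F_5^2 \ V such that A ⊆ (2w + V) ∪ (3w + V). -/
open Pointwise

abbrev Pt := ZMod 5 × ZMod 5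

def enc (p : Pt) : ℕ := 5 * p.1.val + p.2.val

def cadd (a b : ℕ) : ℕ := 5 * ((a / 5 + b / 5) % 5) + (a % 5 + b % 5) % 5

def smadd (p : ℕ) (L : List ℕ) (sm : ℕ) : ℕ :=
  L.rec (motive := fun _ => ℕ → ℕ) (fun s => s) (fun a _ ih s => ih (s ||| (1 <<< cadd a p))) sm

def llen (L : List ℕ) : ℕ := L.rec 0 (fun _ _ ih => ih + 1)

def anySub (msk : ℕ) (Ms : List ℕ) : Bool :=
  Ms.rec false (fun M _ ih => (msk &&& M == msk) || ih)

def cases12 : List (Pt × Pt × ℕ × List ℕ) := [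
  ((1,0), (0,3), 19483218, [1, 4, 6, 9, 11, 14, 16, 19, 21, 24]),
  ((1,0), (0,1), 12988812, [2, 3, 7, 8, 12, 13, 17, 18, 22, 23]),
  ((0,1), (3,0), 32506848, [5, 6, 7, 8, 9, 20, 21, 22, 23, 24]),
  ((0,1), (1,0), 1047552,  [10, 11, 12, 13, 14, 15, 16, 17, 18, 19]),
  ((1,1), (0,3), 10102962, [1, 4, 5, 7, 11, 13, 17, 19, 20, 23]),
  ((1,1), (0,1), 6407948,  [2, 3, 8, 9, 10, 14, 15, 16, 21, 22]),
  ((1,2), (0,3), 21144914, [1, 4, 6, 8, 10, 13, 15, 17, 22, 24]),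
  ((1,2), (0,1), 3938860,  [2, 3, 5, 9, 11, 12, 18, 19, 20, 21]),
  ((1,3), (0,3), 10786450, [1, 4, 7, 9, 10, 12, 15, 18, 21, 23]),
  ((1,3), (0,1), 18047084, [2, 3, 5, 6, 13, 14, 16, 17, 20, 24]),
  ((1,4), (0,3), 5591346,  [1, 4, 5, 8, 12, 14, 16, 18, 20, 22]),
  ((1,4), (0,1), 25726156, [2, 3, 6, 7, 10, 11, 15, 19, 23, 24])]

def Mmasks : List ℕ := cases12.map (fun c => c.2.2.1)

def dfs (l : List ℕ) : List ℕ → ℕ → ℕ → Bool :=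
  l.rec (motive := fun _ => List ℕ → ℕ → ℕ → Bool)
    (fun S msk _ => Nat.blt (llen S) 6 || anySub msk Mmasks)
    (fun p _ ih S msk sm =>
      ih S msk sm &&
      (!(smadd p (p :: S) sm &&& (msk ||| (1 <<< p)) == 0) ||
        ih (p :: S) (msk ||| (1 <<< p)) (smadd p (p :: S) sm)))

lemma enc_inj : Function.Injective enc := by unfold Function.Injective; decide

lemma cadd_enc : ∀ x y : Pt, cadd (enc x) (enc y) = enc (x + y) := by decide

lemma llen_eq (L : List ℕ) : llen L = L.length := by
  induction L with
  | nil => rfl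
  | cons a L ih => simpa [llen] using ih

lemma anySub_sound {msk : ℕ} {Ms : List ℕ} (h : anySub msk Ms = true) :
    ∃ M ∈ Ms, msk &&& M = msk := by
  induction Ms with
  | nil => simp [anySub] at h
  | cons M Ms ih =>
    have h' : ((msk &&& M == msk) || anySub msk Ms) = true := h
    rw [Bool.or_eq_true] at h'
    rcases h' with h | h
    · exact ⟨M, List.mem_cons_self .., by simpa using h⟩
    · obtain ⟨M', hM', he⟩ := ih h
      exact ⟨M', List.mem_cons_of_mem _ hM', he⟩

lemma testBit_or_shift (msk p n : ℕ) :
    (msk ||| (1 <<< p)).testBit n = (msk.testBit n || decide (p = n)) := by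
  rw [Nat.testBit_lor, Nat.shiftLeft_eq, one_mul, Nat.testBit_two_pow]

lemma smadd_testBit {p : ℕ} : ∀ (L : List ℕ) (sm n : ℕ),
    (smadd p L sm).testBit n = true ↔ sm.testBit n = true ∨ ∃ a ∈ L, cadd a p = n := by
  intro L
  induction L with
  | nil => simp [smadd]
  | cons a L ih =>
    intro sm n
    show (smadd p L (sm ||| (1 <<< cadd a p))).testBit n = true ↔ _
    rw [ih]
    rw [testBit_or_shift]
    simp only [Bool.or_eq_true, decide_eq_true_eq, List.mem_cons]
    constructor
    · rintro ((h | h) | ⟨b, hb, hc⟩)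
      · exact Or.inl h
      · exact Or.inr ⟨a, Or.inl rfl, h⟩
      · exact Or.inr ⟨b, Or.inr hb, hc⟩
    · rintro (h | ⟨b, (rfl | hb), hc⟩)
      · exact Or.inl (Or.inl h)
      · exact Or.inl (Or.inr hc)
      · exact Or.inr ⟨b, hb, hc⟩

lemma land_eq_zero {a b : ℕ} (h : ∀ n, ¬(a.testBit n = true ∧ b.testBit n = true)) :
    a &&& b = 0 := by
  apply Nat.eq_of_testBit_eq
  intro n
  have := h n
  cases ha : a.testBit n <;> cases hb : b.testBit n <;>
    simp_all [Nat.testBit_land, Nat.zero_testBit]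

/-- Main soundness of the DFS. -/
lemma dfs_sound : ∀ (l S : List ℕ) (msk sm : ℕ), dfs l S msk sm = true →
    ∀ T : Finset Pt, (∀ a ∈ T, ∀ b ∈ T, a + b ∉ T) →
    (∀ n ∈ S, ∃ q ∈ T, enc q = n) →
    (∀ n, msk.testBit n = true ↔ n ∈ S) →
    (∀ n, sm.testBit n = true → ∃ x y : Pt, enc x ∈ S ∧ enc y ∈ S ∧ enc (x + y) = n) →
    (∀ q ∈ T, enc q ∈ S ∨ enc q ∈ l) →
    6 ≤ T.card →
    ∃ M ∈ Mmasks, ∀ q ∈ T, M.testBit (enc q) = true := by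
  intro l
  induction l with
  | nil =>
    intro S msk sm h T hsf hS hmsk hsm hl hcard
    have h' : (Nat.blt (llen S) 6 || anySub msk Mmasks) = true := h
    rw [Bool.or_eq_true] at h'
    rcases h' with h | h
    · -- card contradiction
      exfalso
      rw [llen_eq, Nat.blt_eq] at h
      have h2 : T.card ≤ S.toFinset.card := by
        apply Finset.card_le_card_of_injOn enc
        · intro q hq
          simp only [Finset.mem_coe, List.mem_toFinset]
          rcases hl q hq with hh | hh
          · exact hh
          · exact absurd hh List.not_mem_nil
        · exact fun x _ y _ hxy => enc_inj hxy
      have h3 := List.toFinset_card_le S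
      omega
    · obtain ⟨M, hMmem, hMe⟩ := anySub_sound h
      refine ⟨M, hMmem, fun q hq => ?_⟩
      have hqS : enc q ∈ S := by
        rcases hl q hq with hh | hh
        · exact hh
        · exact absurd hh List.not_mem_nil
      have hbit : msk.testBit (enc q) = true := (hmsk _).2 hqS
      have hMe' := congrArg (fun m => m.testBit (enc q)) hMe
      simp only [Nat.testBit_land] at hMe'
      rw [hbit, Bool.true_and] at hMe'
      exact hMe'
  | cons p l ih =>
    intro S msk sm h T hsf hS hmsk hsm hl hcard
    rw [show dfs (p :: l) S msk sm =
      (dfs l S msk sm &&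
      (!(smadd p (p :: S) sm &&& (msk ||| (1 <<< p)) == 0) ||
        dfs l (p :: S) (msk ||| (1 <<< p)) (smadd p (p :: S) sm))) from rfl] at h
    rw [Bool.and_eq_true] at h
    obtain ⟨h1, h2⟩ := h
    by_cases hp : ∃ y ∈ T, enc y = p
    · -- p is the code of some element of T
      obtain ⟨y, hy, rfl⟩ := hp
      -- the check must pass
      have hchk : (smadd (enc y) (enc y :: S) sm &&& (msk ||| (1 <<< enc y)) == 0) = true := by
        rw [Nat.beq_eq_true_eq]
        apply land_eq_zero
        rintro n ⟨hA, hB⟩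
        -- hB : n is a code of an element of T among enc y :: S
        rw [testBit_or_shift] at hB
        have hBmem : n ∈ enc y :: S := by
          rw [Bool.or_eq_true] at hB
          rcases hB with hh | hh
          · exact List.mem_cons_of_mem _ ((hmsk n).1 hh)
          · simp only [decide_eq_true_eq] at hh; exact hh ▸ List.mem_cons_self ..
        obtain ⟨q, hqT, rfl⟩ : ∃ q ∈ T, enc q = n := by
          rw [List.mem_cons] at hBmem
          rcases hBmem with rfl | hmem
          · exact ⟨y, hy, rfl⟩
          · exact hS _ hmem
        -- hA : enc q is a sum of two elements of T
        rw [smadd_testBit] at hA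
        have hex : ∃ x z : Pt, x ∈ T ∧ z ∈ T ∧ enc (x + z) = enc q := by
          rcases hA with hh | ⟨a, ha, hc⟩
          · obtain ⟨x, z, hx, hz, he⟩ := hsm _ hh
            obtain ⟨x', hx', hex⟩ := hS _ hx
            obtain ⟨z', hz', hez⟩ := hS _ hz
            exact ⟨x', z', hx', hz', by rw [enc_inj hex, enc_inj hez]; exact he⟩
          · obtain ⟨x', hx', hex⟩ : ∃ q ∈ T, enc q = a := by
              rw [List.mem_cons] at ha
              rcases ha with rfl | hmem
              · exact ⟨y, hy, rfl⟩
              · exact hS _ hmem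
            refine ⟨x', y, hx', hy, ?_⟩
            rw [← cadd_enc, hex, hc]
        obtain ⟨x, z, hx, hz, he⟩ := hex
        exact hsf x hx z hz (enc_inj he ▸ hqT)
      rw [hchk] at h2
      simp only [Bool.not_true, Bool.false_or] at h2
      refine ih (enc y :: S) (msk ||| (1 <<< enc y)) (smadd (enc y) (enc y :: S) sm) h2 T hsf
        ?_ ?_ ?_ ?_ hcard
      · intro n hn
        rw [List.mem_cons] at hn
        rcases hn with rfl | hn
        · exact ⟨y, hy, rfl⟩
        · exact hS _ hn
      · intro n
        rw [testBit_or_shift]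
        simp only [Bool.or_eq_true, decide_eq_true_eq, List.mem_cons, hmsk]
        tauto
      · intro n hn
        rw [smadd_testBit] at hn
        rcases hn with hh | ⟨a, ha, hc⟩
        · obtain ⟨x, z, hx, hz, he⟩ := hsm _ hh
          exact ⟨x, z, List.mem_cons_of_mem _ hx, List.mem_cons_of_mem _ hz, he⟩
        · obtain ⟨x, hx, hex⟩ : ∃ x : Pt, enc x ∈ enc y :: S ∧ enc x = a := by
            rw [List.mem_cons] at ha
            rcases ha with rfl | hmem
            · exact ⟨y, List.mem_cons_self .., rfl⟩
            · obtain ⟨q, _, rfl⟩ := hS _ hmem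
              exact ⟨q, List.mem_cons_of_mem _ hmem, rfl⟩
          exact ⟨x, y, hx, List.mem_cons_self .., by rw [← cadd_enc, hex, hc]⟩
      · intro q hq
        rcases hl q hq with hh | hh
        · exact Or.inl (List.mem_cons_of_mem _ hh)
        · rw [List.mem_cons] at hh
          rcases hh with he | hh
          · exact Or.inl (he ▸ List.mem_cons_self ..)
          · exact Or.inr hh
    · -- p is not a code of an element of T
      refine ih S msk sm h1 T hsf hS hmsk hsm ?_ hcard
      intro q hq
      rcases hl q hq with hh | hh
      · exact Or.inl hh
      · rw [List.mem_cons] at hh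
        rcases hh with he | hh
        · exact absurd ⟨q, hq, he⟩ hp
        · exact Or.inr hh

set_option maxHeartbeats 4000000 in
lemma dfs_true : dfs (List.range 25) [] 0 0 = true := by decide

lemma enc_range : ∀ p : Pt, enc p ∈ List.range 25 := by decide

abbrev Good (c : Pt × Pt × ℕ × List ℕ) : Prop :=
  c.1 ≠ 0 ∧ (¬∃ t : ZMod 5, t • c.1 = c.2.1) ∧
  (∀ n ∈ List.range 25, c.2.2.1.testBit n = true → n ∈ c.2.2.2) ∧
  (∀ x : Pt, enc x ∈ c.2.2.2 →
    (∃ t : ZMod 5, x = (2 : ZMod 5) • c.2.1 + t • c.1) ∨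
    (∃ t : ZMod 5, x = (3 : ZMod 5) • c.2.1 + t • c.1))

set_option maxHeartbeats 2000000 in
lemma good_all : ∀ c ∈ cases12, Good c := by decide

set_option maxHeartbeats 2000000 in
theorem stmt_4 (A : Set (ZMod 5 × ZMod 5))
    (hsf : ∀ a ∈ A, ∀ b ∈ A, a + b ∉ A)
    (hcard : 6 ≤ A.ncard) :
    ∃ V : Submodule (ZMod 5) (ZMod 5 × ZMod 5), Module.finrank (ZMod 5) V = 1 ∧
      ∃ w : ZMod 5 × ZMod 5, w ∉ V ∧
        A ⊆ ((2 : ZMod 5) • w +ᵥ (V : Set (ZMod 5 × ZMod 5))) ∪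
            ((3 : ZMod 5) • w +ᵥ (V : Set (ZMod 5 × ZMod 5))) := by
  have hfin : A.Finite := Set.toFinite A
  set T : Finset Pt := hfin.toFinset with hT
  have hmemT : ∀ x, x ∈ T ↔ x ∈ A := fun x => hfin.mem_toFinset
  have hTcard : 6 ≤ T.card := by
    rwa [Set.ncard_eq_toFinset_card A hfin] at hcard
  have hsfT : ∀ a ∈ T, ∀ b ∈ T, a + b ∉ T := by
    intro a ha b hb hab
    exact hsf a ((hmemT a).1 ha) b ((hmemT b).1 hb) ((hmemT _).1 hab)
  obtain ⟨M, hMmem, hMT⟩ :=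
    dfs_sound (List.range 25) [] 0 0 dfs_true T hsfT (by simp)
      (by simp [Nat.zero_testBit]) (by simp [Nat.zero_testBit])
      (fun q _ => Or.inr (enc_range q)) hTcard
  rw [Mmasks, List.mem_map] at hMmem
  obtain ⟨⟨d, w, msk, Ml⟩, hc, rfl⟩ := hMmem
  obtain ⟨hd, hw, hmb, hM⟩ := good_all _ hc
  haveI : Fact (Nat.Prime 5) := ⟨by norm_num⟩
  refine ⟨Submodule.span (ZMod 5) {d}, finrank_span_singleton hd, w, ?_, ?_⟩
  · rw [Submodule.mem_span_singleton]
    rintro ⟨t, ht⟩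
    exact hw ⟨t, ht⟩
  · intro x hx
    have hxT : x ∈ T := (hmemT x).2 hx
    have hxM : enc x ∈ Ml := hmb _ (enc_range x) (hMT x hxT)
    rcases hM x hxM with ⟨t, hxe⟩ | ⟨t, hxe⟩
    · left
      refine ⟨t • d, Submodule.mem_span_singleton.2 ⟨t, rfl⟩, ?_⟩
      show (2 : ZMod 5) • w +ᵥ t • d = x
      rw [vadd_eq_add]
      exact hxe.symm
    · right
      refine ⟨t • d, Submodule.mem_span_singleton.2 ⟨t, rfl⟩, ?_⟩
      show (3 : ZMod 5) • w +ᵥ t • d = x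
      rw [vadd_eq_add]
      exact hxe.symm
end

section
/- Let X = {(1,x,y) ∈ F_5^3 : x ∈ {1,2} or (x = 0 and y ∈ {1,2})} ∪ {(2,0,0), (2,0,1)} and Y = X ∪ (−X). Then Y is sum-free, |Y| = 28, and Y is not contained in two cosets of any 2-dimensional subspace of F_5^3. -/
set_option maxRecDepth 4000
set_option maxHeartbeats 1000000


open Pointwise

private def YF : Finset (ZMod 5 × ZMod 5 × ZMod 5) :=
  {(1,1,0),(1,1,1),(1,1,2),(1,1,3),(1,1,4),
   (1,2,0),(1,2,1),(1,2,2),(1,2,3),(1,2,4),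
   (1,0,1),(1,0,2),(2,0,0),(2,0,1),
   (4,4,0),(4,4,4),(4,4,3),(4,4,2),(4,4,1),
   (4,3,0),(4,3,4),(4,3,3),(4,3,2),(4,3,1),
   (4,0,4),(4,0,3),(3,0,0),(3,0,4)}

private lemma key : ∀ a b c : ZMod 5, ¬(a = 0 ∧ b = 0 ∧ c = 0) → ∀ s t : ZMod 5,
    ∃ v ∈ YF, a * v.1 + b * v.2.1 + c * v.2.2 ≠ s ∧ a * v.1 + b * v.2.1 + c * v.2.2 ≠ t := by
  decide

theorem stmt_7
    (X : Set (ZMod 5 × ZMod 5 × ZMod 5))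
    (hX : X = {v | v.1 = 1 ∧ (v.2.1 ∈ ({1, 2} : Set (ZMod 5)) ∨
            (v.2.1 = 0 ∧ v.2.2 ∈ ({1, 2} : Set (ZMod 5))))} ∪
          {(2, 0, 0), (2, 0, 1)})
    (Y : Set (ZMod 5 × ZMod 5 × ZMod 5)) (hY : Y = X ∪ (-X)) :
    (∀ a ∈ Y, ∀ b ∈ Y, a + b ∉ Y) ∧ Y.ncard = 28 ∧
    ¬ ∃ V : Submodule (ZMod 5) (ZMod 5 × ZMod 5 × ZMod 5),
        Module.finrank (ZMod 5) V = 2 ∧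
        ∃ c₁ c₂ : ZMod 5 × ZMod 5 × ZMod 5,
          Y ⊆ (c₁ +ᵥ (V : Set (ZMod 5 × ZMod 5 × ZMod 5))) ∪
              (c₂ +ᵥ (V : Set (ZMod 5 × ZMod 5 × ZMod 5))) := by
  have hmem : ∀ v, v ∈ Y ↔ v ∈ YF := by
    subst hY hX
    intro v
    simp only [Set.mem_union, Set.mem_setOf_eq, Set.mem_insert_iff,
      Set.mem_singleton_iff, Set.mem_neg]
    revert v
    decide
  have hYeq : Y = (YF : Set (ZMod 5 × ZMod 5 × ZMod 5)) := by
    ext v; simpa using hmem v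
  refine ⟨?_, ?_, ?_⟩
  · intro a ha b hb hab
    rw [hmem] at ha hb hab
    revert ha hb hab
    revert a b
    decide
  · rw [hYeq, Set.ncard_coe_finset]
    decide
  · rintro ⟨V, hV2, c₁, c₂, hsub⟩
    have hlt : V < ⊤ := by
      rcases lt_or_eq_of_le (le_top : V ≤ ⊤) with h | h
      · exact h
      · exfalso
        haveI : Fact (Nat.Prime 5) := ⟨by norm_num⟩
        have h3 : Module.finrank (ZMod 5) (ZMod 5 × ZMod 5 × ZMod 5) = 3 := by
          rw [Module.finrank_prod, Module.finrank_prod, Module.finrank_self]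
        rw [← finrank_top (ZMod 5) (ZMod 5 × ZMod 5 × ZMod 5), ← h, hV2] at h3
        norm_num at h3
    haveI : Fact (Nat.Prime 5) := ⟨by norm_num⟩
    obtain ⟨f, hf0, hfV⟩ := V.exists_dual_map_eq_bot_of_lt_top hlt inferInstance
    have hker : ∀ w ∈ V, f w = 0 := by
      intro w hw
      have : f w ∈ V.map f := Submodule.mem_map_of_mem hw
      rw [hfV] at this
      simpa using this
    set a := f (1,0,0) with ha
    set b := f (0,1,0) with hb
    set c := f (0,0,1) with hc
    have hfv : ∀ v : ZMod 5 × ZMod 5 × ZMod 5,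
        f v = a * v.1 + b * v.2.1 + c * v.2.2 := by
      intro v
      have hv : v = v.1 • ((1,0,0) : ZMod 5 × ZMod 5 × ZMod 5) + v.2.1 • (0,1,0)
          + v.2.2 • (0,0,1) := by
        simp [Prod.ext_iff]
      conv_lhs => rw [hv]
      simp only [map_add, map_smul, smul_eq_mul]
      ring
    have habc : ¬(a = 0 ∧ b = 0 ∧ c = 0) := by
      rintro ⟨ha0, hb0, hc0⟩
      apply hf0
      apply LinearMap.ext
      intro v
      rw [hfv v, ha0, hb0, hc0]
      simp
    obtain ⟨v, hvY, hv1, hv2⟩ := key a b c habc (f c₁) (f c₂)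
    have hvment : v ∈ Y := (hmem v).2 hvY
    rcases hsub hvment with h | h
    · rw [Set.mem_vadd_set_iff_neg_vadd_mem] at h
      have := hker _ h
      simp only [vadd_eq_add, map_add, map_neg] at this
      apply hv1
      rw [← hfv v]
      linear_combination this
    · rw [Set.mem_vadd_set_iff_neg_vadd_mem] at h
      have := hker _ h
      simp only [vadd_eq_add, map_add, map_neg] at this
      apply hv2
      rw [← hfv v]
      linear_combination this
end

section
/- Let p ≡ 2 mod 3 be prime, m = (p+1)/3, I = {m, ..., 2m−1} ⊆ F_p, d ∈ {0, ..., m−1}, and J ⊆ {m−d, ..., 2m−1+d} ⊆ F_p with |J| ≥ d+1 such that J is contained in some translate of I. Then F_p \ (I + J) ⊆ {|J| − d, ..., d − |J|} (an interval in F_p around 0). -/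
open Pointwise

theorem stmt_11 (p : ℕ) [Fact p.Prime] (hp3 : p % 3 = 2)
    (m : ℕ) (hm : m = (p + 1) / 3)
    (I : Set (ZMod p)) (hI : I = {z | ∃ k : ℕ, m ≤ k ∧ k ≤ 2 * m - 1 ∧ z = (k : ZMod p)})
    (d : ℕ) (hd : d ≤ m - 1)
    (J : Set (ZMod p))
    (hJsub : J ⊆ {z | ∃ k : ℕ, m - d ≤ k ∧ k ≤ 2 * m - 1 + d ∧ z = (k : ZMod p)})
    (hJcard : d + 1 ≤ J.ncard)
    (hJtrans : ∃ t : ZMod p, J ⊆ t +ᵥ I) :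
    ∀ z : ZMod p, z ∉ I + J →
      ∃ k : ℕ, J.ncard - d ≤ k ∧ k ≤ p + d - J.ncard ∧ z = (k : ZMod p) := by
  intro z hz
  have hp : p.Prime := Fact.out
  have hp2 : 2 ≤ p := hp.two_le
  haveI : NeZero p := ⟨by omega⟩
  have hp1 : p + 1 = 3 * m := by omega
  have hm1 : 1 ≤ m := by omega
  set n := J.ncard with hn
  -- counting helper
  have hcount : ∀ (f : ZMod p → ℕ) (S : Finset ℕ), Function.Injective f →
      (∀ j ∈ J, f j ∈ S) → n ≤ S.card := by
    intro f S hf hmem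
    have h1 : J.ncard ≤ (↑S : Set ℕ).ncard :=
      Set.ncard_le_ncard_of_injOn f (fun a ha => hmem a ha) hf.injOn S.finite_toSet
    simpa using h1
  obtain ⟨t, ht⟩ := hJtrans
  set a := t.val with ha
  have hap : a < p := ZMod.val_lt t
  have htv : ∀ j ∈ J, ∃ v, m ≤ v ∧ v ≤ 2 * m - 1 ∧ j.val = (a + v) % p := by
    intro j hj
    obtain ⟨i, hi, hti⟩ := Set.mem_vadd_set.mp (ht hj)
    rw [hI] at hi
    obtain ⟨k, hk1, hk2, rfl⟩ := hi
    refine ⟨k, hk1, hk2, ?_⟩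
    rw [← hti, vadd_eq_add, ZMod.val_add, ZMod.val_cast_of_lt (by omega)]
  have hvalinj : Function.Injective (ZMod.val : ZMod p → ℕ) := ZMod.val_injective p
  have hsubinj : Function.Injective (fun j : ZMod p => (j - t).val) := by
    intro x y h
    have h2 : x - t = y - t := hvalinj h
    have h3 := congrArg (· + t) h2
    simpa using h3
  have hnm : n ≤ m := by
    have h1 := hcount (fun j => (j - t).val) (Finset.Icc m (2 * m - 1)) hsubinj ?_
    · rw [Nat.card_Icc] at h1; omega
    · intro j hj
      obtain ⟨i, hi, hti⟩ := Set.mem_vadd_set.mp (ht hj)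
      rw [hI] at hi
      obtain ⟨k, hk1, hk2, rfl⟩ := hi
      rw [vadd_eq_add] at hti
      show (j - t).val ∈ _
      rw [← hti]
      have he : t + (k : ZMod p) - t = (k : ZMod p) := by ring
      rw [he, ZMod.val_cast_of_lt (by omega)]
      exact Finset.mem_Icc.mpr ⟨hk1, hk2⟩
  have hA : ∀ j ∈ J, m - d ≤ j.val ∧ j.val ≤ 2 * m - 1 + d := by
    intro j hj
    obtain ⟨k, hk1, hk2, rfl⟩ := hJsub hj
    rw [ZMod.val_cast_of_lt (by omega)]
    exact ⟨hk1, hk2⟩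
  have hc : z.val < p := ZMod.val_lt z
  set c := z.val with hcv
  have hmain : n - d ≤ c ∧ c ≤ p + d - n := by
    by_contra hcon
    have hcc : c + d + 1 ≤ n ∨ p + d + 1 ≤ c + n := by omega
    set w := (c + m) % p with hwdef
    have hwf : (w = c + m ∧ c + m < p) ∨ (w = c + m - p ∧ p ≤ c + m) := by
      rcases Nat.lt_or_ge (c + m) p with h | h
      · exact Or.inl ⟨Nat.mod_eq_of_lt h, h⟩
      · refine Or.inr ⟨?_, h⟩
        rw [hwdef, Nat.mod_eq_sub_mod h, Nat.mod_eq_of_lt (by omega)]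
    have hkey : ((c : ℕ) : ZMod p) + ((m : ℕ) : ZMod p) = ((w : ℕ) : ZMod p) := by
      have hq : p * ((c + m) / p) + w = c + m := by rw [hwdef]; exact Nat.div_add_mod _ _
      have h2 := congrArg (fun x : ℕ => (x : ZMod p)) hq
      push_cast at h2
      rw [ZMod.natCast_self, zero_mul, zero_add] at h2
      exact h2.symm
    have hwin : ∀ j ∈ J, j.val < w ∨ w + m ≤ j.val := by
      intro j hj
      by_contra hcon2
      have h1 : w ≤ j.val ∧ j.val + 1 ≤ w + m := by omega
      set e := j.val - w with he
      have hjv : j.val = w + e := by omega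
      have he1 : e ≤ m - 1 := by omega
      have hiI : ((p - (m + e) : ℕ) : ZMod p) ∈ I := by
        rw [hI]; exact ⟨p - (m + e), by omega, by omega, rfl⟩
      have hij : ((p - (m + e) : ℕ) : ZMod p) + j = z := by
        have hj0 : j = ((w + e : ℕ) : ZMod p) := by
          rw [← hjv, ZMod.natCast_val, ZMod.cast_id]
        have hz0 : z = ((c : ℕ) : ZMod p) := by
          rw [hcv, ZMod.natCast_val, ZMod.cast_id]
        have hle : m + e ≤ p := by omega
        rw [hj0, hz0]
        have hps : ((p - (m + e) : ℕ) : ZMod p) = -(((m + e : ℕ) : ℕ) : ZMod p) := by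
          rw [Nat.cast_sub hle, ZMod.natCast_self]; ring
        rw [hps]
        push_cast
        linear_combination -hkey
      exact hz (hij ▸ Set.add_mem_add hiI hj)
    have hwb1 : m + d + 1 ≤ w + n := by omega
    have hwb2 : w + d + 1 ≤ m + n := by omega
    have hfin : ∀ b : ℕ, (∀ j ∈ J, b ≤ j.val ∧ j.val ≤ b + m - 1) → False := by
      intro b hb
      by_cases hcase : b ≤ w
      · have h1 := hcount ZMod.val (Finset.Icc (m - d) (w - 1)) hvalinj ?_
        · rw [Nat.card_Icc] at h1; omega
        · intro j hj
          have h2 := hwin j hj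
          have h3 := hb j hj
          have h4 := hA j hj
          simp only [Finset.mem_Icc]
          omega
      · have h1 := hcount ZMod.val (Finset.Icc (w + m) (2 * m - 1 + d)) hvalinj ?_
        · rw [Nat.card_Icc] at h1; omega
        · intro j hj
          have h2 := hwin j hj
          have h3 := hb j hj
          have h4 := hA j hj
          simp only [Finset.mem_Icc]
          omega
    by_cases hA1 : a + 2 * m ≤ p
    · apply hfin (a + m)
      intro j hj
      obtain ⟨v, hv1, hv2, hv3⟩ := htv j hj
      rw [Nat.mod_eq_of_lt (by omega)] at hv3
      omega
    · by_cases hA2 : p ≤ a + m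
      · apply hfin (a + m - p)
        intro j hj
        obtain ⟨v, hv1, hv2, hv3⟩ := htv j hj
        rw [Nat.mod_eq_sub_mod (by omega), Nat.mod_eq_of_lt (by omega)] at hv3
        omega
      · have h1 := hcount ZMod.val
          ((Finset.Icc (m - d) (a + 2 * m - 1 - p)) ∪ (Finset.Icc (a + m) (2 * m - 1 + d)))
          hvalinj ?_
        · have h2 := Finset.card_union_le (Finset.Icc (m - d) (a + 2 * m - 1 - p))
            (Finset.Icc (a + m) (2 * m - 1 + d))
          rw [Nat.card_Icc, Nat.card_Icc] at h2
          omega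
        · intro j hj
          obtain ⟨v, hv1, hv2, hv3⟩ := htv j hj
          have h4 := hA j hj
          simp only [Finset.mem_union, Finset.mem_Icc]
          rcases Nat.lt_or_ge (a + v) p with h | h
          · rw [Nat.mod_eq_of_lt h] at hv3
            right; omega
          · rw [Nat.mod_eq_sub_mod h, Nat.mod_eq_of_lt (by omega)] at hv3
            left; omega
  exact ⟨c, hmain.1, hmain.2, by rw [hcv, ZMod.natCast_val, ZMod.cast_id]⟩
end

section
/- Let p ≡ 2 mod 3 be prime and A ⊆ F_p with |A| = m = (p+1)/3 and A sum-free. Then A is an arithmetic progression in F_p of length m. -/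
open Finset
open scoped Pointwise Classical

namespace Stmt12

variable {p : ℕ} [hFp : Fact p.Prime]

/-- `U` is an arithmetic progression with difference `d` (of length `U.card`). -/
def IsAPF (U : Finset (ZMod p)) (d : ZMod p) : Prop :=
  ∃ a : ZMod p, U = (Finset.range U.card).image (fun k : ℕ => a + (k : ZMod p) * d)

lemma card_zmod : Fintype.card (ZMod p) = p := by
  haveI : NeZero p := ⟨hFp.out.ne_zero⟩
  exact ZMod.card p

lemma cd_le {s t B : Finset (ZMod p)} (hs : s.Nonempty) (ht : t.Nonempty)
    (hsub : s + t ⊆ B) (hB : B.card < p) : s.card + t.card ≤ B.card + 1 := by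
  have h1 := ZMod.cauchy_davenport hFp.out hs ht
  have h2 : (s + t).card ≤ B.card := Finset.card_le_card hsub
  have hs1 : 1 ≤ s.card := Finset.card_pos.2 hs
  have ht1 : 1 ≤ t.card := Finset.card_pos.2 ht
  rcases min_cases p (s.card + t.card - 1) with ⟨h, _⟩ | ⟨h, _⟩ <;> omega



lemma natCast_inj_of_lt {k l : ℕ} (hk : k < p) (hl : l < p)
    (h : (k : ZMod p) = (l : ZMod p)) : k = l := by
  haveI : NeZero p := ⟨hFp.out.ne_zero⟩
  have := (ZMod.natCast_eq_natCast_iff' k l p).1 h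
  rwa [Nat.mod_eq_of_lt hk, Nat.mod_eq_of_lt hl] at this

lemma ap_inj {a d : ZMod p} (hd : d ≠ 0) {l : ℕ} (hl : l ≤ p) :
    ∀ k₁ ∈ Finset.range l, ∀ k₂ ∈ Finset.range l,
      a + (k₁ : ZMod p) * d = a + (k₂ : ZMod p) * d → k₁ = k₂ := by
  intro k₁ h₁ k₂ h₂ h
  have h' : (k₁ : ZMod p) = (k₂ : ZMod p) := by
    exact mul_right_cancel₀ hd (add_left_cancel h)
  exact natCast_inj_of_lt (lt_of_lt_of_le (mem_range.1 h₁) hl)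
    (lt_of_lt_of_le (mem_range.1 h₂) hl) h'

lemma card_ap_image {a d : ZMod p} (hd : d ≠ 0) {l : ℕ} (hl : l ≤ p) :
    ((Finset.range l).image (fun k : ℕ => a + (k : ZMod p) * d)).card = l := by
  rw [Finset.card_image_of_injOn, Finset.card_range]
  intro k₁ h₁ k₂ h₂ h
  exact ap_inj hd hl k₁ (by simpa using h₁) k₂ (by simpa using h₂) h

lemma orbit_exists (a z d : ZMod p) (hd : d ≠ 0) : ∃ k < p, z = a + (k : ZMod p) * d := by
  haveI : NeZero p := ⟨hFp.out.ne_zero⟩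
  refine ⟨((z - a) * d⁻¹).val, ZMod.val_lt _, ?_⟩
  have h1 : (((((z - a) * d⁻¹).val : ℕ)) : ZMod p) = (z - a) * d⁻¹ :=
    ZMod.natCast_rightInverse _
  rw [h1]
  field_simp
  ring

/-- An invariant nonempty set is everything. -/
lemma eq_univ_of_invariant {U : Finset (ZMod p)} {d : ZMod p} (hd : d ≠ 0)
    (hne : U.Nonempty) (hinv : ∀ z ∈ U, z + d ∈ U) : U = Finset.univ := by
  obtain ⟨u₀, hu₀⟩ := hne
  have key : ∀ k : ℕ, u₀ + (k : ZMod p) * d ∈ U := by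
    intro k
    induction k with
    | zero => simpa using hu₀
    | succ n ih =>
        have := hinv _ ih
        have e : u₀ + ((n+1 : ℕ) : ZMod p) * d = u₀ + (n : ZMod p) * d + d := by
          push_cast; ring
        rwa [e]
  apply Finset.eq_univ_of_forall
  intro z
  obtain ⟨k, _, hk⟩ := orbit_exists u₀ z d hd
  rw [hk]; exact key k

lemma run_lemma {U : Finset (ZMod p)} {d : ZMod p} (hd : d ≠ 0)
    (hUp : U.card < p)
    (hstart : (U.filter (fun u => u - d ∉ U)).card = 1) : IsAPF U d := by
  haveI : NeZero p := ⟨hFp.out.ne_zero⟩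
  obtain ⟨a, ha⟩ := Finset.card_eq_one.1 hstart
  have haU : a ∈ U ∧ a - d ∉ U := by
    have : a ∈ U.filter (fun u => u - d ∉ U) := ha ▸ Finset.mem_singleton_self a
    simpa using this
  have huniq : ∀ u ∈ U, u - d ∉ U → u = a := by
    intro u hu hud
    have : u ∈ U.filter (fun u => u - d ∉ U) := by simpa using ⟨hu, hud⟩
    rw [ha] at this; simpa using this
  -- the set of k < p with a + k d ∉ U is nonempty
  have hW : ∃ k ∈ Finset.range p, a + (k : ZMod p) * d ∉ U := by
    by_contra hcon
    push_neg at hcon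
    have : U = Finset.univ := by
      apply Finset.eq_univ_of_forall
      intro z
      obtain ⟨k, hk, hz⟩ := orbit_exists a z d hd
      rw [hz]; exact hcon k (Finset.mem_range.2 hk)
    rw [this, Finset.card_univ, ZMod.card] at hUp
    omega
  set W : Finset ℕ := (Finset.range p).filter (fun k : ℕ => a + (k : ZMod p) * d ∉ U) with hWdef
  have hWne : W.Nonempty := by
    obtain ⟨k, hk, h⟩ := hW
    exact ⟨k, by simp [hWdef, Finset.mem_range.1 hk, h]⟩
  set t := W.min' hWne with htdef
  have htW : t ∈ W := Finset.min'_mem _ _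
  have htp : t < p := by
    have := (Finset.mem_filter.1 htW).1; exact Finset.mem_range.1 this
  have htnotin : a + (t : ZMod p) * d ∉ U := (Finset.mem_filter.1 htW).2
  have htpos : 0 < t := by
    rcases Nat.eq_zero_or_pos t with h | h
    · exfalso; apply htnotin; rw [h]; simpa using haU.1
    · exact h
  have hlt : ∀ k < t, a + (k : ZMod p) * d ∈ U := by
    intro k hk
    by_contra h
    have : k ∈ W := by
      simp only [hWdef, Finset.mem_filter, Finset.mem_range]
      exact ⟨lt_trans hk htp, h⟩
    exact absurd (Finset.min'_le _ _ this) (by omega)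
  -- for t ≤ k < p : a + k d ∉ U
  have hge : ∀ k, t ≤ k → k < p → a + (k : ZMod p) * d ∉ U := by
    intro k hk
    induction k, hk using Nat.le_induction with
    | base => intro _; exact htnotin
    | succ n hn ih =>
        intro hnp hmem
        -- a + (n+1) d ∈ U; it's ≠ a, so its predecessor is in U
        have hne_a : a + ((n+1 : ℕ) : ZMod p) * d ≠ a := by
          intro h
          have h2 : ((n+1 : ℕ) : ZMod p) * d = 0 := by
            have := congrArg (fun z => z - a) h
            simpa [add_sub_cancel_left] using this
          rcases mul_eq_zero.1 h2 with h3 | h3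
          · have : (n+1) = 0 := natCast_inj_of_lt hnp (hFp.out.pos) (by simpa using h3)
            omega
          · exact hd h3
        have hpred : a + ((n+1 : ℕ) : ZMod p) * d - d ∈ U := by
          by_contra h
          exact hne_a (huniq _ hmem h)
        have : a + ((n+1 : ℕ) : ZMod p) * d - d = a + (n : ZMod p) * d := by
          push_cast; ring
        rw [this] at hpred
        exact ih (by omega) hpred
  have hUeq : U = (Finset.range t).image (fun k : ℕ => a + (k : ZMod p) * d) := by
    apply Finset.Subset.antisymm
    · intro z hz
      obtain ⟨k, hk, hzk⟩ := orbit_exists a z d hd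
      have hkt : k < t := by
        by_contra h
        exact hge k (by omega) hk (hzk ▸ hz)
      exact Finset.mem_image.2 ⟨k, Finset.mem_range.2 hkt, hzk.symm⟩
    · intro z hz
      obtain ⟨k, hk, hzk⟩ := Finset.mem_image.1 hz
      rw [← hzk]; exact hlt k (Finset.mem_range.1 hk)
  have hcard : U.card = t := by
    rw [hUeq]; exact card_ap_image hd (le_of_lt htp)
  exact ⟨a, by rw [hcard]; exact hUeq⟩





/-- Cauchy-Davenport in convenient form. -/

lemma ap_transfer {U V : Finset (ZMod p)} {d : ZMod p} (hd : d ≠ 0)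
    (hU2 : 2 ≤ U.card) (hV2 : 2 ≤ V.card)
    (hVAP : IsAPF V d)
    (hcrit : (U + V).card + 1 = U.card + V.card)
    (hle : (U + V).card + 1 ≤ p) : IsAPF U d := by
  haveI : NeZero p := ⟨hFp.out.ne_zero⟩
  obtain ⟨b, hV⟩ := hVAP
  set v := V.card with hv
  have hvp : v ≤ p := by
    calc v ≤ Fintype.card (ZMod p) := Finset.card_le_univ V
    _ = p := card_zmod
  set V' : Finset (ZMod p) :=
    (Finset.range (v - 1)).image (fun k : ℕ => b + (k : ZMod p) * d) with hV'
  have hV'card : V'.card = v - 1 := card_ap_image hd (by omega)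
  have hV'ne : V'.Nonempty := by
    rw [← Finset.card_pos, hV'card]; omega
  set A₂ : Finset (ZMod p) := U ∪ U.image (fun z => z + d) with hA₂
  have hA₂ne : A₂.Nonempty := by
    apply Finset.Nonempty.mono Finset.subset_union_left
    exact Finset.card_pos.1 (by omega)
  have hsub : A₂ + V' ⊆ U + V := by
    intro z hz
    obtain ⟨u', hu', w, hw, rfl⟩ := Finset.mem_add.1 hz
    obtain ⟨k, hk, rfl⟩ := Finset.mem_image.1 hw
    have hk' := Finset.mem_range.1 hk
    rcases Finset.mem_union.1 hu' with h | h
    · apply Finset.add_mem_add h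
      rw [hV]
      exact Finset.mem_image.2 ⟨k, Finset.mem_range.2 (by omega), rfl⟩
    · obtain ⟨w', hw', rfl⟩ := Finset.mem_image.1 h
      have : w' + d + (b + (k : ZMod p) * d) = w' + (b + ((k+1 : ℕ) : ZMod p) * d) := by
        push_cast; ring
      rw [this]
      apply Finset.add_mem_add hw'
      rw [hV]
      exact Finset.mem_image.2 ⟨k + 1, Finset.mem_range.2 (by omega), rfl⟩
  have hcd : A₂.card + V'.card ≤ (U + V).card + 1 :=
    cd_le hA₂ne hV'ne hsub (by omega)
  have hA₂le : A₂.card ≤ U.card + 1 := by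
    rw [hV'card] at hcd; omega
  have hA₂ge : U.card + 1 ≤ A₂.card := by
    by_contra h
    push_neg at h
    have hUA : U ⊆ A₂ := Finset.subset_union_left
    have hAU : U = A₂ := Finset.eq_of_subset_of_card_le hUA (by omega)
    have hinv : ∀ z ∈ U, z + d ∈ U := by
      intro z hz
      have : z + d ∈ A₂ := Finset.mem_union_right _ (Finset.mem_image_of_mem _ hz)
      rwa [← hAU] at this
    have := eq_univ_of_invariant hd (Finset.card_pos.1 (by omega)) hinv
    have : U.card = p := by rw [this, Finset.card_univ, card_zmod]
    omega
  have hA₂card : A₂.card = U.card + 1 := le_antisymm hA₂le hA₂ge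
  -- intersection has card U.card - 1
  have hinter : U ∩ U.image (fun z => z + d) = U.filter (fun z => z - d ∈ U) := by
    ext z
    simp only [Finset.mem_inter, Finset.mem_image, Finset.mem_filter]
    constructor
    · rintro ⟨hz, w, hw, rfl⟩
      exact ⟨hz, by simpa using hw⟩
    · rintro ⟨hz, hzd⟩
      exact ⟨hz, z - d, hzd, by ring⟩
  have himcard : (U.image (fun z => z + d)).card = U.card :=
    Finset.card_image_of_injective _ (add_left_injective d)
  have hunion := Finset.card_union_add_card_inter U (U.image (fun z => z + d))
  rw [← hA₂, hA₂card, himcard, hinter] at hunion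
  have hsplit := Finset.card_filter_add_card_filter_not
    (s := U) (p := fun z => z - d ∈ U)
  have hstart : (U.filter (fun u => u - d ∉ U)).card = 1 := by omega
  exact run_lemma hd (by omega) hstart

lemma dual_crit {U V : Finset (ZMod p)}
    (hU : U.Nonempty) (hV : V.Nonempty)
    (hcrit : (U + V).card + 1 = U.card + V.card)
    (hle : (U + V).card + 2 ≤ p) :
    (U + V)ᶜ + U.image (fun x => -x) = Vᶜ ∧
      ((U + V)ᶜ).card + U.card = (Vᶜ).card + 1 := by
  haveI : NeZero p := ⟨hFp.out.ne_zero⟩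
  set C := (U + V)ᶜ with hC
  have hCcard : C.card + (U + V).card = p := by
    rw [hC, Finset.card_compl, card_zmod]
    have : (U + V).card ≤ p := by omega
    omega
  have hVccard : (Vᶜ).card + V.card = p := by
    rw [Finset.card_compl, card_zmod]
    have : V.card ≤ Fintype.card (ZMod p) := Finset.card_le_univ V
    rw [card_zmod] at this
    omega
  have hCne : C.Nonempty := by rw [← Finset.card_pos]; omega
  have hnegU : (U.image (fun x => -x)).card = U.card :=
    Finset.card_image_of_injective _ neg_injective
  have hnegUne : (U.image (fun x => -x)).Nonempty := hU.image _
  have hsub : C + U.image (fun x => -x) ⊆ Vᶜ := by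
    intro z hz
    obtain ⟨c, hc, w, hw, rfl⟩ := Finset.mem_add.1 hz
    obtain ⟨u, hu, rfl⟩ := Finset.mem_image.1 hw
    rw [Finset.mem_compl]
    intro hmem
    have : u + (c + -u) ∈ U + V := Finset.add_mem_add hu hmem
    have h2 : u + (c + -u) = c := by ring
    rw [h2] at this
    exact (Finset.mem_compl.1 hc) this
  have hVcp : (Vᶜ).card < p := by
    have h1 : 1 ≤ V.card := Finset.card_pos.2 hV
    omega
  have hcd : C.card + U.card ≤ (Vᶜ).card + 1 := by
    have := cd_le hCne hnegUne hsub hVcp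
    omega
  have hge : (Vᶜ).card + 1 ≤ C.card + U.card := by
    have h1 : 1 ≤ V.card := Finset.card_pos.2 hV
    omega
  have heq : C.card + U.card = (Vᶜ).card + 1 := le_antisymm hcd hge
  constructor
  · apply Finset.eq_of_subset_of_card_le hsub
    have h1 := ZMod.cauchy_davenport hFp.out hCne hnegUne
    have hC1 : 1 ≤ C.card := Finset.card_pos.2 hCne
    rcases min_cases p (C.card + (U.image (fun x => -x)).card - 1) with ⟨h, _⟩ | ⟨h, _⟩ <;>
      omega
  · exact heq



/-- intersection card via the shift filter -/
lemma inter_card_shift (X : Finset (ZMod p)) (e : ZMod p) :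
    (X ∩ X.image (fun z => z + e)).card = (X.filter (fun a => a + e ∈ X)).card := by
  have h1 : X ∩ X.image (fun z => z + e) = (X.filter (fun a => a + e ∈ X)).image (fun z => z + e) := by
    ext z
    simp only [Finset.mem_inter, Finset.mem_image, Finset.mem_filter]
    constructor
    · rintro ⟨hz, a, ha, rfl⟩
      exact ⟨a, ⟨ha, hz⟩, rfl⟩
    · rintro ⟨a, ⟨ha, ha'⟩, rfl⟩
      exact ⟨ha', a, ha, rfl⟩
  rw [h1, Finset.card_image_of_injective _ (add_left_injective e)]

/-- The key transform equality: for a critical pair with `|Y| ≤ |X|`, and any `e`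
which is a difference of `Y`, `|X| + fY e = |Y| + fX e`, and the transformed pair
is critical with the same sumset. -/
lemma transform_eq {X Y : Finset (ZMod p)} {e : ZMod p}
    (hY2 : 1 ≤ Y.card) (hnx : Y.card ≤ X.card)
    (hcrit : (X + Y).card + 1 = X.card + Y.card)
    (hle : (X + Y).card + 2 ≤ p)
    (hfY : 1 ≤ (Y.filter (fun y => y + e ∈ Y)).card) :
    X.card + (Y.filter (fun y => y + e ∈ Y)).card
      = Y.card + (X.filter (fun a => a + e ∈ X)).card ∧
    (X ∪ X.image (fun z => z + e)) + (Y.filter (fun y => y + e ∈ Y)) = X + Y ∧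
    ((X ∪ X.image (fun z => z + e)) + (Y.filter (fun y => y + e ∈ Y))).card + 1
      = (X ∪ X.image (fun z => z + e)).card + (Y.filter (fun y => y + e ∈ Y)).card := by
  have hXne : X.Nonempty := Finset.card_pos.1 (by omega)
  have hYne : Y.Nonempty := Finset.card_pos.1 (by omega)
  set Xe := X ∪ X.image (fun z => z + e) with hXe
  set Yf := Y.filter (fun y => y + e ∈ Y) with hYf
  have hYfne : Yf.Nonempty := Finset.card_pos.1 (by omega)
  have hXene : Xe.Nonempty := hXne.mono Finset.subset_union_left
  have himX : (X.image (fun z => z + e)).card = X.card :=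
    Finset.card_image_of_injective _ (add_left_injective e)
  have hXecard : Xe.card + (X.filter (fun a => a + e ∈ X)).card = 2 * X.card := by
    have := Finset.card_union_add_card_inter X (X.image (fun z => z + e))
    rw [inter_card_shift, ← hXe] at this
    omega
  have hsub1 : Xe + Yf ⊆ X + Y := by
    intro z hz
    obtain ⟨u, hu, y, hy, rfl⟩ := Finset.mem_add.1 hz
    have hyY : y ∈ Y := (Finset.mem_filter.1 hy).1
    have hyeY : y + e ∈ Y := (Finset.mem_filter.1 hy).2
    rcases Finset.mem_union.1 hu with h | h
    · exact Finset.add_mem_add h hyY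
    · obtain ⟨w, hw, rfl⟩ := Finset.mem_image.1 h
      have : w + e + y = w + (y + e) := by ring
      rw [this]
      exact Finset.add_mem_add hw hyeY
  have hcd1 : Xe.card + Yf.card ≤ (X + Y).card + 1 :=
    cd_le hXene hYfne hsub1 (by omega)
  -- so fX e ≥ 1
  have hfX : 1 ≤ (X.filter (fun a => a + e ∈ X)).card := by omega
  have hXfne : (X.filter (fun a => a + e ∈ X)).Nonempty := Finset.card_pos.1 hfX
  -- mirror
  set Ye := Y ∪ Y.image (fun z => z + e) with hYe
  have hYecard : Ye.card + Yf.card = 2 * Y.card := by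
    have := Finset.card_union_add_card_inter Y (Y.image (fun z => z + e))
    rw [inter_card_shift, ← hYe, ← hYf] at this
    have himY : (Y.image (fun z => z + e)).card = Y.card :=
      Finset.card_image_of_injective _ (add_left_injective e)
    omega
  have hsub2 : Ye + (X.filter (fun a => a + e ∈ X)) ⊆ X + Y := by
    intro z hz
    obtain ⟨u, hu, a, ha, rfl⟩ := Finset.mem_add.1 hz
    have haX : a ∈ X := (Finset.mem_filter.1 ha).1
    have haeX : a + e ∈ X := (Finset.mem_filter.1 ha).2
    rcases Finset.mem_union.1 hu with h | h
    · have : u + a = a + u := by ring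
      rw [this]; exact Finset.add_mem_add haX h
    · obtain ⟨w, hw, rfl⟩ := Finset.mem_image.1 h
      have : w + e + a = (a + e) + w := by ring
      rw [this]; exact Finset.add_mem_add haeX hw
  have hYene : Ye.Nonempty := hYne.mono Finset.subset_union_left
  have hcd2 : Ye.card + (X.filter (fun a => a + e ∈ X)).card ≤ (X + Y).card + 1 :=
    cd_le hYene hXfne hsub2 (by omega)
  have heq : X.card + Yf.card = Y.card + (X.filter (fun a => a + e ∈ X)).card := by omega
  refine ⟨heq, ?_, ?_⟩
  · apply Finset.eq_of_subset_of_card_le hsub1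
    have h1 := ZMod.cauchy_davenport hFp.out hXene hYfne
    rcases min_cases p (Xe.card + Yf.card - 1) with ⟨h, _⟩ | ⟨h, _⟩ <;> omega
  · have h1 := ZMod.cauchy_davenport hFp.out hXene hYfne
    have h2 : (Xe + Yf).card ≤ (X + Y).card := Finset.card_le_card hsub1
    rcases min_cases p (Xe.card + Yf.card - 1) with ⟨h, _⟩ | ⟨h, _⟩ <;> omega

/-- Dyson transform: criticality is automatic. -/
lemma dyson_crit {X Y : Finset (ZMod p)} {e : ZMod p}
    (hXne : X.Nonempty)
    (hcrit : (X + Y).card + 1 = X.card + Y.card)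
    (hle : (X + Y).card + 2 ≤ p)
    (hw : 1 ≤ (Y.filter (fun y => e + y ∈ X)).card) :
    (X ∪ Y.image (fun y => e + y)) + (Y.filter (fun y => e + y ∈ X)) = X + Y ∧
    (X ∪ Y.image (fun y => e + y)).card + (Y.filter (fun y => e + y ∈ X)).card
      = X.card + Y.card := by
  set XD := X ∪ Y.image (fun y => e + y) with hXD
  set YD := Y.filter (fun y => e + y ∈ X) with hYD
  have hYDne : YD.Nonempty := Finset.card_pos.1 hw
  have hXDne : XD.Nonempty := hXne.mono Finset.subset_union_left
  have hinter : (X ∩ Y.image (fun y => e + y)).card = YD.card := by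
    have h1 : X ∩ Y.image (fun y => e + y) = YD.image (fun y => e + y) := by
      ext z
      simp only [Finset.mem_inter, Finset.mem_image, hYD, Finset.mem_filter]
      constructor
      · rintro ⟨hz, y, hy, rfl⟩
        exact ⟨y, ⟨hy, hz⟩, rfl⟩
      · rintro ⟨y, ⟨hy, hy'⟩, rfl⟩
        exact ⟨hy', y, hy, rfl⟩
    rw [h1, Finset.card_image_of_injective _ (add_right_injective e)]
  have himY : (Y.image (fun y => e + y)).card = Y.card :=
    Finset.card_image_of_injective _ (add_right_injective e)
  have hcards : XD.card + YD.card = X.card + Y.card := by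
    have := Finset.card_union_add_card_inter X (Y.image (fun y => e + y))
    rw [hinter, ← hXD] at this
    omega
  have hsub : XD + YD ⊆ X + Y := by
    intro z hz
    obtain ⟨u, hu, y, hy, rfl⟩ := Finset.mem_add.1 hz
    have hyY : y ∈ Y := (Finset.mem_filter.1 hy).1
    have hyX : e + y ∈ X := (Finset.mem_filter.1 hy).2
    rcases Finset.mem_union.1 hu with h | h
    · exact Finset.add_mem_add h hyY
    · obtain ⟨w, hw, rfl⟩ := Finset.mem_image.1 h
      have : e + w + y = (e + y) + w := by ring
      rw [this]
      exact Finset.add_mem_add hyX hw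
  constructor
  · apply Finset.eq_of_subset_of_card_le hsub
    have h1 := ZMod.cauchy_davenport hFp.out hXDne hYDne
    rcases min_cases p (XD.card + YD.card - 1) with ⟨h, _⟩ | ⟨h, _⟩ <;> omega
  · exact hcards



noncomputable def om' (X Y : Finset (ZMod p)) (e : ZMod p) : ℕ :=
  (Y.filter (fun y => e + y ∈ X)).card

lemma filter_univ_card (X : Finset (ZMod p)) (y : ZMod p) :
    ((Finset.univ : Finset (ZMod p)).filter (fun e => e + y ∈ X)).card = X.card := by
  have h1 : (Finset.univ : Finset (ZMod p)).filter (fun e => e + y ∈ X)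
      = X.image (fun a => a + (-y)) := by
    ext e
    simp only [Finset.mem_filter, Finset.mem_univ, true_and, Finset.mem_image]
    constructor
    · intro h
      exact ⟨e + y, h, by ring⟩
    · rintro ⟨a, ha, rfl⟩
      have : a + -y + y = a := by ring
      rwa [this]
  rw [h1, Finset.card_image_of_injective _ (add_left_injective (-y))]

lemma filter_univ_card2 (X : Finset (ZMod p)) (y₁ y₂ : ZMod p) (h : y₁ ≠ y₂) :
    ((Finset.univ : Finset (ZMod p)).filter (fun e => e + y₁ ∈ X ∧ e + y₂ ∈ X)).card
      = (X.filter (fun a => a + (y₁ - y₂) ∈ X)).card := by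
  have h1 : (Finset.univ : Finset (ZMod p)).filter (fun e => e + y₁ ∈ X ∧ e + y₂ ∈ X)
      = (X.filter (fun a => a + (y₁ - y₂) ∈ X)).image (fun a => a + (-y₂)) := by
    ext e
    simp only [Finset.mem_filter, Finset.mem_univ, true_and, Finset.mem_image]
    constructor
    · rintro ⟨h1, h2⟩
      refine ⟨e + y₂, ⟨h2, ?_⟩, by ring⟩
      have : e + y₂ + (y₁ - y₂) = e + y₁ := by ring
      rwa [this]
    · rintro ⟨a, ⟨ha, ha'⟩, rfl⟩
      constructor
      · have : a + -y₂ + y₁ = a + (y₁ - y₂) := by ring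
        rwa [this]
      · have : a + -y₂ + y₂ = a := by ring
        rwa [this]
  rw [h1, Finset.card_image_of_injective _ (add_left_injective (-y₂))]

lemma moment1 (X Y : Finset (ZMod p)) :
    ∑ e : ZMod p, om' X Y e = Y.card * X.card := by
  unfold om'
  have h1 : ∀ e : ZMod p, (Y.filter (fun y => e + y ∈ X)).card
      = ∑ y ∈ Y, if e + y ∈ X then 1 else 0 := fun e => Finset.card_filter _ _
  simp only [h1]
  rw [Finset.sum_comm]
  have h2 : ∀ y ∈ Y, (∑ e : ZMod p, if e + y ∈ X then 1 else 0) = X.card := by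
    intro y _
    rw [← Finset.card_filter]
    exact filter_univ_card X y
  rw [Finset.sum_congr rfl h2, Finset.sum_const, smul_eq_mul]

lemma moment2 (X Y : Finset (ZMod p)) (k : ℕ)
    (hk : ∀ y₁ ∈ Y, ∀ y₂ ∈ Y, y₁ ≠ y₂ →
      (X.filter (fun a => a + (y₁ - y₂) ∈ X)).card = k) :
    ∑ e : ZMod p, om' X Y e * om' X Y e
      = Y.card * X.card + Y.card * ((Y.card - 1) * k) := by
  unfold om'
  have h1 : ∀ e : ZMod p, (Y.filter (fun y => e + y ∈ X)).card
      = ∑ y ∈ Y, if e + y ∈ X then 1 else 0 := fun e => Finset.card_filter _ _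
  simp only [h1]
  have h2 : ∀ e : ZMod p,
      (∑ y ∈ Y, if e + y ∈ X then 1 else 0) * (∑ y ∈ Y, if e + y ∈ X then 1 else 0)
      = ∑ y₁ ∈ Y, ∑ y₂ ∈ Y, (if e + y₁ ∈ X ∧ e + y₂ ∈ X then 1 else 0) := by
    intro e
    rw [Finset.sum_mul_sum]
    apply Finset.sum_congr rfl
    intro y₁ _
    apply Finset.sum_congr rfl
    intro y₂ _
    by_cases hA : e + y₁ ∈ X <;> by_cases hB : e + y₂ ∈ X <;> simp [hA, hB]
  simp only [h2]
  rw [Finset.sum_comm]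
  have h3 : ∀ y₁ ∈ Y,
      (∑ e : ZMod p, ∑ y₂ ∈ Y, if e + y₁ ∈ X ∧ e + y₂ ∈ X then 1 else 0)
      = X.card + (Y.card - 1) * k := by
    intro y₁ hy₁
    rw [Finset.sum_comm]
    have h4 : ∀ y₂ ∈ Y, (∑ e : ZMod p, if e + y₁ ∈ X ∧ e + y₂ ∈ X then 1 else 0)
        = if y₂ = y₁ then X.card else k := by
      intro y₂ hy₂
      rw [← Finset.card_filter]
      by_cases hyy : y₂ = y₁
      · subst hyy
        simp only [and_self, if_true]
        exact filter_univ_card X y₂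
      · rw [if_neg hyy, filter_univ_card2 X y₁ y₂ (fun h => hyy h.symm)]
        exact hk y₁ hy₁ y₂ hy₂ (fun h => hyy h.symm)
    rw [Finset.sum_congr rfl h4]
    rw [← Finset.add_sum_erase Y _ hy₁, if_pos rfl]
    congr 1
    have h5 : ∀ y₂ ∈ Y.erase y₁, (if y₂ = y₁ then X.card else k) = k := by
      intro y₂ hy₂
      rw [if_neg (Finset.ne_of_mem_erase hy₂)]
    rw [Finset.sum_congr rfl h5, Finset.sum_const, smul_eq_mul,
      Finset.card_erase_of_mem hy₁]
  rw [Finset.sum_congr rfl h3, Finset.sum_const, smul_eq_mul, Nat.mul_add]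


/-- if `om` only takes values 0, 1, n then the level set at `n` has size `k`. -/
lemma sidon_key' {X Y : Finset (ZMod p)} {k : ℕ}
    (hY3 : 3 ≤ Y.card)
    (hk : ∀ y₁ ∈ Y, ∀ y₂ ∈ Y, y₁ ≠ y₂ →
      (X.filter (fun a => a + (y₁ - y₂) ∈ X)).card = k)
    (hval : ∀ e : ZMod p, om' X Y e = 0 ∨ om' X Y e = 1 ∨ om' X Y e = Y.card) :
    ((Finset.univ : Finset (ZMod p)).filter (fun e => om' X Y e = Y.card)).card = k := by
  set n := Y.card with hn
  have hptwise : ∀ e : ZMod p,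
      om' X Y e * om' X Y e = om' X Y e + (n * (n-1)) * (if om' X Y e = n then 1 else 0) := by
    intro e
    rcases hval e with h | h | h
    · rw [h]
      have : ¬ ((0:ℕ) = n) := by omega
      simp [this]
    · rw [h]
      have : ¬ ((1:ℕ) = n) := by omega
      simp [this]
    · rw [h, if_pos rfl]
      have h2 : n * (n-1) + n = n * n := by
        cases n with
        | zero => simp
        | succ m =>
            have : m + 1 - 1 = m := rfl
            rw [this]
            ring_nf
      omega
  have hsum : ∑ e : ZMod p, om' X Y e * om' X Y e
      = (∑ e : ZMod p, om' X Y e)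
        + (n * (n-1)) * ((Finset.univ : Finset (ZMod p)).filter
            (fun e => om' X Y e = n)).card := by
    rw [Finset.sum_congr rfl (fun e _ => hptwise e), Finset.sum_add_distrib,
      ← Finset.mul_sum]
    congr 1
    rw [← Finset.card_filter]
  rw [moment1, moment2 X Y k hk] at hsum
  have hpos : 0 < n * (n - 1) := by
    have : 3 * 2 ≤ n * (n-1) := Nat.mul_le_mul (by omega) (by omega)
    omega
  have : n * ((n-1) * k) = (n * (n-1)) * k := by ring
  rw [this] at hsum
  have := Nat.eq_of_mul_eq_mul_left hpos (by omega :
    (n * (n-1)) * k = (n * (n-1)) * ((Finset.univ : Finset (ZMod p)).filter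
      (fun e => om' X Y e = n)).card)
  omega

/-- A Sidon set of size ≥ 3 cannot have |Y+Y| = 2|Y| - 1. -/
lemma sidon_sums' {Y : Finset (ZMod p)} (hY3 : 3 ≤ Y.card)
    (hp2 : (2 : ZMod p) ≠ 0)
    (hSidon : ∀ e : ZMod p, e ≠ 0 → (Y.filter (fun y => y + e ∈ Y)).card ≤ 1)
    (hYY : (Y + Y).card + 1 = 2 * Y.card) : False := by
  set n := Y.card with hn
  classical
  set r : ZMod p → ℕ := fun s => ((Y ×ˢ Y).filter (fun q => q.1 + q.2 = s)).card with hr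
  have htotal : ∑ s ∈ Y + Y, r s = n * n := by
    rw [hr, ← Finset.card_product]
    apply (Finset.card_eq_sum_card_fiberwise ?_).symm
    intro q hq
    obtain ⟨h1, h2⟩ := Finset.mem_product.1 hq
    exact Finset.add_mem_add h1 h2
  -- two distinct representations with appropriate distinctness kill Sidon
  have hpair : ∀ a₁ a₂ b₁ b₂ : ZMod p, a₁ ∈ Y → a₂ ∈ Y → b₁ ∈ Y → b₂ ∈ Y →
      a₁ + a₂ = b₁ + b₂ → a₁ ≠ b₁ → b₁ ≠ a₂ → False := by
    intro a₁ a₂ b₁ b₂ ha₁ ha₂ hb₁ hb₂ hsum hne hne2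
    have he : a₁ - b₁ ≠ 0 := sub_ne_zero.2 hne
    have h1 : b₁ ∈ Y.filter (fun y => y + (a₁ - b₁) ∈ Y) := by
      apply Finset.mem_filter.2 ⟨hb₁, ?_⟩
      have : b₁ + (a₁ - b₁) = a₁ := by ring
      rwa [this]
    have h2 : a₂ ∈ Y.filter (fun y => y + (a₁ - b₁) ∈ Y) := by
      apply Finset.mem_filter.2 ⟨ha₂, ?_⟩
      have : a₂ + (a₁ - b₁) = b₂ := by linear_combination hsum
      rwa [this]
    have : 2 ≤ (Y.filter (fun y => y + (a₁ - b₁) ∈ Y)).card := by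
      apply Finset.one_lt_card.2
      exact ⟨b₁, h1, a₂, h2, hne2⟩
    have := hSidon _ he
    omega
  have hr2 : ∀ s, r s ≤ 2 := by
    intro s
    by_contra hcon
    push_neg at hcon
    obtain ⟨q₁, q₂, q₃, hq₁, hq₂, hq₃, h12, h13, h23⟩ :=
      Finset.two_lt_card_iff.1 hcon
    simp only [hr, Finset.mem_filter, Finset.mem_product] at hq₁ hq₂ hq₃
    obtain ⟨⟨h1a, h1b⟩, h1s⟩ := hq₁
    obtain ⟨⟨h2a, h2b⟩, h2s⟩ := hq₂
    obtain ⟨⟨h3a, h3b⟩, h3s⟩ := hq₃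
    -- distinct pairs with equal sums have distinct first coordinates
    have hfst : ∀ (u v : ZMod p × ZMod p), u.1 + u.2 = s → v.1 + v.2 = s → u ≠ v → u.1 ≠ v.1 := by
      intro u v hu hv huv h
      apply huv
      have : u.2 = v.2 := by
        have := hu.trans hv.symm
        rw [h] at this
        exact add_left_cancel this
      exact Prod.ext h this
    have h12' : q₁.1 ≠ q₂.1 := hfst _ _ h1s h2s h12
    have h13' : q₁.1 ≠ q₃.1 := hfst _ _ h1s h3s h13
    have h23' : q₂.1 ≠ q₃.1 := hfst _ _ h2s h3s h23
    by_cases hcase : q₂.1 = q₁.2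
    · -- use pair (q₁, q₃)
      have h3ne : q₃.1 ≠ q₁.2 := by rw [← hcase]; exact fun h => h23' h.symm
      exact hpair q₁.1 q₁.2 q₃.1 q₃.2 h1a h1b h3a h3b
        (h1s.trans h3s.symm) (fun h => h13' h) h3ne
    · exact hpair q₁.1 q₁.2 q₂.1 q₂.2 h1a h1b h2a h2b
        (h1s.trans h2s.symm) (fun h => h12' h) hcase
  have hdiag : ∀ y ∈ Y, r (y + y) = 1 := by
    intro y hy
    have : (Y ×ˢ Y).filter (fun q => q.1 + q.2 = y + y) = {(y, y)} := by
      apply Finset.eq_singleton_iff_unique_mem.2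
      constructor
      · simp [Finset.mem_filter, Finset.mem_product, hy]
      · intro q hq
        simp only [Finset.mem_filter, Finset.mem_product] at hq
        obtain ⟨⟨hqa, hqb⟩, hqs⟩ := hq
        by_cases h : q.1 = y
        · have : q.2 = y := by
            have := hqs
            rw [h] at this
            exact add_left_cancel this
          exact Prod.ext h this
        · exfalso
          have hy2 : y ≠ q.2 := by
            intro hh
            apply h
            rw [← hh] at hqs
            exact add_right_cancel hqs
          exact hpair q.1 q.2 y y hqa hqb hy hy hqs h hy2
    show ((Y ×ˢ Y).filter (fun q => q.1 + q.2 = y + y)).card = 1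
    rw [this]; rfl
  set D : Finset (ZMod p) := Y.image (fun y => y + y) with hD
  have hDsub : D ⊆ Y + Y := by
    intro z hz
    obtain ⟨y, hy, rfl⟩ := Finset.mem_image.1 hz
    exact Finset.add_mem_add hy hy
  have hinj : Set.InjOn (fun y : ZMod p => y + y) Y := by
    intro a _ b _ h
    have : (2 : ZMod p) * a = 2 * b := by
      simp only [two_mul]; exact h
    exact mul_left_cancel₀ hp2 this
  have hDcard : D.card = n := by
    rw [hD, Finset.card_image_of_injOn hinj]
  have hsplit : ∑ s ∈ (Y+Y) \ D, r s + ∑ s ∈ D, r s = ∑ s ∈ Y + Y, r s :=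
    Finset.sum_sdiff hDsub
  have hDsum : ∑ s ∈ D, r s = n := by
    rw [hD, Finset.sum_image hinj]
    rw [Finset.sum_congr rfl hdiag, Finset.sum_const, smul_eq_mul, mul_one]
  have hrest : ∑ s ∈ (Y+Y) \ D, r s ≤ 2 * ((Y+Y).card - n) := by
    calc ∑ s ∈ (Y+Y) \ D, r s ≤ ∑ _s ∈ (Y+Y) \ D, 2 :=
          Finset.sum_le_sum (fun s _ => hr2 s)
    _ = ((Y+Y) \ D).card * 2 := by rw [Finset.sum_const, smul_eq_mul]
    _ = 2 * ((Y+Y).card - n) := by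
          rw [Finset.card_sdiff_of_subset hDsub, hDcard]; ring
  have hnn : n * n ≤ n + 2 * (n - 1) := by
    have h1 : (Y+Y).card - n = n - 1 := by omega
    rw [htotal] at hsplit
    omega
  have : 3 * n ≤ n * n := Nat.mul_le_mul_right n (by omega)
  omega




/-- negation of an AP is an AP with the same difference. -/
lemma isAPF_neg {U : Finset (ZMod p)} {d : ZMod p} (h : IsAPF U d) :
    IsAPF (U.image (fun x => -x)) d := by
  obtain ⟨a, ha⟩ := h
  set l := U.card with hl
  have hcard : (U.image (fun x => -x)).card = l :=
    Finset.card_image_of_injective _ neg_injective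
  refine ⟨-a - ((l - 1 : ℕ) : ZMod p) * d, ?_⟩
  rw [hcard]
  ext z
  simp only [Finset.mem_image, Finset.mem_range]
  constructor
  · rintro ⟨u, hu, rfl⟩
    rw [ha] at hu
    obtain ⟨k, hk, rfl⟩ := Finset.mem_image.1 hu
    have hk' := Finset.mem_range.1 hk
    refine ⟨l - 1 - k, by omega, ?_⟩
    have hc : ((l - 1 - k : ℕ) : ZMod p) = ((l - 1 : ℕ) : ZMod p) - (k : ZMod p) := by
      have : l - 1 - k + k = l - 1 := by omega
      have h2 : ((l - 1 - k : ℕ) : ZMod p) + (k : ZMod p) = ((l - 1 : ℕ) : ZMod p) := by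
        rw [← Nat.cast_add, this]
      linear_combination h2
    rw [hc]; ring
  · rintro ⟨j, hj', rfl⟩
    refine ⟨a + ((l - 1 - j : ℕ) : ZMod p) * d, ?_, ?_⟩
    · rw [ha]
      exact Finset.mem_image.2 ⟨l - 1 - j, Finset.mem_range.2 (by omega), rfl⟩
    · have hc : ((l - 1 - j : ℕ) : ZMod p) = ((l - 1 : ℕ) : ZMod p) - (j : ZMod p) := by
        have : l - 1 - j + j = l - 1 := by omega
        have h2 : ((l - 1 - j : ℕ) : ZMod p) + (j : ZMod p) = ((l - 1 : ℕ) : ZMod p) := by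
          rw [← Nat.cast_add, this]
        linear_combination h2
      rw [hc]; ring

lemma isAPF_pair {y₁ y₂ : ZMod p} (h : y₁ ≠ y₂) :
    IsAPF ({y₁, y₂} : Finset (ZMod p)) (y₂ - y₁) := by
  refine ⟨y₁, ?_⟩
  have hcard : ({y₁, y₂} : Finset (ZMod p)).card = 2 := by
    rw [Finset.card_insert_of_notMem (by simpa using h), Finset.card_singleton]
  rw [hcard]
  have hr : Finset.range 2 = {0, 1} := by decide
  rw [hr]
  ext z
  simp only [Finset.mem_insert, Finset.mem_singleton, Finset.mem_image]
  constructor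
  · rintro (rfl | rfl)
    · exact ⟨0, by simp, by push_cast; ring⟩
    · exact ⟨1, by simp, by push_cast; ring⟩
  · rintro ⟨k, hk, rfl⟩
    rcases hk with rfl | rfl
    · left; push_cast; ring
    · right; push_cast; ring

lemma double_neg_image (X : Finset (ZMod p)) :
    (X.image (fun x : ZMod p => -x)).image (fun x => -x) = X := by
  rw [Finset.image_image]
  simp [Function.comp]







theorem vosper_ordered : ∀ μ : ℕ, ∀ X Y : Finset (ZMod p),
    Y.card * (2 * p) + (X.card + Y.card) ≤ μ →
    2 ≤ Y.card → Y.card ≤ X.card →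
    (X + Y).card + 2 ≤ p →
    (X + Y).card + 1 = X.card + Y.card →
    ∃ d : ZMod p, d ≠ 0 ∧ IsAPF X d ∧ IsAPF Y d := by
  intro μ
  induction μ with
  | zero =>
      intro X Y hμ hY2 _ _ _
      have hp1 : 1 ≤ p := hFp.out.pos
      have : 0 < Y.card * (2 * p) := Nat.mul_pos (by omega) (by omega)
      omega
  | succ μ ih =>
    intro X Y hμ hY2 hnx hle hcrit
    have hp1 : 1 ≤ p := hFp.out.pos
    have hX2 : 2 ≤ X.card := le_trans hY2 hnx
    have hXne : X.Nonempty := Finset.card_pos.1 (by omega)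
    have hYne : Y.Nonempty := Finset.card_pos.1 (by omega)
    have hpbig : X.card + Y.card + 1 ≤ p := by omega
    -- helper: finish from a critical child with the same sumset
    have hfinish : ∀ (X₁ Y₁ : Finset (ZMod p)) (d : ZMod p), d ≠ 0 →
        2 ≤ X₁.card → 2 ≤ Y₁.card → X₁ + Y₁ = X + Y →
        (X₁ + Y₁).card + 1 = X₁.card + Y₁.card →
        IsAPF X₁ d → IsAPF Y₁ d →
        ∃ d : ZMod p, d ≠ 0 ∧ IsAPF X d ∧ IsAPF Y d := by
      intro X₁ Y₁ d hd hX₁ hY₁ hsum hcrit₁ hXAP₁ hYAP₁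
      have hX₁ne : X₁.Nonempty := Finset.card_pos.1 (by omega)
      have hY₁ne : Y₁.Nonempty := Finset.card_pos.1 (by omega)
      have hle₁ : (X₁ + Y₁).card + 2 ≤ p := by rw [hsum]; omega
      obtain ⟨hd1, hd2⟩ := dual_crit hX₁ne hY₁ne hcrit₁ hle₁
      have hcompl : (X₁ + Y₁)ᶜ = (X + Y)ᶜ := by rw [hsum]
      -- C is an AP
      have hCcard : ((X + Y)ᶜ).card + (X + Y).card = p := by
        rw [Finset.card_compl, card_zmod]
        have h1 : (X + Y).card ≤ p := by omega
        omega
      have hC2 : 2 ≤ ((X + Y)ᶜ).card := by omega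
      have hY₁c : (Y₁ᶜ).card + Y₁.card = p := by
        rw [Finset.card_compl, card_zmod]
        have h1 : Y₁.card ≤ Fintype.card (ZMod p) := Finset.card_le_univ Y₁
        rw [card_zmod] at h1
        omega
      rw [hcompl] at hd1 hd2
      have hnegX₁ : (X₁.image (fun x => -x)).card = X₁.card :=
        Finset.card_image_of_injective _ neg_injective
      have hcritC : ((X + Y)ᶜ + X₁.image (fun x => -x)).card + 1
          = ((X + Y)ᶜ).card + (X₁.image (fun x => -x)).card := by
        rw [hd1, hnegX₁]
        omega
      have hCAP : IsAPF ((X + Y)ᶜ) d := by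
        apply ap_transfer hd hC2 (by omega) (isAPF_neg hXAP₁) hcritC
        rw [hd1]
        omega
      -- transfer to X and Y
      obtain ⟨he1, he2⟩ := dual_crit hXne hYne hcrit hle
      obtain ⟨hf1, hf2⟩ := dual_crit hYne hXne (by rw [add_comm Y X]; omega)
        (by rw [add_comm Y X]; omega)
      rw [add_comm Y X] at hf1 hf2
      have hXc : (Xᶜ).card + X.card = p := by
        rw [Finset.card_compl, card_zmod]
        have h1 : X.card ≤ Fintype.card (ZMod p) := Finset.card_le_univ X
        rw [card_zmod] at h1
        omega
      have hYc : (Yᶜ).card + Y.card = p := by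
        rw [Finset.card_compl, card_zmod]
        have h1 : Y.card ≤ Fintype.card (ZMod p) := Finset.card_le_univ Y
        rw [card_zmod] at h1
        omega
      have hnegX : (X.image (fun x => -x)).card = X.card :=
        Finset.card_image_of_injective _ neg_injective
      have hnegY : (Y.image (fun x => -x)).card = Y.card :=
        Finset.card_image_of_injective _ neg_injective
      -- pair (-X, C): sum = Yᶜ
      have hXAP : IsAPF X d := by
        have hcomm : X.image (fun x => -x) + (X + Y)ᶜ = (X + Y)ᶜ + X.image (fun x => -x) :=
          add_comm _ _
        have hAP : IsAPF (X.image (fun x => -x)) d := by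
          apply ap_transfer hd (by omega) hC2 hCAP _ _
          · rw [hcomm, he1, hnegX]
            omega
          · rw [hcomm, he1]
            omega
        have := isAPF_neg hAP
        rwa [double_neg_image] at this
      have hYAP : IsAPF Y d := by
        have hcomm : Y.image (fun x => -x) + (X + Y)ᶜ = (X + Y)ᶜ + Y.image (fun x => -x) :=
          add_comm _ _
        have hAP : IsAPF (Y.image (fun x => -x)) d := by
          apply ap_transfer hd (by omega) hC2 hCAP _ _
          · rw [hcomm, hf1, hnegY]
            omega
          · rw [hcomm, hf1]
            omega
        have := isAPF_neg hAP
        rwa [double_neg_image] at this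
      exact ⟨d, hd, hXAP, hYAP⟩
    by_cases hbase : Y.card = 2
    · obtain ⟨y₁, y₂, hne, hY⟩ := Finset.card_eq_two.1 hbase
      have hd : y₂ - y₁ ≠ 0 := sub_ne_zero.2 (Ne.symm hne)
      have hYAP : IsAPF Y (y₂ - y₁) := by rw [hY]; exact isAPF_pair hne
      have hXAP := ap_transfer hd hX2 hY2 hYAP hcrit (by omega)
      exact ⟨_, hd, hXAP, hYAP⟩
    · have hY3 : 3 ≤ Y.card := by omega
      by_cases hSid : ∃ e : ZMod p, e ≠ 0 ∧ 2 ≤ (Y.filter (fun y => y + e ∈ Y)).card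
      · -- non-Sidon: transform
        obtain ⟨e, he, hfY⟩ := hSid
        obtain ⟨heq, hsum, hcritT⟩ := transform_eq (e := e) (by omega) hnx hcrit hle (by omega)
        have hYfsub : Y.filter (fun y => y + e ∈ Y) ⊆ Y := Finset.filter_subset _ _
        have hYfle : (Y.filter (fun y => y + e ∈ Y)).card ≤ Y.card :=
          Finset.card_le_card hYfsub
        have hYflt : (Y.filter (fun y => y + e ∈ Y)).card + 1 ≤ Y.card := by
          by_contra hcon
          push_neg at hcon
          have heqY : Y.filter (fun y => y + e ∈ Y) = Y :=
            Finset.eq_of_subset_of_card_le hYfsub (by omega)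
          have hinv : ∀ z ∈ Y, z + e ∈ Y := by
            intro z hz
            have : z ∈ Y.filter (fun y => y + e ∈ Y) := heqY.symm ▸ hz
            exact (Finset.mem_filter.1 this).2
          have := eq_univ_of_invariant he hYne hinv
          have : Y.card = p := by rw [this, Finset.card_univ, card_zmod]
          omega
        have hXsube : X ⊆ X ∪ X.image (fun z => z + e) := Finset.subset_union_left
        have hXele : X.card ≤ (X ∪ X.image (fun z => z + e)).card :=
          Finset.card_le_card hXsube
        have hcards : (X ∪ X.image (fun z => z + e)).card
            + (Y.filter (fun y => y + e ∈ Y)).card = X.card + Y.card := by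
          rw [hsum] at hcritT
          omega
        obtain ⟨d, hd, hXeAP, hYfAP⟩ := ih (X ∪ X.image (fun z => z + e))
          (Y.filter (fun y => y + e ∈ Y))
          (by
            have h2p : 2 ≤ 2 * p := by omega
            calc (Y.filter (fun y => y + e ∈ Y)).card * (2 * p)
                + ((X ∪ X.image (fun z => z + e)).card
                  + (Y.filter (fun y => y + e ∈ Y)).card)
                ≤ (Y.card - 1) * (2 * p) + (X.card + Y.card) := by
                  have := Nat.mul_le_mul_right (2*p) (by omega :
                    (Y.filter (fun y => y + e ∈ Y)).card ≤ Y.card - 1)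
                  omega
              _ ≤ μ := by
                  have h3 : Y.card * (2*p) = (Y.card - 1) * (2*p) + 2*p := by
                    have : Y.card - 1 + 1 = Y.card := by omega
                    calc Y.card * (2*p) = (Y.card - 1 + 1) * (2*p) := by rw [this]
                    _ = (Y.card - 1) * (2*p) + 2*p := by ring
                  omega)
          hfY (by omega) (by rw [hsum]; omega) hcritT
        exact hfinish (X ∪ X.image (fun z => z + e)) (Y.filter (fun y => y + e ∈ Y))
          d hd (by omega) hfY hsum hcritT hXeAP hYfAP
      · -- Sidon case
        push_neg at hSid
        have hSidon : ∀ e : ZMod p, e ≠ 0 → (Y.filter (fun y => y + e ∈ Y)).card ≤ 1 := by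
          intro e he
          have := hSid e he
          omega
        -- fX is constant on nonzero differences of Y
        have hk0 : ∀ y₁ ∈ Y, ∀ y₂ ∈ Y, y₁ ≠ y₂ →
            (X.filter (fun a => a + (y₁ - y₂) ∈ X)).card + Y.card = X.card + 1 := by
          intro y₁ hy₁ y₂ hy₂ hne
          have he : y₁ - y₂ ≠ 0 := sub_ne_zero.2 hne
          have hfY1 : 1 ≤ (Y.filter (fun y => y + (y₁ - y₂) ∈ Y)).card := by
            apply Finset.card_pos.2
            refine ⟨y₂, Finset.mem_filter.2 ⟨hy₂, ?_⟩⟩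
            have hsimp : y₂ + (y₁ - y₂) = y₁ := by ring
            rw [hsimp]; exact hy₁
          have heq := (transform_eq (e := y₁ - y₂) (by omega) hnx hcrit hle hfY1).1
          have hle1 := hSidon _ he
          omega
        set k := X.card + 1 - Y.card with hkdef
        have hkn : k + Y.card = X.card + 1 := by omega
        have hk' : ∀ y₁ ∈ Y, ∀ y₂ ∈ Y, y₁ ≠ y₂ →
            (X.filter (fun a => a + (y₁ - y₂) ∈ X)).card = k := by
          intro y₁ hy₁ y₂ hy₂ hne
          have := hk0 y₁ hy₁ y₂ hy₂ hne
          omega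
        by_cases hgood : ∃ e : ZMod p, 2 ≤ om' X Y e ∧ om' X Y e + 1 ≤ Y.card
        · -- Dyson transform
          obtain ⟨e, h2w, hwn⟩ := hgood
          have homD : om' X Y e = (Y.filter (fun y => e + y ∈ X)).card := rfl
          have hw1 : 1 ≤ (Y.filter (fun y => e + y ∈ X)).card := by omega
          obtain ⟨hsumD, hcardD⟩ := dyson_crit (e := e) hXne hcrit hle hw1
          have hXDle : X.card ≤ (X ∪ Y.image (fun y => e + y)).card :=
            Finset.card_le_card Finset.subset_union_left
          have hcritD : ((X ∪ Y.image (fun y => e + y))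
                + (Y.filter (fun y => e + y ∈ X))).card + 1
              = (X ∪ Y.image (fun y => e + y)).card
                + (Y.filter (fun y => e + y ∈ X)).card := by
            rw [hsumD]; omega
          obtain ⟨d, hd, hXDAP, hYDAP⟩ := ih (X ∪ Y.image (fun y => e + y))
            (Y.filter (fun y => e + y ∈ X))
            (by
              have hmul : ((Y.filter (fun y => e + y ∈ X)).card + 1) * (2*p)
                  ≤ Y.card * (2*p) := Nat.mul_le_mul_right _ (by omega)
              have hexp : ((Y.filter (fun y => e + y ∈ X)).card + 1) * (2*p)
                  = (Y.filter (fun y => e + y ∈ X)).card * (2*p) + 2*p := by ring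
              omega)
            (by omega) (by omega) (by rw [hsumD]; omega) hcritD
          exact hfinish (X ∪ Y.image (fun y => e + y)) (Y.filter (fun y => e + y ∈ X))
            d hd (by omega) (by omega) hsumD hcritD hXDAP hYDAP
        · push_neg at hgood
          have hval : ∀ e : ZMod p, om' X Y e = 0 ∨ om' X Y e = 1 ∨ om' X Y e = Y.card := by
            intro e
            have hle' : om' X Y e ≤ Y.card := Finset.card_filter_le _ _
            by_cases h2 : 2 ≤ om' X Y e
            · right; right
              have := hgood e h2
              omega
            · omega
          have hlevel := sidon_key' hY3 hk' hval
          set XS := (Finset.univ : Finset (ZMod p)).filter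
            (fun e => om' X Y e = Y.card) with hXS
          have hXSY : XS + Y ⊆ X := by
            intro z hz
            obtain ⟨e', he', y, hy, rfl⟩ := Finset.mem_add.1 hz
            have hom : om' X Y e' = Y.card := (Finset.mem_filter.1 he').2
            have hfsub : Y.filter (fun y => e' + y ∈ X) ⊆ Y := Finset.filter_subset _ _
            have hfeq : Y.filter (fun y => e' + y ∈ X) = Y :=
              Finset.eq_of_subset_of_card_le hfsub (by
                have hrfl : om' X Y e' = (Y.filter (fun y => e' + y ∈ X)).card := rfl
                omega)
            have : y ∈ Y.filter (fun y => e' + y ∈ X) := hfeq.symm ▸ hy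
            exact (Finset.mem_filter.1 this).2
          have hXSne : XS.Nonempty := by
            rw [← Finset.card_pos, hlevel]; omega
          have hcdXS := ZMod.cauchy_davenport hFp.out hXSne hYne
          have hXSeq : XS + Y = X := by
            apply Finset.eq_of_subset_of_card_le hXSY
            rcases min_cases p (XS.card + Y.card - 1) with ⟨h, _⟩ | ⟨h, _⟩ <;>
              rw [h] at hcdXS
            · exfalso
              have h2 := Finset.card_le_card hXSY
              omega
            · rw [hlevel] at hcdXS
              omega
          have hcritXS : (XS + Y).card + 1 = XS.card + Y.card := by
            rw [hXSeq, hlevel]; omega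
          by_cases hxn : X.card = Y.card
          · -- k = 1 : contradiction via Sidon sums
            exfalso
            have hk1 : k = 1 := by omega
            have hXS1 : XS.card = 1 := by rw [hlevel, hk1]
            obtain ⟨e₀, hXSe⟩ := Finset.card_eq_one.1 hXS1
            have hXe : X = {e₀} + Y := by rw [← hXSeq, hXSe]
            have h2 : X + Y = {e₀} + (Y + Y) := by rw [hXe, add_assoc]
            have h3 : ({e₀} + (Y + Y)).card = (Y + Y).card :=
              Finset.card_singleton_add e₀ (Y + Y)
            have h4 : (X + Y).card = (Y + Y).card := by rw [h2, h3]
            have hYY : (Y + Y).card + 1 = 2 * Y.card := by omega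
            haveI : NeZero p := ⟨hFp.out.ne_zero⟩
            have hp2 : (2 : ZMod p) ≠ 0 := by
              intro hcon
              have hc2 : ((2:ℕ) : ZMod p) = 0 := by push_cast; exact hcon
              have hdvd := (ZMod.natCast_eq_zero_iff 2 p).1 hc2
              have := Nat.le_of_dvd (by norm_num) hdvd
              omega
            exact sidon_sums' hY3 hp2 hSidon hYY
          · -- |X| > |Y| : recurse on the pair (XS, Y)
            have hxgt : Y.card + 1 ≤ X.card := by omega
            have hk2 : 2 ≤ k := by omega
            have hkx : k ≤ X.card := by omega
            have hleXS : (XS + Y).card + 2 ≤ p := by rw [hXSeq]; omega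
            have hYAP : ∃ d : ZMod p, d ≠ 0 ∧ IsAPF Y d := by
              by_cases hornt : Y.card ≤ XS.card
              · obtain ⟨d, hd, _, hYAP⟩ := ih XS Y
                  (by rw [hlevel]; omega) hY2 hornt hleXS hcritXS
                exact ⟨d, hd, hYAP⟩
              · push_neg at hornt
                have hcomm : Y + XS = XS + Y := add_comm _ _
                obtain ⟨d, hd, hYAP, _⟩ := ih Y XS
                  (by
                    rw [hlevel]
                    have hmul : (k + 1) * (2*p) ≤ Y.card * (2*p) :=
                      Nat.mul_le_mul_right _ (by rw [hlevel] at hornt; omega)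
                    have hexp : (k + 1) * (2*p) = k * (2*p) + 2*p := by ring
                    omega)
                  (by rw [hlevel]; omega)
                  (by rw [hlevel]; omega)
                  (by rw [hcomm]; exact hleXS)
                  (by rw [hcomm]; omega)
                exact ⟨d, hd, hYAP⟩
            obtain ⟨d, hd, hYAP⟩ := hYAP
            have hXAP := ap_transfer hd hX2 hY2 hYAP hcrit (by omega)
            exact ⟨d, hd, hXAP, hYAP⟩


end Stmt12

theorem stmt_12 (p : ℕ) [Fact p.Prime] (hp3 : p % 3 = 2)
    (A : Set (ZMod p))
    (hsf : ∀ a ∈ A, ∀ b ∈ A, a + b ∉ A)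
    (hcard : A.ncard = (p + 1) / 3) :
    ∃ a r : ZMod p, A = (fun k : ℕ => a + (k : ZMod p) * r) '' {k | k < (p + 1) / 3} := by
  haveI : NeZero p := ⟨(Fact.out : p.Prime).ne_zero⟩
  have hp2 : 2 ≤ p := (Fact.out : p.Prime).two_le
  set m := (p + 1) / 3 with hm
  have h3m : 3 * m = p + 1 := by omega
  have hA : A.Finite := Set.toFinite A
  set F := hA.toFinset with hF
  have hFcard : F.card = m := by
    rw [hF, ← Set.ncard_eq_toFinset_card A hA, hcard]
  have hmem : ∀ z, z ∈ F ↔ z ∈ A := fun z => Set.Finite.mem_toFinset hA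
  by_cases hm1 : m = 1
  · have hA1 : A.ncard = 1 := by rw [hcard]; exact hm1
    obtain ⟨a, ha⟩ := Set.ncard_eq_one.1 hA1
    refine ⟨a, 0, ?_⟩
    rw [ha]
    ext z
    simp only [Set.mem_image, Set.mem_setOf_eq, Set.mem_singleton_iff]
    constructor
    · rintro rfl
      exact ⟨0, by omega, by simp⟩
    · rintro ⟨k, hk, rfl⟩
      have : k = 0 := by omega
      subst this
      simp
  · have hm2 : 2 ≤ m := by omega
    have hsub : F + F ⊆ Fᶜ := by
      intro z hz
      obtain ⟨a, ha, b, hb, rfl⟩ := Finset.mem_add.1 hz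
      rw [Finset.mem_compl]
      intro hmem'
      exact hsf a ((hmem a).1 ha) b ((hmem b).1 hb) ((hmem _).1 hmem')
    have hFle : F.card ≤ p := by
      have := Finset.card_le_univ F
      rwa [Stmt12.card_zmod] at this
    have hFc : (Fᶜ).card + m = p := by
      rw [Finset.card_compl, Stmt12.card_zmod, hFcard]
      omega
    have hFne : F.Nonempty := Finset.card_pos.1 (by omega)
    have hcd := ZMod.cauchy_davenport (Fact.out : p.Prime) hFne hFne
    have hle2 : (F + F).card ≤ (Fᶜ).card := Finset.card_le_card hsub
    have hsumcard : (F + F).card + m = p := by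
      rcases min_cases p (F.card + F.card - 1) with ⟨h, _⟩ | ⟨h, _⟩ <;>
        rw [h] at hcd <;> omega
    have hcrit : (F + F).card + 1 = F.card + F.card := by omega
    have hle : (F + F).card + 2 ≤ p := by omega
    obtain ⟨d, hd, hAP, _⟩ := Stmt12.vosper_ordered
      (F.card * (2 * p) + (F.card + F.card)) F F le_rfl (by omega) le_rfl hle hcrit
    obtain ⟨a, haF⟩ := hAP
    refine ⟨a, d, ?_⟩
    ext z
    simp only [Set.mem_image, Set.mem_setOf_eq]
    constructor
    · intro hz
      have hzF : z ∈ F := (hmem z).2 hz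
      rw [haF] at hzF
      obtain ⟨k, hk, rfl⟩ := Finset.mem_image.1 hzF
      refine ⟨k, ?_, rfl⟩
      rw [hFcard] at hk
      exact Finset.mem_range.1 hk
    · rintro ⟨k, hk, rfl⟩
      apply (hmem _).1
      rw [haF]
      exact Finset.mem_image.2 ⟨k, Finset.mem_range.2 (by rw [hFcard]; exact hk), rfl⟩
end

section
/- Let p ≡ 2 mod 3 be prime, n ∈ ℕ, and A ⊆ F_p^n a sum-free set with |A| ≥ (m_p − 1/2 + 1/p)·p^{n−1}. Then there exists u ∈ F_p^n \ {0} such that {x·u : x ∈ I_p} ⊆ A, where I_p = {m_p, ..., 2m_p − 1} and m_p = (p+1)/3. -/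
set_option linter.unusedSectionVars false
open Finset
open scoped Pointwise

namespace SF14
variable {p : ℕ} [hp : Fact p.Prime]

lemma natCast_inj {i j : ℕ} (hi : i < p) (hj : j < p) (h : (i : ZMod p) = j) : i = j := by
  have h1 := ZMod.val_cast_of_lt hi
  have h2 := ZMod.val_cast_of_lt hj
  rw [← h1, ← h2, h]

/-- Arithmetic progression of length `L`, start `c`, difference `d` in `ZMod p`. -/
def ap (c d : ZMod p) (L : ℕ) : Finset (ZMod p) :=
  (Finset.range L).image (fun i : ℕ => c + (i : ZMod p) * d)

lemma mem_ap {c d x : ZMod p} {L : ℕ} :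
    x ∈ ap c d L ↔ ∃ i, i < L ∧ x = c + (i : ZMod p) * d := by
  simp [ap, eq_comm]

lemma start_mem_ap {c d : ZMod p} {L : ℕ} (hL : 1 ≤ L) : c ∈ ap c d L :=
  mem_ap.2 ⟨0, hL, by simp⟩

lemma ap_nonempty {c d : ZMod p} {L : ℕ} (hL : 1 ≤ L) : (ap c d L).Nonempty :=
  ⟨c, start_mem_ap hL⟩

lemma card_ap {c d : ZMod p} {L : ℕ} (hd : d ≠ 0) (hL : L ≤ p) : (ap c d L).card = L := by
  rw [ap, Finset.card_image_of_injOn, card_range]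
  intro i hi j hj hij
  simp only [mem_coe, mem_range] at hi hj
  have : (i : ZMod p) * d = (j : ZMod p) * d := by
    have := hij; simpa using this
  have : (i : ZMod p) = (j : ZMod p) := mul_right_cancel₀ hd this
  exact natCast_inj (lt_of_lt_of_le hi hL) (lt_of_lt_of_le hj hL) this

lemma ap_split (c d : ZMod p) (L₁ L₂ : ℕ) :
    ap c d (L₁ + L₂) = ap c d L₁ ∪ ap (c + (L₁ : ZMod p) * d) d L₂ := by
  ext x
  simp only [mem_union, mem_ap]
  constructor
  · rintro ⟨i, hi, rfl⟩
    by_cases h : i < L₁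
    · exact Or.inl ⟨i, h, rfl⟩
    · refine Or.inr ⟨i - L₁, by omega, ?_⟩
      have : (i : ZMod p) = (L₁ : ZMod p) + ((i - L₁ : ℕ) : ZMod p) := by
        rw [← Nat.cast_add]; congr 1; omega
      rw [this]; ring
  · rintro (⟨i, hi, rfl⟩ | ⟨i, hi, rfl⟩)
    · exact ⟨i, by omega, rfl⟩
    · refine ⟨L₁ + i, by omega, ?_⟩
      push_cast; ring

lemma ap_univ {c d : ZMod p} (hd : d ≠ 0) : ap c d p = univ := by
  apply Finset.eq_univ_of_card
  rw [card_ap hd le_rfl, ZMod.card p]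

lemma compl_ap {c d : ZMod p} {L : ℕ} (hd : d ≠ 0) (hL : L ≤ p) :
    (ap c d L)ᶜ = ap (c + (L : ZMod p) * d) d (p - L) := by
  have hsplit := ap_split c d L (p - L)
  rw [Nat.add_sub_cancel' hL, ap_univ hd] at hsplit
  have hcards : (ap c d L).card + (ap (c + (L : ZMod p) * d) d (p - L)).card = p := by
    rw [card_ap hd hL, card_ap hd (by omega)]; omega
  have hdisj : Disjoint (ap c d L) (ap (c + (L : ZMod p) * d) d (p - L)) := by
    rw [← Finset.card_union_eq_card_add_card, ← hsplit, Finset.card_univ, ZMod.card p]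
    exact hcards.symm
  ext x
  simp only [Finset.mem_compl]
  have hx : x ∈ ap c d L ∪ ap (c + (L : ZMod p) * d) d (p - L) := by rw [← hsplit]; exact mem_univ x
  rw [mem_union] at hx
  constructor
  · intro h; tauto
  · intro h hmem
    exact (Finset.disjoint_left.1 hdisj) hmem h

lemma ap_add_ap {c₁ c₂ d : ZMod p} {L₁ L₂ : ℕ} (h1 : 1 ≤ L₁) (h2 : 1 ≤ L₂) :
    ap c₁ d L₁ + ap c₂ d L₂ = ap (c₁ + c₂) d (L₁ + L₂ - 1) := by
  ext x
  simp only [Finset.mem_add, mem_ap]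
  constructor
  · rintro ⟨y, ⟨i, hi, rfl⟩, z, ⟨j, hj, rfl⟩, rfl⟩
    refine ⟨i + j, by omega, ?_⟩
    push_cast; ring
  · rintro ⟨k, hk, rfl⟩
    refine ⟨c₁ + ((min k (L₁ - 1) : ℕ) : ZMod p) * d, ⟨min k (L₁-1), by omega, rfl⟩,
      c₂ + ((k - min k (L₁ - 1) : ℕ) : ZMod p) * d, ⟨k - min k (L₁-1), by omega, rfl⟩, ?_⟩
    have : ((k - min k (L₁ - 1) : ℕ) : ZMod p) = (k : ZMod p) - (min k (L₁-1) : ℕ) := by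
      have hle : min k (L₁-1) ≤ k := min_le_left _ _
      push_cast [Nat.cast_sub hle]; ring
    rw [this]; ring

lemma ap_image_add (c d t : ZMod p) (L : ℕ) :
    (ap c d L).image (· + t) = ap (c + t) d L := by
  simp only [ap, Finset.image_image]
  congr 1; ext i; simp only [Function.comp_apply]; ring

lemma ap_image_neg (c d : ZMod p) (L : ℕ) :
    (ap c d L).image (fun x => -x) = ap (-c) (-d) L := by
  simp only [ap, Finset.image_image]
  congr 1; ext i; simp only [Function.comp_apply]; ring

lemma ap_image_mul (c d t : ZMod p) (L : ℕ) :
    (ap c d L).image (· * t) = ap (c * t) (d * t) L := by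
  simp only [ap, Finset.image_image]
  congr 1; ext i; simp only [Function.comp_apply]; ring

lemma ap_reverse {c d : ZMod p} {L : ℕ} (hL : 1 ≤ L) :
    ap c (-d) L = ap (c - ((L - 1 : ℕ) : ZMod p) * d) d L := by
  ext x
  simp only [mem_ap]
  constructor
  · rintro ⟨i, hi, rfl⟩
    refine ⟨L - 1 - i, by omega, ?_⟩
    have : ((L - 1 - i : ℕ) : ZMod p) = ((L-1:ℕ) : ZMod p) - (i : ZMod p) := by
      push_cast [Nat.cast_sub (by omega : i ≤ L - 1)]; ring
    rw [this]; ring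
  · rintro ⟨i, hi, rfl⟩
    refine ⟨L - 1 - i, by omega, ?_⟩
    have : ((L - 1 - i : ℕ) : ZMod p) = ((L-1:ℕ) : ZMod p) - (i : ZMod p) := by
      push_cast [Nat.cast_sub (by omega : i ≤ L - 1)]; ring
    rw [this]; ring

lemma ap_sdiff_shift {c d : ZMod p} {L : ℕ} (hd : d ≠ 0) (hL1 : 1 ≤ L) (hLp : L < p) :
    ap c d L \ (ap c d L).image (· + d) = {c} := by
  rw [ap_image_add]
  ext x
  simp only [mem_sdiff, mem_ap, mem_singleton]
  constructor
  · rintro ⟨⟨i, hi, rfl⟩, hnot⟩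
    rcases Nat.eq_zero_or_pos i with h0 | h0
    · subst h0; simp
    · exfalso; apply hnot
      refine ⟨i - 1, by omega, ?_⟩
      have : ((i - 1 : ℕ) : ZMod p) = (i : ZMod p) - 1 := by
        push_cast [Nat.cast_sub (by omega : 1 ≤ i)]; ring
      rw [this]; ring
  · rintro rfl
    refine ⟨⟨0, by omega, by simp⟩, ?_⟩
    rintro ⟨j, hj, hx⟩
    have : ((j + 1 : ℕ) : ZMod p) * d = 0 := by push_cast; linear_combination -hx
    have h0 : ((j + 1 : ℕ) : ZMod p) = 0 := by
      rcases mul_eq_zero.1 this with h | h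
      · exact h
      · exact absurd h hd
    have := (ZMod.natCast_eq_zero_iff _ _).1 h0
    have := Nat.le_of_dvd (by omega) this
    omega

lemma ap_eq_start {c₁ c₂ d : ZMod p} {L : ℕ} (hd : d ≠ 0) (hL1 : 1 ≤ L) (hLp : L < p)
    (h : ap c₁ d L = ap c₂ d L) : c₁ = c₂ := by
  have h1 := ap_sdiff_shift (c := c₁) hd hL1 hLp
  have h2 := ap_sdiff_shift (c := c₂) hd hL1 hLp
  rw [h] at h1
  rw [h1] at h2
  exact singleton_injective h2

lemma shift_invariant {X : Finset (ZMod p)} {τ : ZMod p} (hτ : τ ≠ 0)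
    (h : X.image (· + τ) = X) : X = ∅ ∨ X = univ := by
  rcases X.eq_empty_or_nonempty with h0 | ⟨x, hx⟩
  · exact Or.inl h0
  · right
    have key : ∀ j : ℕ, x + (j : ZMod p) * τ ∈ X := by
      intro j
      induction j with
      | zero => simpa using hx
      | succ j ih =>
        have : x + ((j+1 : ℕ) : ZMod p) * τ = (x + (j : ZMod p) * τ) + τ := by push_cast; ring
        rw [this, ← h]
        exact Finset.mem_image_of_mem _ ih
    apply Finset.eq_univ_of_forall
    intro y
    have hy : y = x + ((((y - x) * τ⁻¹).val : ℕ) : ZMod p) * τ := by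
      rw [ZMod.natCast_rightInverse]
      field_simp
      ring
    rw [hy]; exact key _

lemma runs_one {Y : Finset (ZMod p)} {τ : ZMod p} (hτ : τ ≠ 0)
    (h1 : (Y \ Y.image (· + τ)).card = 1) : ∃ c, Y = ap c τ Y.card := by
  obtain ⟨a, ha⟩ := Finset.card_eq_one.1 h1
  have hmem : ∀ y : ZMod p, (y ∈ Y ∧ y - τ ∉ Y) ↔ y = a := by
    intro y
    rw [← Finset.mem_singleton, ← ha, Finset.mem_sdiff]
    have : y ∈ Y.image (· + τ) ↔ y - τ ∈ Y := by
      simp only [Finset.mem_image]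
      constructor
      · rintro ⟨z, hz, rfl⟩; simpa using hz
      · intro hz; exact ⟨y - τ, hz, by ring⟩
    rw [this]
  have haY : a ∈ Y := ((hmem a).2 rfl).1
  have hstep : ∀ i : ℕ, 1 ≤ i → i < p → a + (i : ZMod p) * τ ∈ Y →
      a + ((i - 1 : ℕ) : ZMod p) * τ ∈ Y := by
    intro i h1i hip hiY
    by_cases hya : a + (i : ZMod p) * τ = a
    · exfalso
      have : (i : ZMod p) * τ = 0 := by linear_combination hya
      rcases mul_eq_zero.1 this with h | h
      · have := (ZMod.natCast_eq_zero_iff _ _).1 h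
        have := Nat.le_of_dvd (by omega) this; omega
      · exact hτ h
    · have := (hmem (a + (i : ZMod p) * τ)).not
      have hsub : a + (i : ZMod p) * τ - τ ∈ Y := by
        by_contra hc
        exact hya ((hmem _).1 ⟨hiY, hc⟩)
      have : a + (i : ZMod p) * τ - τ = a + ((i - 1 : ℕ) : ZMod p) * τ := by
        push_cast [Nat.cast_sub h1i]; ring
      rwa [this] at hsub
  -- index function
  set idx : ZMod p → ℕ := fun y => ((y - a) * τ⁻¹).val with hidx
  have hidx_lt : ∀ y, idx y < p := fun y => ZMod.val_lt _
  have hidx_eq : ∀ y : ZMod p, y = a + ((idx y : ℕ) : ZMod p) * τ := by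
    intro y
    rw [hidx]; simp only []
    rw [ZMod.natCast_rightInverse]
    field_simp
    ring
  have hdown : ∀ y ∈ Y, ∀ i : ℕ, i ≤ idx y → a + (i : ZMod p) * τ ∈ Y := by
    intro y hy i hi
    have main : ∀ t : ℕ, ∀ i : ℕ, i + t = idx y → a + (i : ZMod p) * τ ∈ Y := by
      intro t
      induction t with
      | zero =>
        intro i hi0
        have : i = idx y := by omega
        rw [this, ← hidx_eq y]; exact hy
      | succ t ih =>
        intro i hit
        have h1 : a + ((i+1 : ℕ) : ZMod p) * τ ∈ Y := ih (i+1) (by omega)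
        have := hstep (i+1) (by omega) (by have := hidx_lt y; omega) h1
        simpa using this
    exact main (idx y - i) i (by omega)
  have hYne : Y.Nonempty := ⟨a, haY⟩
  set jmax := (Y.image idx).max' (hYne.image idx) with hjm
  obtain ⟨y₀, hy₀Y, hy₀⟩ := Finset.mem_image.1 ((Y.image idx).max'_mem (hYne.image idx))
  have hYap : Y = ap a τ (jmax + 1) := by
    apply Finset.Subset.antisymm
    · intro y hy
      rw [mem_ap]
      refine ⟨idx y, ?_, hidx_eq y⟩
      have : idx y ≤ jmax := Finset.le_max' _ _ (Finset.mem_image_of_mem idx hy)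
      omega
    · intro x hx
      rw [mem_ap] at hx
      obtain ⟨i, hi, rfl⟩ := hx
      apply hdown y₀ hy₀Y
      rw [hy₀]; omega
  have hcard : Y.card = jmax + 1 := by
    have h2 := hidx_lt y₀
    rw [hYap, card_ap hτ (by omega)]
  exact ⟨a, by rw [hcard, ← hYap, hYap]⟩

lemma add_image_right (X Y : Finset (ZMod p)) (t : ZMod p) :
    X + Y.image (· + t) = (X + Y).image (· + t) := by
  ext x
  simp only [Finset.mem_add, Finset.mem_image]
  constructor
  · rintro ⟨u, hu, v, ⟨w, hw, rfl⟩, rfl⟩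
    exact ⟨u + w, ⟨u, hu, w, hw, rfl⟩, by ring⟩
  · rintro ⟨v, ⟨u, hu, w, hw, rfl⟩, rfl⟩
    exact ⟨u, hu, w + t, ⟨w, hw, rfl⟩, by ring⟩

lemma card_image_addright (X : Finset (ZMod p)) (t : ZMod p) :
    (X.image (· + t)).card = X.card :=
  Finset.card_image_of_injective _ (add_left_injective t)

lemma image_mul_add (X Y : Finset (ZMod p)) (t : ZMod p) :
    (X + Y).image (· * t) = X.image (· * t) + Y.image (· * t) := by
  ext x
  simp only [Finset.mem_add, Finset.mem_image]
  constructor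
  · rintro ⟨v, ⟨u, hu, w, hw, rfl⟩, rfl⟩
    exact ⟨u * t, ⟨u, hu, rfl⟩, w * t, ⟨w, hw, rfl⟩, by ring⟩
  · rintro ⟨u', ⟨u, hu, rfl⟩, w', ⟨w, hw, rfl⟩, rfl⟩
    exact ⟨u + w, ⟨u, hu, w, hw, rfl⟩, by ring⟩

/-- number of "right edges" of X -/
def rr (X : Finset (ZMod p)) : ℕ := (X.image (· + (1:ZMod p)) \ X).card

lemma sdiff_card_swap {X Y : Finset (ZMod p)} (h : X.card = Y.card) :
    (X \ Y).card = (Y \ X).card := by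
  have h1 : (X \ Y).card + (X ∩ Y).card = X.card := by
    rw [Finset.card_sdiff_add_card_inter]
  have h2 : (Y \ X).card + (Y ∩ X).card = Y.card := by
    rw [Finset.card_sdiff_add_card_inter]
  rw [Finset.inter_comm] at h2
  omega

lemma rr_pos {X : Finset (ZMod p)} (hne : X.Nonempty) (hnu : X ≠ univ) : 1 ≤ rr X := by
  rcases Nat.eq_zero_or_pos (rr X) with h0 | h; swap
  · exact h
  exfalso
  have hsd : X.image (· + (1:ZMod p)) \ X = ∅ := Finset.card_eq_zero.1 h0
  have hsub : X.image (· + (1:ZMod p)) ⊆ X := Finset.sdiff_eq_empty_iff_subset.1 hsd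
  have heq : X.image (· + (1:ZMod p)) = X :=
    Finset.eq_of_subset_of_card_le hsub (by rw [card_image_addright])
  rcases shift_invariant one_ne_zero heq with h | h
  · exact hne.ne_empty h
  · exact hnu h

lemma rr_union_le (X : Finset (ZMod p)) : rr (X ∪ X.image (· + (1:ZMod p))) ≤ rr X := by
  classical
  apply Finset.card_le_card_of_injOn (fun x => x - 1)
  · intro x hx
    simp only [Finset.mem_coe, Finset.mem_sdiff, Finset.mem_union, Finset.mem_image] at hx ⊢
    obtain ⟨hin, hout⟩ := hx
    push_neg at hout
    obtain ⟨hout1, hout2⟩ := hout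
    constructor
    · rcases hin with ⟨y, hy, rfl⟩
      rcases hy with hy | ⟨z, hz, rfl⟩
      · exfalso; exact hout2 y hy rfl
      · exact ⟨z, hz, by ring⟩
    · intro hc
      exact hout2 (x - 1) hc (by ring)
  · intro x _ y _ hxy
    have := congrArg (· + (1:ZMod p)) hxy
    simpa using this

lemma interval_succ (k : ℕ) (hk : 1 ≤ k) :
    ap (0:ZMod p) 1 (k+1) = ap (0:ZMod p) 1 k ∪ (ap (0:ZMod p) 1 k).image (· + 1) := by
  rw [ap_image_add]
  ext x
  simp only [Finset.mem_union, mem_ap]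
  constructor
  · rintro ⟨i, hi, rfl⟩
    by_cases h : i < k
    · exact Or.inl ⟨i, h, rfl⟩
    · have : i = k := by omega
      subst this
      refine Or.inr ⟨i - 1, by omega, ?_⟩
      have : ((i - 1 : ℕ) : ZMod p) = (i : ZMod p) - 1 := by
        push_cast [Nat.cast_sub (by omega : 1 ≤ i)]; ring
      rw [this]; ring
  · rintro (⟨i, hi, rfl⟩ | ⟨i, hi, rfl⟩)
    · exact ⟨i, by omega, rfl⟩
    · refine ⟨i + 1, by omega, ?_⟩
      push_cast; ring

lemma card_union_shift (S : Finset (ZMod p)) :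
    (S ∪ S.image (· + (1:ZMod p))).card = S.card + rr S := by
  rw [← Finset.union_sdiff_self_eq_union, Finset.card_union_of_disjoint Finset.disjoint_sdiff]
  rfl

lemma L3one {A : Finset (ZMod p)} (hA : A.Nonempty) {L : ℕ} (hL : 2 ≤ L)
    (hS : (A + ap 0 1 L).card + 1 ≤ A.card + L) (hup : A.card + L ≤ p) :
    ∃ c, A = ap c 1 A.card := by
  have hA1 : A + ap (0:ZMod p) 1 1 = A := by
    have : ap (0:ZMod p) 1 1 = {0} := by
      ext x; simp [mem_ap]
    rw [this, Finset.add_singleton]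
    simp
  have hmono : ∀ k₁ k₂ : ℕ, k₁ ≤ k₂ → A + ap (0:ZMod p) 1 k₁ ⊆ A + ap (0:ZMod p) 1 k₂ := by
    intro k₁ k₂ h
    apply Finset.add_subset_add_left
    intro x hx
    rw [mem_ap] at hx ⊢
    obtain ⟨i, hi, rfl⟩ := hx
    exact ⟨i, by omega, rfl⟩
  have hsucc : ∀ k : ℕ, 1 ≤ k →
      (A + ap (0:ZMod p) 1 (k+1)).card = (A + ap (0:ZMod p) 1 k).card + rr (A + ap (0:ZMod p) 1 k) := by
    intro k hk
    rw [interval_succ k hk, Finset.add_union, add_image_right, card_union_shift]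
  -- A itself nonempty, and each partial sumset is a proper subset of univ
  have hproper : ∀ k : ℕ, k ≤ L → (A + ap (0:ZMod p) 1 k).card ≤ A.card + L - 1 := by
    intro k hk
    have := Finset.card_le_card (hmono k L hk)
    omega
  by_cases hrr : rr A ≤ 1
  · rcases Nat.eq_zero_or_pos (rr A) with h0 | h1
    · exfalso
      have hAu : A = univ := by
        rcases (shift_invariant one_ne_zero (Finset.eq_of_subset_of_card_le
          (Finset.sdiff_eq_empty_iff_subset.1 (Finset.card_eq_zero.1 h0))
          (by rw [card_image_addright]))) with h | h
        · exact absurd h hA.ne_empty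
        · exact h
      have := ZMod.card p ▸ Finset.card_univ (α := ZMod p)
      rw [hAu] at hup
      rw [Finset.card_univ, ZMod.card p] at hup
      omega
    · have h1' : (A \ A.image (· + (1:ZMod p))).card = 1 := by
        have := sdiff_card_swap (X := A.image (· + (1:ZMod p))) (Y := A) (card_image_addright A 1)
        rw [← this]
        have : rr A = 1 := by omega
        exact this
      exact runs_one one_ne_zero h1'
  · exfalso
    push_neg at hrr
    have claim : ∀ k : ℕ, 2 ≤ k → k ≤ L → A.card + k ≤ (A + ap (0:ZMod p) 1 k).card := by
      intro k
      induction k with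
      | zero => omega
      | succ k ih =>
        intro h2 hkL
        rcases Nat.lt_or_ge k 2 with hk2 | hk2
        · -- k+1 = 2
          have hk1 : k = 1 := by omega
          subst hk1
          rw [hsucc 1 le_rfl, hA1]
          omega
        · have hk1 : 1 ≤ k := by omega
          have hih := ih hk2 (by omega)
          rw [hsucc k hk1]
          have hne : (A + ap (0:ZMod p) 1 k).Nonempty := by
            obtain ⟨a, haA⟩ := hA
            exact ⟨a + 0, Finset.add_mem_add haA (start_mem_ap hk1)⟩
          have hnu : (A + ap (0:ZMod p) 1 k) ≠ univ := by
            intro hc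
            have := hproper k (by omega)
            rw [hc, Finset.card_univ, ZMod.card p] at this
            omega
          have := rr_pos hne hnu
          omega
    have := claim L (by omega) le_rfl
    omega

lemma L3d {A : Finset (ZMod p)} (hA : A.Nonempty) {d : ZMod p} (hd : d ≠ 0) {L : ℕ} (hL : 2 ≤ L)
    (hS : (A + ap 0 d L).card + 1 ≤ A.card + L) (hup : A.card + L ≤ p) :
    ∃ c, A = ap c d A.card := by
  have hdinv : d⁻¹ ≠ 0 := inv_ne_zero hd
  set A' := A.image (· * d⁻¹) with hA'
  have hcardA' : A'.card = A.card :=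
    Finset.card_image_of_injective _ (mul_left_injective₀ hdinv)
  have hapim : (ap (0:ZMod p) d L).image (· * d⁻¹) = ap 0 1 L := by
    rw [ap_image_mul]
    congr 1 <;> simp [hd]
  have hsum : A' + ap 0 1 L = (A + ap 0 d L).image (· * d⁻¹) := by
    rw [image_mul_add, hapim]
  have hS' : (A' + ap 0 1 L).card + 1 ≤ A'.card + L := by
    rw [hsum, Finset.card_image_of_injective _ (mul_left_injective₀ hdinv), hcardA']
    exact hS
  obtain ⟨c', hc'⟩ := L3one (hA.image _) hL hS' (by rw [hcardA']; exact hup)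
  refine ⟨c' * d, ?_⟩
  have hback : A = (A.image (· * d⁻¹)).image (· * d) := by
    rw [Finset.image_image]
    have h7 : ((· * d) ∘ (· * d⁻¹)) = id := by
      funext x; simp [Function.comp_apply, hd]
    rw [h7, Finset.image_id]
  have hcA : (A.image (· * d⁻¹)).card = A.card :=
    Finset.card_image_of_injective _ (mul_left_injective₀ hdinv)
  calc A = (A.image (· * d⁻¹)).image (· * d) := hback
    _ = (ap c' 1 ((A.image (· * d⁻¹)).card)).image (· * d) := by rw [← hc']
    _ = ap (c' * d) (1 * d) ((A.image (· * d⁻¹)).card) := ap_image_mul _ _ _ _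
    _ = ap (c' * d) d A.card := by rw [one_mul, hcA]

lemma L2half {A B : Finset (ZMod p)} (hA : A.Nonempty) (hB : B.Nonempty) {c d : ZMod p} {s : ℕ}
    (hd : d ≠ 0) (hsub : A + B ⊆ ap c d s) (hcard : A.card + B.card = s + 1)
    (hs2 : s + 2 ≤ p) : ∃ cA, A = ap cA d A.card := by
  have hBpos : 1 ≤ B.card := Finset.card_pos.2 hB
  have hApos : 1 ≤ A.card := Finset.card_pos.2 hA
  have hAle : A.card ≤ s := by omega
  set L := p - s with hLdef
  have hL2 : 2 ≤ L := by omega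
  have hcompl : (ap c d s)ᶜ = ap (c + (s : ZMod p) * d) d L := compl_ap hd (by omega)
  set N := A.image (fun x => -x) with hN
  have hNcard : N.card = A.card := Finset.card_image_of_injective _ neg_injective
  have hNne : N.Nonempty := hA.image _
  have hkey : N + ap (c + (s : ZMod p) * d) d L ⊆ Bᶜ := by
    intro x hx
    rw [Finset.mem_add] at hx
    obtain ⟨u, hu, v, hv, rfl⟩ := hx
    rw [hN, Finset.mem_image] at hu
    obtain ⟨α, hα, rfl⟩ := hu
    rw [Finset.mem_compl]
    intro hxB
    have : α + (-α + v) ∈ A + B := Finset.add_mem_add hα hxB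
    have h1 : α + (-α + v) = v := by ring
    rw [h1] at this
    have := hsub this
    rw [← hcompl] at hv
    exact (Finset.mem_compl.1 hv) this
  have hcardle : (N + ap (c + (s : ZMod p) * d) d L).card ≤ A.card + L - 1 := by
    have h1 := Finset.card_le_card hkey
    rw [Finset.card_compl, ZMod.card p] at h1
    omega
  -- translate the AP to start at 0
  have htrans : ap (c + (s : ZMod p) * d) d L = (ap (0:ZMod p) d L).image (· + (c + (s:ZMod p)*d)) := by
    rw [ap_image_add, zero_add]
  have hsum2 : N + ap (c + (s : ZMod p) * d) d L = (N + ap 0 d L).image (· + (c + (s:ZMod p)*d)) := by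
    rw [htrans, add_image_right]
  have hS' : (N + ap (0:ZMod p) d L).card + 1 ≤ N.card + L := by
    rw [← card_image_addright (N + ap 0 d L) (c + (s:ZMod p)*d), ← hsum2, hNcard]
    omega
  obtain ⟨cN, hcN⟩ := L3d hNne hd hL2 hS' (by rw [hNcard]; omega)
  have hback : A = N.image (fun x => -x) := by
    rw [hN, Finset.image_image]
    have h7 : ((fun x : ZMod p => -x) ∘ (fun x => -x)) = id := by funext x; simp
    rw [h7, Finset.image_id]
  have hthis : A = ap (-cN) (-d) A.card := by
    conv_lhs => rw [hback, hcN]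
    rw [ap_image_neg, hNcard]
  have hrev := ap_reverse (c := -cN) (d := d) (L := A.card) hApos
  exact ⟨-cN - ((A.card - 1 : ℕ) : ZMod p) * d, by conv_lhs => rw [hthis, hrev]⟩

lemma L2 {A B : Finset (ZMod p)} (hA : A.Nonempty) (hB : B.Nonempty) {c d : ZMod p} {s : ℕ}
    (hd : d ≠ 0) (hsub : A + B ⊆ ap c d s) (hcard : A.card + B.card = s + 1)
    (hs2 : s + 2 ≤ p) :
    (∃ cA, A = ap cA d A.card) ∧ (∃ cB, B = ap cB d B.card) := by
  refine ⟨L2half hA hB hd hsub hcard hs2, ?_⟩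
  have hsub' : B + A ⊆ ap c d s := by rw [add_comm B A]; exact hsub
  exact L2half hB hA hd hsub' (by omega) hs2

lemma exists_cast_lt {ζ : ZMod p} {L : ℕ} (hL : L ≤ p) :
    (∃ j, j < L ∧ (j : ZMod p) = ζ) ↔ ζ.val < L := by
  constructor
  · rintro ⟨j, hj, rfl⟩
    rw [ZMod.val_cast_of_lt (by omega)]
    exact hj
  · intro hv
    exact ⟨ζ.val, hv, ZMod.natCast_rightInverse ζ⟩

lemma ap_eq_ap_diff {c₁ c₂ d₁ d₂ : ZMod p} {L : ℕ} (hL3 : 3 ≤ L) (hLp : L + 2 ≤ p)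
    (h1 : d₁ ≠ 0) (h2 : d₂ ≠ 0) (h : ap c₁ d₁ L = ap c₂ d₂ L) : d₂ = d₁ ∨ d₂ = -d₁ := by
  set δ := d₂ * d₁⁻¹ with hδdef
  have hδ : δ ≠ 0 := mul_ne_zero h2 (inv_ne_zero h1)
  set v := δ.val with hvdef
  have hv0 : v ≠ 0 := fun hc => hδ ((ZMod.val_eq_zero δ).1 hc)
  have hvp : v < p := ZMod.val_lt δ
  have hd2 : d₂ = δ * d₁ := by rw [hδdef]; field_simp
  have hsd : ap c₂ d₂ L \ (ap c₂ d₂ L).image (· + d₂) = {c₂} :=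
    ap_sdiff_shift h2 (by omega) (by omega)
  rw [← h] at hsd
  rw [ap_image_add] at hsd
  -- characterize the sdiff as an image of a filter over indices
  have hcast : ∀ i : ℕ, ((i + (p - v) : ℕ) : ZMod p) = (i : ZMod p) - δ := by
    intro i
    push_cast [Nat.cast_sub hvp.le]
    rw [ZMod.natCast_self, hvdef, ZMod.natCast_rightInverse]
    ring
  have hmem2 : ∀ i : ℕ, i < L → ((c₁ + (i : ZMod p) * d₁ ∈ ap (c₁ + d₂) d₁ L) ↔
      (i + (p - v)) % p < L) := by
    intro i hi
    rw [mem_ap]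
    have : ∀ j : ℕ, (c₁ + (i : ZMod p) * d₁ = c₁ + d₂ + (j : ZMod p) * d₁) ↔
        ((j : ZMod p) = (i : ZMod p) - δ) := by
      intro j
      constructor
      · intro hj
        have : (i : ZMod p) * d₁ = δ * d₁ + (j : ZMod p) * d₁ := by
          rw [hd2] at hj; linear_combination hj
        have : ((i : ZMod p) - δ) * d₁ = (j : ZMod p) * d₁ := by linear_combination this
        have := mul_right_cancel₀ h1 this
        rw [this]
      · intro hj
        rw [hd2, hj]; ring
    have hiff : (∃ j, j < L ∧ c₁ + (i : ZMod p) * d₁ = c₁ + d₂ + (j : ZMod p) * d₁) ↔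
        (∃ j, j < L ∧ (j : ZMod p) = (i : ZMod p) - δ) := by
      constructor
      · rintro ⟨j, hj, hjj⟩; exact ⟨j, hj, (this j).1 hjj⟩
      · rintro ⟨j, hj, hjj⟩; exact ⟨j, hj, (this j).2 hjj⟩
    rw [show (∃ j, j < L ∧ c₁ + (i:ZMod p)*d₁ = c₁ + d₂ + (j:ZMod p)*d₁) ↔
        ((i:ZMod p) - δ).val < L from hiff.trans (exists_cast_lt (by omega))]
    rw [← hcast i, ZMod.val_natCast]
  have key : ap c₁ d₁ L \ ap (c₁ + d₂) d₁ L =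
      ((Finset.range L).filter (fun i => L ≤ (i + (p - v)) % p)).image
        (fun i : ℕ => c₁ + (i : ZMod p) * d₁) := by
    ext x
    simp only [Finset.mem_sdiff, Finset.mem_image, Finset.mem_filter, Finset.mem_range]
    constructor
    · rintro ⟨hx1, hx2⟩
      rw [mem_ap] at hx1
      obtain ⟨i, hi, rfl⟩ := hx1
      refine ⟨i, ⟨hi, ?_⟩, rfl⟩
      have := (hmem2 i hi).not.1 hx2
      omega
    · rintro ⟨i, ⟨hi, hcond⟩, rfl⟩
      refine ⟨mem_ap.2 ⟨i, hi, rfl⟩, ?_⟩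
      rw [(hmem2 i hi).not]
      omega
  rw [key] at hsd
  have hfiltcard : ((Finset.range L).filter (fun i => L ≤ (i + (p - v)) % p)).card = 1 := by
    have hinj : Set.InjOn (fun i : ℕ => c₁ + (i : ZMod p) * d₁)
        ((Finset.range L).filter (fun i => L ≤ (i + (p - v)) % p)) := by
      intro i hi j hj hij
      simp only [Finset.coe_filter, Set.mem_setOf_eq, Finset.mem_range] at hi hj
      have h9 : (i : ZMod p) * d₁ = (j : ZMod p) * d₁ := by
        have h10 : c₁ + (i : ZMod p) * d₁ = c₁ + (j : ZMod p) * d₁ := hij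
        linear_combination h10
      exact natCast_inj (by omega) (by omega) (mul_right_cancel₀ h1 h9)
    have := Finset.card_image_of_injOn hinj
    rw [hsd] at this
    simp at this
    omega
  have hmod : ∀ i, i < L → (i + (p - v)) % p = if i < v then i + (p - v) else i - v := by
    intro i hi
    by_cases hiv : i < v
    · rw [if_pos hiv]
      exact Nat.mod_eq_of_lt (by omega)
    · rw [if_neg hiv]
      have : i + (p - v) = (i - v) + p := by omega
      rw [this, Nat.add_mod_right]
      exact Nat.mod_eq_of_lt (by omega)
  have hIco : (Finset.range L).filter (fun i => L ≤ (i + (p - v)) % p) =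
      Finset.Ico (L + v - p) (min v L) := by
    ext i
    simp only [Finset.mem_filter, Finset.mem_range, Finset.mem_Ico]
    constructor
    · rintro ⟨hiL, hcond⟩
      rw [hmod i hiL] at hcond
      by_cases hiv : i < v
      · rw [if_pos hiv] at hcond; omega
      · rw [if_neg hiv] at hcond; omega
    · rintro ⟨hlo, hhi⟩
      have hiL : i < L := by omega
      refine ⟨hiL, ?_⟩
      rw [hmod i hiL, if_pos (by omega)]
      omega
  rw [hIco, Nat.card_Ico] at hfiltcard
  have hv1 : v = 1 ∨ v = p - 1 := by omega
  rcases hv1 with hv1 | hv1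
  · left
    have h8 : ((v : ℕ) : ZMod p) = δ := ZMod.natCast_rightInverse δ
    rw [hv1] at h8
    have hδ1 : δ = 1 := by simpa using h8.symm
    rw [hd2, hδ1, one_mul]
  · right
    have h8 : ((v : ℕ) : ZMod p) = δ := ZMod.natCast_rightInverse δ
    rw [hv1] at h8
    have hδ1 : δ = -1 := by
      rw [← h8]
      push_cast [Nat.cast_sub (by omega : 1 ≤ p)]
      rw [ZMod.natCast_self]; ring
    rw [hd2, hδ1]; ring

lemma cd_lower {X Y : Finset (ZMod p)} (hX : X.Nonempty) (hY : Y.Nonempty) :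
    X.card + Y.card - 1 ≤ (X + Y).card ∨ p ≤ (X + Y).card := by
  have := ZMod.cauchy_davenport (p := p) Fact.out hX hY
  omega

lemma inter_shift_eq (A B : Finset (ZMod p)) (e : ZMod p) :
    A ∩ B.image (· + e) = (B ∩ A.image (fun x => x - e)).image (· + e) := by
  ext x
  simp only [Finset.mem_inter, Finset.mem_image]
  constructor
  · rintro ⟨hxA, b, hbB, rfl⟩
    exact ⟨b, ⟨hbB, ⟨b + e, hxA, by ring⟩⟩, rfl⟩
  · rintro ⟨y, ⟨hyB, ⟨a, haA, rfl⟩⟩, rfl⟩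
    constructor
    · have : a - e + e = a := by ring
      rw [this]; exact haA
    · exact ⟨a - e, hyB, rfl⟩

lemma union_sdiff_left' (A X : Finset (ZMod p)) : (A ∪ X) \ A = X \ A := by
  ext x
  simp only [Finset.mem_sdiff, Finset.mem_union]
  tauto

theorem vosper : ∀ (k : ℕ) (A B : Finset (ZMod p)), B.card = k → 2 ≤ A.card → 2 ≤ B.card →
    (A + B).card + 1 = A.card + B.card → (A + B).card + 2 ≤ p →
    ∃ d, d ≠ 0 ∧ (∃ cA, A = ap cA d A.card) ∧ (∃ cB, B = ap cB d B.card) := by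
  intro k
  induction k using Nat.strong_induction_on with
  | _ k IH =>
  intro A B hBk hA2 hB2 hcrit hsp
  have hAne : A.Nonempty := Finset.card_pos.1 (by omega)
  have hBne : B.Nonempty := Finset.card_pos.1 (by omega)
  by_cases hb2 : B.card = 2
  · -- base case : |B| = 2
    obtain ⟨β₁, β₂, hβne, hBeq⟩ := Finset.card_eq_two.1 hb2
    set τ := β₂ - β₁ with hτdef
    have hτ : τ ≠ 0 := sub_ne_zero.2 (Ne.symm hβne)
    have hADD : A + B = (A ∪ A.image (· + τ)).image (· + β₁) := by
      rw [hBeq]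
      ext x
      simp only [Finset.mem_add, Finset.mem_image, Finset.mem_union, Finset.mem_insert,
        Finset.mem_singleton]
      constructor
      · rintro ⟨a, haA, b, hb, rfl⟩
        rcases hb with rfl | rfl
        · exact ⟨a, Or.inl haA, rfl⟩
        · exact ⟨a + τ, Or.inr ⟨a, haA, rfl⟩, by rw [hτdef]; ring⟩
      · rintro ⟨y, hy, rfl⟩
        rcases hy with hy | ⟨z, hz, rfl⟩
        · exact ⟨y, hy, β₁, Or.inl rfl, rfl⟩
        · exact ⟨z, hz, β₂, Or.inr rfl, by rw [hτdef]; ring⟩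
    have hcard1 : (A ∪ A.image (· + τ)).card = A.card + 1 := by
      have h5 := congrArg Finset.card hADD
      rw [card_image_addright] at h5
      omega
    have hsd : (A \ A.image (· + τ)).card = 1 := by
      have h6 : A ∪ A.image (· + τ) = A.image (· + τ) ∪ (A \ A.image (· + τ)) := by
        rw [Finset.union_sdiff_self_eq_union, Finset.union_comm]
      have h7 := congrArg Finset.card h6
      rw [Finset.card_union_of_disjoint Finset.disjoint_sdiff, card_image_addright] at h7
      omega
    obtain ⟨cA, hcA⟩ := runs_one hτ hsd
    refine ⟨τ, hτ, ⟨cA, hcA⟩, β₁, ?_⟩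
    rw [hb2, hBeq]
    ext x
    simp only [Finset.mem_insert, Finset.mem_singleton, mem_ap]
    constructor
    · rintro (rfl | rfl)
      · exact ⟨0, by omega, by simp⟩
      · exact ⟨1, by omega, by push_cast; rw [hτdef]; ring⟩
    · rintro ⟨i, hi, rfl⟩
      interval_cases i
      · simp
      · right; push_cast; rw [hτdef]; ring
  · have hb3 : 3 ≤ B.card := by omega
    set r : ZMod p → ℕ := fun e => (B ∩ A.image (fun x => x - e)).card with hrdef
    have hrle : ∀ e, r e ≤ B.card := fun e => Finset.card_le_card (Finset.inter_subset_left)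
    by_cases hgood : ∃ e, 2 ≤ r e ∧ r e + 1 ≤ B.card
    · -- transform case
      obtain ⟨e, hr2, hrlt⟩ := hgood
      set B' := B ∩ A.image (fun x => x - e) with hB'def
      set A' := A ∪ B.image (· + e) with hA'def
      have hB'card : B'.card = r e := rfl
      have hinter : (A ∩ B.image (· + e)).card = r e := by
        rw [inter_shift_eq, card_image_addright]
      have hA'card : A'.card = A.card + B.card - r e := by
        rw [hA'def]
        have h6 : A ∪ B.image (· + e) = A ∪ (B.image (· + e) \ A) := by
          rw [Finset.union_sdiff_self_eq_union]
        rw [h6, Finset.card_union_of_disjoint Finset.disjoint_sdiff]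
        have h7 : (B.image (· + e)).card = (B.image (· + e) \ A).card + (B.image (· + e) ∩ A).card := by
          rw [Finset.card_sdiff_add_card_inter]
        rw [Finset.inter_comm] at h7
        rw [card_image_addright] at h7
        omega
      have hsubset : A' + B' ⊆ A + B := by
        intro x hx
        rw [Finset.mem_add] at hx
        obtain ⟨u, hu, v, hv, rfl⟩ := hx
        rw [hA'def, Finset.mem_union] at hu
        have hvB : v ∈ B := (Finset.mem_inter.1 hv).1
        rcases hu with hu | hu
        · exact Finset.add_mem_add hu hvB
        · rw [Finset.mem_image] at hu
          obtain ⟨y, hyB, rfl⟩ := hu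
          have hv2 := (Finset.mem_inter.1 hv).2
          rw [Finset.mem_image] at hv2
          obtain ⟨z, hzA, hz⟩ := hv2
          have : y + e + v = z + y := by rw [← hz]; ring
          rw [this]
          exact Finset.add_mem_add hzA hyB
      have hA'ne : A'.Nonempty := hAne.mono Finset.subset_union_left
      have hB'ne : B'.Nonempty := Finset.card_pos.1 (by omega)
      have hcards' : A'.card + B'.card = A.card + B.card := by
        rw [hA'card, hB'card]; omega
      have hsum_eq : A' + B' = A + B := by
        apply Finset.eq_of_subset_of_card_le hsubset
        rcases cd_lower hA'ne hB'ne with h | h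
        · omega
        · omega
      have hcrit' : (A' + B').card + 1 = A'.card + B'.card := by
        rw [hsum_eq]; omega
      obtain ⟨d, hd, ⟨cA', hcA'⟩, ⟨cB', hcB'⟩⟩ :=
        IH (r e) (by omega) A' B' rfl (by omega) hr2 hcrit' (by rw [hsum_eq]; omega)
      have hAB_ap : A + B = ap (cA' + cB') d ((A + B).card) := by
        rw [← hsum_eq]
        conv_lhs => rw [hcA', hcB']
        rw [ap_add_ap (by omega) (by omega)]
        congr 1
        omega
      have hsub2 : A + B ⊆ ap (cA' + cB') d ((A + B).card) := hAB_ap.le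
      obtain ⟨h1, h2⟩ := L2 hAne hBne hd hsub2 (by omega) (by omega)
      exact ⟨d, hd, h1, h2⟩
    · -- the degenerate case
      push_neg at hgood
      have hdich : ∀ e, r e ≤ 1 ∨ r e = B.card := by
        intro e
        rcases Nat.lt_or_ge (r e) 2 with h | h
        · left; omega
        · right
          have := hgood e (by omega)
          have := hrle e
          omega
      -- find a collision to show H nonempty
      have hcardAB : (A + B).card < (A ×ˢ B).card := by
        rw [Finset.card_product]
        have := Nat.add_le_mul hA2 hB2
        omega
      obtain ⟨z₁, hz₁, z₂, hz₂, hzne, hzeq⟩ :=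
        Finset.exists_ne_map_eq_of_card_lt_of_maps_to hcardAB
          (fun z hz => by
            rw [Finset.mem_coe, Finset.mem_product] at hz
            exact Finset.mem_coe.2 (Finset.add_mem_add hz.1 hz.2))
      rw [Finset.mem_product] at hz₁ hz₂
      have hβne : z₁.2 ≠ z₂.2 := by
        intro hc
        apply hzne
        have : z₁.1 = z₂.1 := by
          have := hzeq
          rw [hc] at this
          exact add_right_cancel this
        exact Prod.ext this hc
      set estar := z₁.1 - z₂.2 with hestar
      have hrestar : 2 ≤ r estar := by
        rw [hrdef]
        apply Finset.one_lt_card.2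
        refine ⟨z₂.2, ?_, z₁.2, ?_, (Ne.symm hβne)⟩
        · rw [Finset.mem_inter, Finset.mem_image]
          exact ⟨hz₂.2, ⟨z₁.1, hz₁.1, by rw [hestar]; ring⟩⟩
        · rw [Finset.mem_inter, Finset.mem_image]
          refine ⟨hz₁.2, ⟨z₂.1, hz₂.1, ?_⟩⟩
          rw [hestar]
          have : z₁.1 + z₁.2 = z₂.1 + z₂.2 := hzeq
          linear_combination -this
      set H := Finset.univ.filter (fun e : ZMod p => r e = B.card) with hHdef
      have hHne : H.Nonempty := by
        refine ⟨estar, ?_⟩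
        rw [hHdef, Finset.mem_filter]
        rcases hdich estar with h | h
        · omega
        · exact ⟨Finset.mem_univ _, h⟩
      have hHprop : ∀ e ∈ H, ∀ β ∈ B, β + e ∈ A := by
        intro e he β hβ
        rw [hHdef, Finset.mem_filter] at he
        have hBsub : B ⊆ A.image (fun x => x - e) := by
          have h8 : B ∩ A.image (fun x => x - e) = B := by
            apply Finset.eq_of_subset_of_card_le
            · exact Finset.inter_subset_left
            · rw [show (B ∩ A.image (fun x => x - e)).card = B.card from he.2]
          rw [← h8]
          exact Finset.inter_subset_right
        have := hBsub hβ
        rw [Finset.mem_image] at this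
        obtain ⟨a, haA, ha⟩ := this
        have : β + e = a := by rw [← ha]; ring
        rw [this]; exact haA
      have hHB : H + B ⊆ A := by
        intro x hx
        rw [Finset.mem_add] at hx
        obtain ⟨u, hu, v, hv, rfl⟩ := hx
        have := hHprop u hu v hv
        rw [add_comm] at this
        exact this
      have hHcard : H.card + B.card - 1 ≤ A.card := by
        rcases cd_lower hHne hBne with h | h
        · have := Finset.card_le_card hHB
          omega
        · have := Finset.card_le_card hHB
          have : A.card ≤ p - 2 := by omega
          omega
      obtain ⟨β₀, hβ₀⟩ := id hBne
      have hHim_sub : H.image (· + β₀) ⊆ A := by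
        intro x hx
        rw [Finset.mem_image] at hx
        obtain ⟨e, heH, rfl⟩ := hx
        have := hHprop e heH β₀ hβ₀
        rwa [add_comm] at this
      set V := A \ H.image (· + β₀) with hVdef
      have hVcard : V.card = A.card - H.card := by
        rw [hVdef, Finset.card_sdiff_of_subset hHim_sub, card_image_addright]
      have hV2 : 2 ≤ V.card := by omega
      have hkey : ∀ α ∈ V, B ∩ A.image (fun x => x - (α - β₀)) = {β₀} := by
        intro α hα
        rw [hVdef, Finset.mem_sdiff] at hα
        obtain ⟨hαA, hαV⟩ := hα
        have hβmem : β₀ ∈ B ∩ A.image (fun x => x - (α - β₀)) := by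
          rw [Finset.mem_inter, Finset.mem_image]
          exact ⟨hβ₀, ⟨α, hαA, by ring⟩⟩
        have hr1 : r (α - β₀) ≤ 1 := by
          rcases hdich (α - β₀) with h | h
          · exact h
          · exfalso
            apply hαV
            rw [Finset.mem_image]
            refine ⟨α - β₀, ?_, by ring⟩
            rw [hHdef, Finset.mem_filter]
            exact ⟨Finset.mem_univ _, h⟩
        apply Finset.eq_singleton_iff_unique_mem.2
        exact ⟨hβmem, fun x hx => Finset.card_le_one.1 hr1 x hx β₀ hβmem⟩
      have hstep5 : ∀ α ∈ V, (A ∪ B.image (· + (α - β₀))).image (· + β₀) = A + B := by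
        intro α hα
        have hαA : α ∈ A := by
          rw [hVdef, Finset.mem_sdiff] at hα; exact hα.1
        have hint : (A ∩ B.image (· + (α - β₀))).card = 1 := by
          rw [inter_shift_eq, card_image_addright, hkey α hα]
          exact Finset.card_singleton _
        have hYcard : (A ∪ B.image (· + (α - β₀))).card = A.card + B.card - 1 := by
          have h6 : A ∪ B.image (· + (α - β₀)) = A ∪ (B.image (· + (α - β₀)) \ A) := by
            rw [Finset.union_sdiff_self_eq_union]
          rw [h6, Finset.card_union_of_disjoint Finset.disjoint_sdiff]
          have h7 : (B.image (· + (α - β₀))).card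
              = (B.image (· + (α - β₀)) \ A).card + (B.image (· + (α - β₀)) ∩ A).card := by
            rw [Finset.card_sdiff_add_card_inter]
          rw [Finset.inter_comm] at h7
          rw [card_image_addright] at h7
          omega
        have hsub : (A ∪ B.image (· + (α - β₀))).image (· + β₀) ⊆ A + B := by
          intro x hx
          rw [Finset.mem_image] at hx
          obtain ⟨y, hy, rfl⟩ := hx
          rw [Finset.mem_union] at hy
          rcases hy with hy | hy
          · exact Finset.add_mem_add hy hβ₀
          · rw [Finset.mem_image] at hy
            obtain ⟨z, hzB, rfl⟩ := hy
            have : z + (α - β₀) + β₀ = α + z := by ring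
            rw [this]
            exact Finset.add_mem_add hαA hzB
        apply Finset.eq_of_subset_of_card_le hsub
        rw [card_image_addright, hYcard]
        omega
      have hBcard_le : B.card + 3 ≤ p := by omega
      have hstep6 : ∀ α₁ ∈ V, ∀ α₂ ∈ V, α₁ ≠ α₂ → ∃ cB, B = ap cB (α₂ - α₁) B.card := by
        intro α₁ h1 α₂ h2 hne12
        have hτ : α₂ - α₁ ≠ 0 := sub_ne_zero.2 (Ne.symm hne12)
        have hY12 : A ∪ B.image (· + (α₁ - β₀)) = A ∪ B.image (· + (α₂ - β₀)) :=
          Finset.image_injective (add_left_injective β₀)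
            ((hstep5 α₁ h1).trans (hstep5 α₂ h2).symm)
        have hXdiff : B.image (· + (α₁ - β₀)) \ A = B.image (· + (α₂ - β₀)) \ A := by
          rw [← union_sdiff_left' A (B.image (· + (α₁ - β₀))), hY12, union_sdiff_left']
        have hX₂τ : B.image (· + (α₂ - β₀)) = (B.image (· + (α₁ - β₀))).image (· + (α₂ - α₁)) := by
          rw [Finset.image_image]
          congr 1
          funext x
          simp only [Function.comp_apply]
          ring
        have hX₁A : B.image (· + (α₁ - β₀)) ∩ A = {α₁} := by
          rw [Finset.inter_comm, inter_shift_eq, hkey α₁ h1, Finset.image_singleton]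
          congr 1
          ring
        have hXcard : (B.image (· + (α₁ - β₀))).card = B.card := card_image_addright _ _
        have hsub_single :
            B.image (· + (α₁ - β₀)) \ (B.image (· + (α₁ - β₀))).image (· + (α₂ - α₁)) ⊆ {α₁} := by
          intro x hx
          rw [Finset.mem_sdiff] at hx
          obtain ⟨hx1, hx2⟩ := hx
          by_cases hxA : x ∈ A
          · have : x ∈ B.image (· + (α₁ - β₀)) ∩ A := Finset.mem_inter.2 ⟨hx1, hxA⟩
            rw [hX₁A] at this
            exact this
          · exfalso
            have h5 : x ∈ B.image (· + (α₁ - β₀)) \ A := Finset.mem_sdiff.2 ⟨hx1, hxA⟩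
            rw [hXdiff] at h5
            have h6 : x ∈ B.image (· + (α₂ - β₀)) := Finset.sdiff_subset h5
            rw [hX₂τ] at h6
            exact hx2 h6
        have hone : (B.image (· + (α₁ - β₀)) \ (B.image (· + (α₁ - β₀))).image (· + (α₂ - α₁))).card = 1 := by
          have hle : (B.image (· + (α₁ - β₀)) \ (B.image (· + (α₁ - β₀))).image (· + (α₂ - α₁))).card ≤ 1 := by
            have := Finset.card_le_card hsub_single
            simpa using this
          rcases Nat.eq_zero_or_pos (B.image (· + (α₁ - β₀)) \ (B.image (· + (α₁ - β₀))).image (· + (α₂ - α₁))).card with h0 | hpos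
          · exfalso
            have hsub7 : B.image (· + (α₁ - β₀)) ⊆ (B.image (· + (α₁ - β₀))).image (· + (α₂ - α₁)) :=
              Finset.sdiff_eq_empty_iff_subset.1 (Finset.card_eq_zero.1 h0)
            have heq7 : (B.image (· + (α₁ - β₀))).image (· + (α₂ - α₁)) = B.image (· + (α₁ - β₀)) :=
              (Finset.eq_of_subset_of_card_le hsub7 (by rw [card_image_addright])).symm
            rcases shift_invariant hτ heq7 with h | h
            · exact hBne.ne_empty (Finset.image_eq_empty.1 h)
            · have h11 := congrArg Finset.card h
              rw [hXcard, Finset.card_univ, ZMod.card p] at h11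
              omega
          · omega
        obtain ⟨cX, hcX⟩ := runs_one hτ hone
        rw [hXcard] at hcX
        refine ⟨cX - (α₁ - β₀), ?_⟩
        have hBX : B = (B.image (· + (α₁ - β₀))).image (· + (-(α₁ - β₀))) := by
          rw [Finset.image_image]
          have h7 : ((· + (-(α₁ - β₀))) ∘ (· + (α₁ - β₀))) = (id : ZMod p → ZMod p) := by
            funext x
            simp only [Function.comp_apply, id_eq]
            ring
          rw [h7, Finset.image_id]
        conv_lhs => rw [hBX, hcX]
        rw [ap_image_add]
        congr 1
        ring
      -- |V| ≤ 2 via three-point contradiction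
      have hV2' : V.card ≤ 2 := by
        by_contra hc
        push_neg at hc
        obtain ⟨α₁, h1, α₂, h2, α₃, h3, h12, h13, h23⟩ := Finset.two_lt_card.1 hc
        obtain ⟨c12, hc12⟩ := hstep6 α₁ h1 α₂ h2 h12
        obtain ⟨c13, hc13⟩ := hstep6 α₁ h1 α₃ h3 h13
        obtain ⟨c23, hc23⟩ := hstep6 α₂ h2 α₃ h3 h23
        have hτ12 : α₂ - α₁ ≠ 0 := sub_ne_zero.2 (Ne.symm h12)
        have hτ13 : α₃ - α₁ ≠ 0 := sub_ne_zero.2 (Ne.symm h13)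
        have hτ23 : α₃ - α₂ ≠ 0 := sub_ne_zero.2 (Ne.symm h23)
        have hd1 := ap_eq_ap_diff hb3 (by omega) hτ12 hτ13 (hc12.symm.trans hc13)
        have hd2 := ap_eq_ap_diff hb3 (by omega) hτ12 hτ23 (hc12.symm.trans hc23)
        have h3ne : ((3 : ℕ) : ZMod p) ≠ 0 := by
          intro hc3
          have := (ZMod.natCast_eq_zero_iff 3 p).1 hc3
          have := Nat.le_of_dvd (by omega) this
          omega
        rcases hd1 with hd1 | hd1
        · exact hτ23 (by linear_combination hd1)
        · rcases hd2 with hd2 | hd2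
          · have h3τ : ((3:ℕ) : ZMod p) * (α₂ - α₁) = 0 := by
              push_cast
              linear_combination hd1 - hd2
            rcases mul_eq_zero.1 h3τ with h | h
            · exact h3ne h
            · exact hτ12 h
          · exact hτ12 (by linear_combination hd1 - hd2)
      have hVeq : V.card = 2 := by omega
      have hb3' : B.card = 3 := by omega
      have hHA : H.card + 2 = A.card := by omega
      have hAp : A.card + 4 ≤ p := by omega
      have hHBA : H + B = A := by
        apply Finset.eq_of_subset_of_card_le hHB
        rcases cd_lower hHne hBne with h | h
        · omega
        · have := Finset.card_le_card hHB
          omega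
      obtain ⟨α₁, α₂, hα12, hVpair⟩ := Finset.card_eq_two.1 hVeq
      have hα₁V : α₁ ∈ V := by rw [hVpair]; simp
      have hα₂V : α₂ ∈ V := by rw [hVpair]; simp
      obtain ⟨cB, hcB⟩ := hstep6 α₁ hα₁V α₂ hα₂V hα12
      have hτ : α₂ - α₁ ≠ 0 := sub_ne_zero.2 (Ne.symm hα12)
      have hHsum : (H + ap 0 (α₂ - α₁) 3).card + 1 ≤ H.card + 3 := by
        have h9 : H + B = (H + ap 0 (α₂ - α₁) 3).image (· + cB) := by
          conv_lhs => rw [hcB, hb3']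
          rw [show ap cB (α₂ - α₁) 3 = (ap 0 (α₂ - α₁) 3).image (· + cB) from by
            rw [ap_image_add, zero_add], add_image_right]
        have h10 := congrArg Finset.card h9
        rw [card_image_addright, hHBA] at h10
        omega
      have hH1 : 1 ≤ H.card := Finset.card_pos.2 hHne
      obtain ⟨cH, hcH⟩ := L3d hHne hτ (L := 3) (by omega) hHsum (by omega)
      refine ⟨α₂ - α₁, hτ, ⟨cH + cB, ?_⟩, ⟨cB, hcB⟩⟩
      have hfin : A = ap (cH + cB) (α₂ - α₁) (H.card + 3 - 1) := by
        rw [← hHBA]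
        conv_lhs => rw [hcH, hcB, hb3']
        rw [ap_add_ap (by omega) (by omega)]
      have hlen : H.card + 3 - 1 ≤ p := by omega
      have hcard9 : A.card = H.card + 3 - 1 := by rw [hfin, card_ap hτ hlen]
      conv_lhs => rw [hfin]
      rw [hcard9]

lemma partII {m : ℕ} (hm : 3 * m = p + 1) (hm2 : 2 ≤ m) {B : Finset (ZMod p)}
    (hsf : ∀ x ∈ B, ∀ y ∈ B, x + y ∉ B) (hcard : m ≤ B.card) :
    ∃ d : ZMod p, d ≠ 0 ∧ ∀ k : ℕ, m ≤ k → k ≤ 2 * m - 1 → ((k : ℕ) : ZMod p) * d ∈ B := by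
  have hp5 : 5 ≤ p := by omega
  have hBne : B.Nonempty := Finset.card_pos.1 (by omega)
  have hsub : B + B ⊆ Bᶜ := by
    intro x hx
    rw [Finset.mem_add] at hx
    obtain ⟨u, hu, v, hv, rfl⟩ := hx
    rw [Finset.mem_compl]
    exact hsf u hu v hv
  have hcompl_card : Bᶜ.card = p - B.card := by rw [Finset.card_compl, ZMod.card p]
  have hBBle : (B + B).card ≤ p - B.card := hcompl_card ▸ Finset.card_le_card hsub
  have hcd := cd_lower hBne hBne
  have hBcard : B.card = m := by rcases hcd with h | h <;> omega
  have hBB : (B + B).card = 2 * m - 1 := by rcases hcd with h | h <;> omega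
  obtain ⟨d, hd, ⟨cA, hcA⟩, -⟩ :=
    vosper B.card B B rfl (by omega) (by omega) (by omega) (by omega)
  rw [hBcard] at hcA
  have hBBap : B + B = ap (cA + cA) d (2 * m - 1) := by
    conv_lhs => rw [hcA]
    rw [ap_add_ap (by omega) (by omega)]
    congr 1
    omega
  have hcomplap : Bᶜ = ap (cA + (m : ZMod p) * d) d (2 * m - 1) := by
    rw [hcA, compl_ap hd (by omega)]
    congr 1
    omega
  have hBBc : B + B = Bᶜ := by
    apply Finset.eq_of_subset_of_card_le hsub
    omega
  have hstart : cA + cA = cA + (m : ZMod p) * d :=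
    ap_eq_start hd (by omega) (by omega) (hBBap.symm.trans (hBBc.trans hcomplap))
  have hcAval : cA = (m : ZMod p) * d := by linear_combination hstart
  refine ⟨d, hd, fun k hk1 hk2 => ?_⟩
  rw [hcA, mem_ap]
  refine ⟨k - m, by omega, ?_⟩
  rw [hcAval]
  have h8 : ((k - m : ℕ) : ZMod p) = (k : ZMod p) - (m : ZMod p) := by
    push_cast [Nat.cast_sub hk1]
    ring
  rw [h8]
  ring

end SF14


set_option maxHeartbeats 1000000 in
open SF14 in
theorem stmt_14 (p : ℕ) [Fact p.Prime] (hp3 : p % 3 = 2)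
    (n : ℕ) (A : Set (Fin n → ZMod p))
    (hsf : ∀ a ∈ A, ∀ b ∈ A, a + b ∉ A)
    (hcard : 2 * p * A.ncard ≥ (2 * p * ((p + 1) / 3) - p + 2) * p ^ (n - 1)) :
    ∃ u : Fin n → ZMod p, u ≠ 0 ∧
      ∀ k : ℕ, (p + 1) / 3 ≤ k → k ≤ 2 * ((p + 1) / 3) - 1 → (k : ZMod p) • u ∈ A := by
  classical
  have hp : p.Prime := Fact.out
  have hp2 : 2 ≤ p := hp.two_le
  set m := (p + 1) / 3 with hmdef
  clear_value m
  have hm3 : 3 * m = p + 1 := by omega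
  have h0A : (0 : Fin n → ZMod p) ∉ A := fun h => hsf 0 h 0 h (by simpa using h)
  have hAfin : A.Finite := Set.toFinite A
  have h2pm : p ≤ 2 * p * m := by
    calc p = p * 1 := (mul_one p).symm
      _ ≤ p * m := Nat.mul_le_mul_left p (by omega)
      _ ≤ 2 * p * m := by rw [mul_assoc, two_mul]; omega
  by_cases hm1 : m = 1
  · -- p = 2
    have hAne : A.Nonempty := by
      rw [Set.nonempty_iff_ne_empty]
      intro h
      rw [h, Set.ncard_empty] at hcard
      have hpow : 1 ≤ p ^ (n - 1) := Nat.one_le_pow _ _ (by omega)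
      have : (2 * p * m - p + 2) * 1 ≤ (2 * p * m - p + 2) * p ^ (n-1) :=
        Nat.mul_le_mul_left _ hpow
      rw [hm1] at h2pm
      omega
    obtain ⟨a, ha⟩ := hAne
    have hane : a ≠ 0 := fun h => h0A (h ▸ ha)
    refine ⟨a, hane, fun k hk1 hk2 => ?_⟩
    have hk : k = 1 := by omega
    subst hk
    simpa using ha
  · have hm2 : 2 ≤ m := by omega
    have hp5 : 5 ≤ p := by omega
    rcases Nat.eq_zero_or_pos n with hn0 | hn1
    · exfalso
      subst hn0
      have hAe : A = ∅ := by
        rw [Set.eq_empty_iff_forall_notMem]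
        intro x hx
        have : x = 0 := Subsingleton.elim x 0
        exact h0A (this ▸ hx)
      rw [hAe, Set.ncard_empty] at hcard
      simp only [Nat.zero_sub, pow_zero, mul_one, Nat.mul_zero] at hcard
      omega
    -- main case
    set F := hAfin.toFinset with hFdef
    have hFcard : F.card = A.ncard := by
      rw [hFdef, Set.ncard_eq_toFinset_card _ hAfin]
    set T : Finset ((Fin n → ZMod p) × ZMod p) :=
      Finset.univ.filter (fun z => z.1 ≠ 0 ∧ z.2 ≠ 0 ∧ z.2 • z.1 ∈ A) with hTdef
    -- count by second coordinate
    have hcount2 : T.card = (p - 1) * A.ncard := by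
      rw [Finset.card_eq_sum_card_fiberwise (f := Prod.snd)
        (t := Finset.univ.filter (fun t : ZMod p => t ≠ 0))
        (fun z hz => by
          simp only [Finset.mem_coe, hTdef, Finset.mem_filter] at hz
          exact Finset.mem_coe.2 (Finset.mem_filter.2 ⟨Finset.mem_univ _, hz.2.2.1⟩))]
      have hfib : ∀ t ∈ Finset.univ.filter (fun t : ZMod p => t ≠ 0),
          (T.filter (fun z => z.snd = t)).card = A.ncard := by
        intro t ht
        rw [Finset.mem_filter] at ht
        have htne := ht.2
        rw [← hFcard]
        apply Finset.card_bij (fun z _ => z.2 • z.1)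
        · intro z hz
          rw [Finset.mem_filter, hTdef, Finset.mem_filter] at hz
          rw [hFdef, Set.Finite.mem_toFinset]
          exact hz.1.2.2.2
        · intro z₁ hz₁ z₂ hz₂ heq
          rw [Finset.mem_filter, hTdef, Finset.mem_filter] at hz₁ hz₂
          have ht1 : z₁.2 = t := hz₁.2
          have ht2 : z₂.2 = t := hz₂.2
          rw [ht1, ht2] at heq
          have hfst : z₁.1 = z₂.1 := by
            have := congrArg (fun w => t⁻¹ • w) heq
            simpa [smul_smul, inv_mul_cancel₀ htne] using this
          exact Prod.ext hfst (ht1.trans ht2.symm)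
        · intro x hx
          rw [hFdef, Set.Finite.mem_toFinset] at hx
          have hxne : x ≠ 0 := fun h => h0A (h ▸ hx)
          refine ⟨(t⁻¹ • x, t), ?_, ?_⟩
          · rw [Finset.mem_filter, hTdef, Finset.mem_filter]
            refine ⟨⟨Finset.mem_univ _, ?_, htne, ?_⟩, rfl⟩
            · intro h
              apply hxne
              have := congrArg (fun w => t • w) h
              simpa [smul_smul, mul_inv_cancel₀ htne] using this
            · simpa [smul_smul, mul_inv_cancel₀ htne] using hx
          · simp [smul_smul, mul_inv_cancel₀ htne]
      rw [Finset.sum_congr rfl hfib, Finset.sum_const, smul_eq_mul]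
      congr 1
      rw [Finset.filter_ne' Finset.univ (0 : ZMod p),
        Finset.card_erase_of_mem (Finset.mem_univ _), Finset.card_univ, ZMod.card p]
    -- count by first coordinate
    have hcount1 : T.card = ∑ u ∈ Finset.univ.filter (fun u : Fin n → ZMod p => u ≠ 0),
        (Finset.univ.filter (fun t : ZMod p => t ≠ 0 ∧ t • u ∈ A)).card := by
      rw [Finset.card_eq_sum_card_fiberwise (f := Prod.fst)
        (t := Finset.univ.filter (fun u : Fin n → ZMod p => u ≠ 0))
        (fun z hz => by
          simp only [Finset.mem_coe, hTdef, Finset.mem_filter] at hz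
          exact Finset.mem_coe.2 (Finset.mem_filter.2 ⟨Finset.mem_univ _, hz.2.1⟩))]
      apply Finset.sum_congr rfl
      intro u hu
      rw [Finset.mem_filter] at hu
      apply Finset.card_bij (fun z _ => z.2)
      · intro z hz
        rw [Finset.mem_filter, hTdef, Finset.mem_filter] at hz
        rw [Finset.mem_filter]
        exact ⟨Finset.mem_univ _, hz.1.2.2.1, hz.2 ▸ hz.1.2.2.2⟩
      · intro z₁ hz₁ z₂ hz₂ heq
        rw [Finset.mem_filter, hTdef, Finset.mem_filter] at hz₁ hz₂
        exact Prod.ext (hz₁.2.trans hz₂.2.symm) heq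
      · intro t ht
        rw [Finset.mem_filter] at ht
        refine ⟨(u, t), ?_, rfl⟩
        rw [Finset.mem_filter, hTdef, Finset.mem_filter]
        exact ⟨⟨Finset.mem_univ _, hu.2, ht.2.1, ht.2.2⟩, rfl⟩
    -- pigeonhole
    have hexists : ∃ u : Fin n → ZMod p, u ≠ 0 ∧
        m ≤ (Finset.univ.filter (fun t : ZMod p => t ≠ 0 ∧ t • u ∈ A)).card := by
      by_contra hcon
      push_neg at hcon
      have hbound : T.card ≤ (p ^ n - 1) * (m - 1) := by
        rw [hcount1]
        have h11 : ∀ u ∈ Finset.univ.filter (fun u : Fin n → ZMod p => u ≠ 0),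
            (Finset.univ.filter (fun t : ZMod p => t ≠ 0 ∧ t • u ∈ A)).card ≤ m - 1 := by
          intro u hu
          rw [Finset.mem_filter] at hu
          have := hcon u hu.2
          omega
        calc ∑ u ∈ Finset.univ.filter (fun u : Fin n → ZMod p => u ≠ 0),
              (Finset.univ.filter (fun t : ZMod p => t ≠ 0 ∧ t • u ∈ A)).card
            ≤ ∑ _u ∈ Finset.univ.filter (fun u : Fin n → ZMod p => u ≠ 0), (m - 1) :=
              Finset.sum_le_sum h11
          _ = (Finset.univ.filter (fun u : Fin n → ZMod p => u ≠ 0)).card * (m - 1) := by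
              rw [Finset.sum_const, smul_eq_mul]
          _ = (p ^ n - 1) * (m - 1) := by
              congr 1
              rw [Finset.filter_ne' Finset.univ (0 : Fin n → ZMod p),
                Finset.card_erase_of_mem (Finset.mem_univ _), Finset.card_univ]
              congr 1
              rw [Fintype.card_fun, ZMod.card p, Fintype.card_fin]
      rw [hcount2] at hbound
      -- arithmetic contradiction
      have hpow1 : 1 ≤ p ^ (n - 1) := Nat.one_le_pow _ _ (by omega)
      have hppos : 1 ≤ p ^ n := Nat.one_le_pow _ _ (by omega)
      have hpn : p ^ n = p * p ^ (n - 1) := by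
        conv_lhs => rw [show n = (n - 1) + 1 by omega]
        rw [pow_succ, mul_comm]
      obtain ⟨N, hN⟩ : ∃ N, p ^ (n - 1) = N := ⟨_, rfl⟩
      obtain ⟨c, hcC⟩ : ∃ c, A.ncard = c := ⟨_, rfl⟩
      rw [hN] at hpow1 hpn
      rw [hpn] at hppos
      rw [hcC, hpn] at hbound
      rw [hcC, hN] at hcard
      -- pass to integers
      have hb' : ((p : ℤ) - 1) * c ≤ ((p : ℤ) * N - 1) * ((m : ℤ) - 1) := by
        have h12 : ((p - 1 : ℕ) : ℤ) * c ≤ ((p * N - 1 : ℕ) : ℤ) * ((m - 1 : ℕ) : ℤ) := by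
          exact_mod_cast hbound
        have e1 : ((p - 1 : ℕ) : ℤ) = (p : ℤ) - 1 := by
          rw [Nat.cast_sub (by omega : 1 ≤ p)]; norm_num
        have e2 : ((p * N - 1 : ℕ) : ℤ) = (p : ℤ) * N - 1 := by
          rw [Nat.cast_sub hppos]; push_cast; ring
        have e3 : ((m - 1 : ℕ) : ℤ) = (m : ℤ) - 1 := by
          rw [Nat.cast_sub (by omega : 1 ≤ m)]; norm_num
        rw [e1, e2, e3] at h12
        exact h12
      have hc' : ((2 : ℤ) * p * m - p + 2) * N ≤ 2 * p * c := by
        have h13 : ((2 * p * m - p + 2 : ℕ) : ℤ) * N ≤ ((2 * p * c : ℕ) : ℤ) := by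
          exact_mod_cast hcard
        have e4 : ((2 * p * m - p + 2 : ℕ) : ℤ) = 2 * (p:ℤ) * m - p + 2 := by
          have e6 : (2 * p * m - p + 2 : ℕ) = (2 * p * m - p) + 2 := rfl
          rw [e6, Nat.cast_add, Nat.cast_sub h2pm]; push_cast; ring
        rw [e4] at h13
        have e5 : ((2 * p * c : ℕ) : ℤ) = 2 * (p:ℤ) * c := by push_cast; ring
        rw [e5] at h13
        exact h13
      have hpz : (p : ℤ) = 3 * m - 1 := by
        have h14 : (3 : ℤ) * m = (p : ℤ) + 1 := by exact_mod_cast hm3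
        linarith
      have hmz : (2 : ℤ) ≤ (m : ℤ) := by exact_mod_cast hm2
      have hNz : (1 : ℤ) ≤ (N : ℤ) := by exact_mod_cast hpow1
      have hcz : (0 : ℤ) ≤ (c : ℤ) := Int.natCast_nonneg c
      rw [hpz] at hb' hc'
      have h2p0 : (0:ℤ) ≤ 2 * (3 * (m:ℤ) - 1) := by linarith
      have hp10 : (0:ℤ) ≤ (3 * (m:ℤ) - 1) - 1 := by linarith
      have F1 := mul_le_mul_of_nonneg_left hb' h2p0
      have F2 := mul_le_mul_of_nonneg_left hc' hp10
      have hq0 : (0:ℤ) ≤ 3*(m:ℤ)^2 + 5*m - 4 := by nlinarith [hmz, sq_nonneg (m:ℤ)]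
      have F3 : (0:ℤ) ≤ (3*(m:ℤ)^2 + 5*m - 4) * ((N:ℤ) - 1) :=
        mul_nonneg hq0 (by linarith)
      nlinarith [F1, F2, F3, hmz, hNz, hcz]
    obtain ⟨u, hu0, hucard⟩ := hexists
    -- the fiber is sum-free
    set Bu : Finset (ZMod p) := Finset.univ.filter (fun t : ZMod p => t • u ∈ A) with hBu
    have hBusub : Finset.univ.filter (fun t : ZMod p => t ≠ 0 ∧ t • u ∈ A) ⊆ Bu := by
      intro t ht
      rw [Finset.mem_filter] at ht
      rw [hBu, Finset.mem_filter]
      exact ⟨Finset.mem_univ _, ht.2.2⟩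
    have hBucard : m ≤ Bu.card := le_trans hucard (Finset.card_le_card hBusub)
    have hBusf : ∀ x ∈ Bu, ∀ y ∈ Bu, x + y ∉ Bu := by
      intro x hx y hy hxy
      rw [hBu, Finset.mem_filter] at hx hy hxy
      have : (x + y) • u = x • u + y • u := add_smul x y u
      rw [this] at hxy
      exact hsf _ hx.2 _ hy.2 hxy.2
    obtain ⟨d, hd, hdmem⟩ := partII hm3 hm2 hBusf hBucard
    refine ⟨d • u, ?_, fun k hk1 hk2 => ?_⟩
    · intro h
      apply hu0
      have := congrArg (fun w => d⁻¹ • w) h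
      simpa [smul_smul, inv_mul_cancel₀ hd] using this
    · have hmemB := hdmem k hk1 hk2
      rw [hBu, Finset.mem_filter] at hmemB
      have : (k : ZMod p) • d • u = ((k : ZMod p) * d) • u := smul_smul _ _ _
      rw [this]
      exact hmemB.2
end

section
/- Let p ≡ 2 mod 3 be prime with m = (p+1)/3 and I = {m, ..., 2m−1} ⊆ F_p. Then I + I = I − I = F_p \ I. -/
open Pointwise

theorem stmt_15 (p : ℕ) [Fact p.Prime] (hp3 : p % 3 = 2)
    (m : ℕ) (hm : m = (p + 1) / 3)
    (I : Set (ZMod p)) (hI : I = {z | ∃ k : ℕ, m ≤ k ∧ k ≤ 2 * m - 1 ∧ z = (k : ZMod p)}) :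
    I + I = Set.univ \ I ∧ I - I = Set.univ \ I := by
  have hp2 : 2 ≤ p := (Fact.out : p.Prime).two_le
  have hp : p + 1 = 3 * m := by omega
  have hm1 : 1 ≤ m := by omega
  haveI : NeZero p := ⟨by omega⟩
  have hmem : ∀ z : ZMod p, z ∈ I ↔ m ≤ z.val ∧ z.val ≤ 2 * m - 1 := by
    intro z
    subst hI
    constructor
    · rintro ⟨k, hk1, hk2, rfl⟩
      rw [ZMod.val_cast_of_lt (by omega)]
      exact ⟨hk1, hk2⟩
    · rintro ⟨h1, h2⟩
      exact ⟨z.val, h1, h2, (ZMod.natCast_zmod_val z).symm⟩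
  constructor
  · ext z
    simp only [Set.mem_add, Set.mem_diff, Set.mem_univ, true_and]
    constructor
    · rintro ⟨a, ha, b, hb, rfl⟩
      rw [hmem] at ha hb ⊢
      have key : a + b = ((a.val + b.val : ℕ) : ZMod p) := by
        rw [Nat.cast_add, ZMod.natCast_zmod_val, ZMod.natCast_zmod_val]
      rcases le_or_gt (a.val + b.val) (3 * m - 2) with h | h
      · rw [key, ZMod.val_cast_of_lt (by omega)]; omega
      · have key2 : ((a.val + b.val : ℕ) : ZMod p)
            = ((a.val + b.val - p : ℕ) : ZMod p) := by
          have h1 : ((a.val + b.val - p : ℕ) : ZMod p)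
              = ((a.val + b.val - p : ℕ) : ZMod p) + (p : ZMod p) := by
            rw [ZMod.natCast_self, add_zero]
          rw [h1, ← Nat.cast_add, show a.val + b.val - p + p = a.val + b.val by
            have := ZMod.val_lt a; have := ZMod.val_lt b; omega]
        have hva := ZMod.val_lt a; have hvb := ZMod.val_lt b
        rw [key, key2, ZMod.val_cast_of_lt (by omega)]; omega
    · intro hz
      rw [hmem] at hz
      have hvz : z.val < p := ZMod.val_lt z
      have hzt : z = ((z.val : ℕ) : ZMod p) := (ZMod.natCast_zmod_val z).symm
      rcases le_or_gt m z.val with h | h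
      · refine ⟨(m : ZMod p), ?_, ((z.val - m : ℕ) : ZMod p), ?_, ?_⟩
        · rw [hmem, ZMod.val_cast_of_lt (by omega)]; omega
        · rw [hmem, ZMod.val_cast_of_lt (by omega)]; omega
        · conv_rhs => rw [hzt]
          rw [← Nat.cast_add]; congr 1; omega
      · refine ⟨((m + z.val : ℕ) : ZMod p), ?_, ((2 * m - 1 : ℕ) : ZMod p), ?_, ?_⟩
        · rw [hmem, ZMod.val_cast_of_lt (by omega)]; omega
        · rw [hmem, ZMod.val_cast_of_lt (by omega)]; omega
        · conv_rhs => rw [hzt]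
          rw [← Nat.cast_add, show m + z.val + (2 * m - 1) = z.val + p by omega,
            Nat.cast_add, ZMod.natCast_self, add_zero]
  · ext z
    simp only [Set.mem_sub, Set.mem_diff, Set.mem_univ, true_and]
    constructor
    · rintro ⟨a, ha, b, hb, rfl⟩
      rw [hmem] at ha hb ⊢
      have hva := ZMod.val_lt a; have hvb := ZMod.val_lt b
      rcases le_or_gt b.val a.val with h | h
      · have key : a - b = ((a.val - b.val : ℕ) : ZMod p) := by
          rw [Nat.cast_sub h, ZMod.natCast_zmod_val, ZMod.natCast_zmod_val]
        rw [key, ZMod.val_cast_of_lt (by omega)]; omega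
      · have key : a - b = ((a.val + p - b.val : ℕ) : ZMod p) := by
          rw [Nat.cast_sub (by omega), Nat.cast_add, ZMod.natCast_self, add_zero,
            ZMod.natCast_zmod_val, ZMod.natCast_zmod_val]
        rw [key, ZMod.val_cast_of_lt (by omega)]; omega
    · intro hz
      rw [hmem] at hz
      have hvz : z.val < p := ZMod.val_lt z
      have hzt : z = ((z.val : ℕ) : ZMod p) := (ZMod.natCast_zmod_val z).symm
      rcases le_or_gt m z.val with h | h
      · refine ⟨(m : ZMod p), ?_, ((4 * m - 1 - z.val : ℕ) : ZMod p), ?_, ?_⟩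
        · rw [hmem, ZMod.val_cast_of_lt (by omega)]; omega
        · rw [hmem, ZMod.val_cast_of_lt (by omega)]; omega
        · conv_rhs => rw [hzt]
          rw [sub_eq_iff_eq_add, ← Nat.cast_add,
            show z.val + (4 * m - 1 - z.val) = m + p by omega,
            Nat.cast_add, ZMod.natCast_self, add_zero]
      · refine ⟨((m + z.val : ℕ) : ZMod p), ?_, (m : ZMod p), ?_, ?_⟩
        · rw [hmem, ZMod.val_cast_of_lt (by omega)]; omega
        · rw [hmem, ZMod.val_cast_of_lt (by omega)]; omega
        · conv_rhs => rw [hzt]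
          rw [sub_eq_iff_eq_add, ← Nat.cast_add]; congr 1; omega
end
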